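/- arXiv:1709.02677 — 4 statements merged into one kernel-verified Lean document; each statement's English description precedes it below -/
import Mathlib

section
/- For C^1 vector fields f₁, f₂ on an open set M ⊆ ℝⁿ, the composition of flows Ψ(t₁,t₂)(x) := exp(-t₂f₂)(exp(-t₁f₁)(exp(t₂f₂)(exp(t₁f₁)(x)))) satisfies the asymptotic formula Ψ(t₁,t₂)(x) = x + t₁t₂·[f₁,f₂](x) + o(t₁t₂) as (t₁,t₂) → (0,0), where [f₁,f₂] = Df₂·f₁ - Df₁·f₂ is the Lie bracket. -/
open Asymptotics Filter Topology

/-- The Lie bracket `[f,g](x) = Dg(x)·f(x) - Df(x)·g(x)`. -/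
noncomputable def lieBr {n : ℕ}
    (f g : EuclideanSpace ℝ (Fin n) → EuclideanSpace ℝ (Fin n)) :
    EuclideanSpace ℝ (Fin n) → EuclideanSpace ℝ (Fin n) :=
  fun x => fderiv ℝ g x (f x) - fderiv ℝ f x (g x)

/-- `φ` is the (complete) flow of the vector field `f` on `M`. -/
def IsFlowOn {n : ℕ} (M : Set (EuclideanSpace ℝ (Fin n)))
    (f : EuclideanSpace ℝ (Fin n) → EuclideanSpace ℝ (Fin n))
    (φ : ℝ → EuclideanSpace ℝ (Fin n) → EuclideanSpace ℝ (Fin n)) : Prop :=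
  ∀ x ∈ M, φ 0 x = x ∧ ∀ t : ℝ, φ t x ∈ M ∧
    HasDerivAt (fun s => φ s x) (f (φ t x)) t


set_option linter.unusedSectionVars false
set_option linter.unusedVariables false
set_option maxHeartbeats 16000000

open Set Metric Real

section Flows
variable {E : Type*} [NormedAddCommGroup E] [NormedSpace ℝ E] [CompleteSpace E]

/-- Bootstrap confinement: a solution curve starting near `x` stays in the ball and
moves at speed at most `K`, forward in time. -/
lemma confine_fwd (f : E → E) (x : E) {K r ρ' : ℝ} (hK0 : 0 < K)
    (hK : ∀ z ∈ closedBall x r, ‖f z‖ ≤ K)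
    (g : ℝ → E) (hg : ∀ s, HasDerivAt g (f (g s)) s)
    {T : ℝ} (hT : 0 ≤ T) (hg0 : ‖g 0 - x‖ ≤ ρ') (hr : ρ' + K * T ≤ r) :
    ∀ s ∈ Icc (0:ℝ) T, ‖g s - g 0‖ ≤ K * s := by
  have hgc : Continuous g := by
    have : Differentiable ℝ g := fun s => (hg s).differentiableAt
    exact this.continuous
  set S : Set ℝ := {s | s ∈ Icc (0:ℝ) T ∧ ∀ τ ∈ Icc (0:ℝ) s, ‖g τ - g 0‖ ≤ K * τ} with hS
  have h0S : (0:ℝ) ∈ S := by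
    refine ⟨⟨le_refl _, hT⟩, ?_⟩
    intro τ hτ
    have : τ = 0 := le_antisymm hτ.2 hτ.1
    simp [this]
  have hbdd : BddAbove S := ⟨T, fun s hs => hs.1.2⟩
  set m := sSup S with hm
  have hmIcc : m ∈ Icc (0:ℝ) T := ⟨le_csSup hbdd h0S, csSup_le ⟨0, h0S⟩ fun s hs => hs.1.2⟩
  have hmem : ∀ τ ∈ Icc (0:ℝ) m, ‖g τ - g 0‖ ≤ K * τ := by
    intro τ hτ
    rcases eq_or_lt_of_le hτ.2 with heq | hlt
    · -- τ = m
      rcases eq_or_lt_of_le hτ.1 with h0 | h0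
    -- if τ = 0 trivial
      · simp [← h0]
      · -- τ = m > 0 : limit argument from the left
        have hev : ∀ᶠ σ in nhdsWithin τ (Iio τ), ‖g σ - g 0‖ - K * σ ≤ 0 := by
          have h1 : ∀ᶠ σ in nhdsWithin τ (Iio τ), σ ∈ Iio τ := eventually_mem_nhdsWithin
          have h2 : ∀ᶠ σ in nhdsWithin τ (Iio τ), (0:ℝ) < σ := by
            apply eventually_nhdsWithin_of_eventually_nhds
            exact eventually_gt_nhds h0
          filter_upwards [h1, h2] with σ hσ1 hσ2
          have hσm : σ < m := by rw [← heq]; exact mem_Iio.mp hσ1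
          have : ‖g σ - g 0‖ ≤ K * σ := by
            obtain ⟨s, hsS, hs⟩ := exists_lt_of_lt_csSup ⟨0, h0S⟩ hσm
            exact hsS.2 σ ⟨hσ2.le, hs.le⟩
          linarith
        have hT1 : Filter.Tendsto (fun σ => ‖g σ - g 0‖ - K * σ) (nhdsWithin τ (Iio τ))
            (nhds (‖g τ - g 0‖ - K * τ)) := by
          apply Filter.Tendsto.mono_left _ nhdsWithin_le_nhds
          exact (((hgc.sub continuous_const).norm).sub (continuous_const.mul continuous_id)).tendsto τ
        have : ‖g τ - g 0‖ - K * τ ≤ 0 :=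
          le_of_tendsto hT1 hev
        linarith
    · obtain ⟨s, hsS, hs⟩ := exists_lt_of_lt_csSup ⟨0, h0S⟩ hlt
      exact hsS.2 τ ⟨hτ.1, hs.le⟩
  -- show m = T
  by_contra hcon
  push_neg at hcon
  obtain ⟨s₀, hs₀, hvio⟩ := hcon
  have hmT : m < T := by
    rcases lt_or_ge m T with h | h
    · exact h
    · exfalso
      have := hmem s₀ ⟨hs₀.1, hs₀.2.trans h⟩
      linarith
  -- trajectory up to m is inside the open ball
  have hball : ∀ τ ∈ Icc (0:ℝ) m, g τ ∈ ball x r := by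
    intro τ hτ
    have h1 : ‖g τ - x‖ ≤ ρ' + K * τ := by
      calc ‖g τ - x‖ ≤ ‖g τ - g 0‖ + ‖g 0 - x‖ := norm_sub_le_norm_sub_add_norm_sub _ _ _
        _ ≤ K * τ + ρ' := add_le_add (hmem τ hτ) hg0
        _ = ρ' + K * τ := by ring
    have : ρ' + K * τ < r := by
      have : K * τ ≤ K * m := by
        apply mul_le_mul_of_nonneg_left hτ.2 hK0.le
      nlinarith
    rw [mem_ball, dist_eq_norm]
    linarith
  -- extend slightly
  obtain ⟨η, hη, hthick⟩ := (isCompact_Icc : IsCompact (Icc (0:ℝ) m)).exists_thickening_subset_open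
    (isOpen_ball.preimage hgc) (fun τ hτ => hball τ hτ)
  set m' := min (m + η/2) T with hm'
  have hmm' : m < m' := by
    apply lt_min (by linarith) hmT
  have hm'T : m' ≤ T := min_le_right _ _
  have hsub : Icc (0:ℝ) m' ⊆ g ⁻¹' (ball x r) := by
    intro τ hτ
    apply hthick
    rcases le_or_gt τ m with h | h
    · exact self_subset_thickening hη _ ⟨hτ.1, h⟩
    · rw [Metric.mem_thickening_iff]
      refine ⟨m, ⟨hmIcc.1.trans (le_refl m), le_refl m⟩, ?_⟩
      rw [Real.dist_eq, abs_of_pos (by linarith)]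
      have : τ ≤ m + η/2 := le_trans hτ.2 (min_le_left _ _)
      linarith
  -- mean value on [0, m']
  have hMV : ∀ τ ∈ Icc (0:ℝ) m', ‖g τ - g 0‖ ≤ K * τ := by
    intro τ hτ
    have := Convex.norm_image_sub_le_of_norm_hasDerivWithin_le
      (f := g) (f' := fun σ => f (g σ)) (s := Icc (0:ℝ) m') (C := K)
      (fun σ hσ => (hg σ).hasDerivWithinAt)
      (fun σ hσ => hK _ (ball_subset_closedBall (hsub hσ)))
      (convex_Icc _ _) (left_mem_Icc.mpr (by linarith [hmIcc.1, hmm'.le])) hτ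
    calc ‖g τ - g 0‖ ≤ K * ‖τ - 0‖ := this
      _ = K * τ := by rw [sub_zero, Real.norm_eq_abs, abs_of_nonneg hτ.1]
  have : m' ∈ S := ⟨⟨by linarith [hmIcc.1], hm'T⟩, hMV⟩
  have : m' ≤ m := le_csSup hbdd this
  linarith


/-- Reversal of a solution curve. -/
lemma rev_curve (f : E → E) (g : ℝ → E) (hg : ∀ s, HasDerivAt g (f (g s)) s) :
    ∀ s, HasDerivAt (fun τ => g (-τ)) ((fun z => -f z) (g (-s))) s := by
  intro s
  have h1 : HasDerivAt (fun τ : ℝ => -τ) (-1) s := by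
    exact (hasDerivAt_id s).neg
  have := (hg (-s)).scomp s h1
  simpa [Function.comp_def] using this

/-- Two-sided confinement for solution curves. -/
lemma confine (f : E → E) (x : E) {K r ρ' : ℝ} (hK0 : 0 < K)
    (hK : ∀ z ∈ closedBall x r, ‖f z‖ ≤ K)
    (g : ℝ → E) (hg : ∀ s, HasDerivAt g (f (g s)) s)
    (T : ℝ) (hg0 : ‖g 0 - x‖ ≤ ρ') (hr : ρ' + K * |T| ≤ r) :
    ∀ s ∈ uIcc (0:ℝ) T, ‖g s - g 0‖ ≤ K * |s| ∧ g s ∈ closedBall x r := by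
  have main : ∀ s ∈ uIcc (0:ℝ) T, ‖g s - g 0‖ ≤ K * |s| := by
    rcases le_or_gt 0 T with hT | hT
    · rw [uIcc_of_le hT]
      intro s hs
      have := confine_fwd f x hK0 hK g hg hT hg0 (by rwa [abs_of_nonneg hT] at hr) s hs
      rwa [abs_of_nonneg hs.1]
    · rw [uIcc_of_ge hT.le]
      intro s hs
      have hg' := rev_curve f g hg
      have hK' : ∀ z ∈ closedBall x r, ‖(fun z => -f z) z‖ ≤ K := by
        intro z hz; simpa using hK z hz
      have h0 : ‖(fun τ => g (-τ)) 0 - x‖ ≤ ρ' := by simpa using hg0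
      have := confine_fwd (fun z => -f z) x hK0 hK' (fun τ => g (-τ)) hg'
        (neg_nonneg.mpr hT.le) h0 (by rwa [abs_of_neg hT] at hr) (-s)
        ⟨by linarith [hs.2], by linarith [hs.1]⟩
      simp only [neg_neg, neg_zero] at this
      rwa [abs_of_nonpos hs.2]
  intro s hs
  refine ⟨main s hs, ?_⟩
  rw [mem_closedBall, dist_eq_norm]
  have habs : K * |s| ≤ K * |T| := by
    apply mul_le_mul_of_nonneg_left _ hK0.le
    rcases le_or_gt 0 T with hT | hT
    · rw [uIcc_of_le hT] at hs
      rw [abs_of_nonneg hs.1, abs_of_nonneg hT]; exact hs.2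
    · rw [uIcc_of_ge hT.le] at hs
      rw [abs_of_nonpos hs.2, abs_of_neg hT]; linarith [hs.1]
  calc ‖g s - x‖ ≤ ‖g s - g 0‖ + ‖g 0 - x‖ := norm_sub_le_norm_sub_add_norm_sub _ _ _
    _ ≤ K * |s| + ρ' := add_le_add (main s hs) hg0
    _ ≤ r := by linarith

/-- Grönwall comparison of two solution curves, forward version. -/
lemma gron_fwd (f : E → E) (x : E) {L r : ℝ} (hL0 : 0 ≤ L)
    (hL : ∀ y ∈ closedBall x r, ∀ z ∈ closedBall x r, ‖f y - f z‖ ≤ L * ‖y - z‖)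
    (g h : ℝ → E) (hg : ∀ s, HasDerivAt g (f (g s)) s) (hh : ∀ s, HasDerivAt h (f (h s)) s)
    {T : ℝ} (hT : 0 ≤ T)
    (hmg : ∀ s ∈ Icc (0:ℝ) T, g s ∈ closedBall x r)
    (hmh : ∀ s ∈ Icc (0:ℝ) T, h s ∈ closedBall x r) :
    ∀ s ∈ Icc (0:ℝ) T, ‖g s - h s‖ ≤ ‖g 0 - h 0‖ * Real.exp (L * T) := by
  intro s hs
  have hc : ContinuousOn (fun τ => g τ - h τ) (Icc (0:ℝ) T) := by
    apply Continuous.continuousOn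
    exact (Differentiable.continuous fun τ => (hg τ).differentiableAt).sub
      (Differentiable.continuous fun τ => (hh τ).differentiableAt)
  have hd : ∀ τ ∈ Ico (0:ℝ) T, HasDerivWithinAt (fun τ => g τ - h τ)
      (f (g τ) - f (h τ)) (Ici τ) τ :=
    fun τ _ => ((hg τ).sub (hh τ)).hasDerivWithinAt
  have hb : ∀ τ ∈ Ico (0:ℝ) T, ‖f (g τ) - f (h τ)‖ ≤ L * ‖g τ - h τ‖ + 0 := by
    intro τ hτ
    rw [add_zero]
    exact hL _ (hmg τ (Ico_subset_Icc_self hτ)) _ (hmh τ (Ico_subset_Icc_self hτ))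
  have := norm_le_gronwallBound_of_norm_deriv_right_le hc hd (le_refl _) hb s hs
  rw [gronwallBound_ε0] at this
  calc ‖g s - h s‖ ≤ ‖g 0 - h 0‖ * Real.exp (L * (s - 0)) := this
    _ ≤ ‖g 0 - h 0‖ * Real.exp (L * T) := by
        apply mul_le_mul_of_nonneg_left _ (norm_nonneg _)
        apply Real.exp_le_exp.mpr
        apply mul_le_mul_of_nonneg_left _ hL0
        linarith [hs.2]

/-- Grönwall comparison of two solution curves, two-sided version. -/
lemma gron (f : E → E) (x : E) {L r : ℝ} (hL0 : 0 ≤ L)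
    (hL : ∀ y ∈ closedBall x r, ∀ z ∈ closedBall x r, ‖f y - f z‖ ≤ L * ‖y - z‖)
    (g h : ℝ → E) (hg : ∀ s, HasDerivAt g (f (g s)) s) (hh : ∀ s, HasDerivAt h (f (h s)) s)
    (T : ℝ)
    (hmg : ∀ s ∈ uIcc (0:ℝ) T, g s ∈ closedBall x r)
    (hmh : ∀ s ∈ uIcc (0:ℝ) T, h s ∈ closedBall x r) :
    ∀ s ∈ uIcc (0:ℝ) T, ‖g s - h s‖ ≤ ‖g 0 - h 0‖ * Real.exp (L * |T|) := by
  rcases le_or_gt 0 T with hT | hT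
  · rw [uIcc_of_le hT] at *
    rw [abs_of_nonneg hT]
    exact gron_fwd f x hL0 hL g h hg hh hT hmg hmh
  · rw [uIcc_of_ge hT.le] at *
    intro s hs
    have hg' := rev_curve f g hg
    have hh' := rev_curve f h hh
    have hL' : ∀ y ∈ closedBall x r, ∀ z ∈ closedBall x r,
        ‖(fun z => -f z) y - (fun z => -f z) z‖ ≤ L * ‖y - z‖ := by
      intro y hy z hz
      simp only [neg_sub_neg]
      rw [norm_sub_rev]
      exact hL y hy z hz
    have hmg' : ∀ s ∈ Icc (0:ℝ) (-T), (fun τ => g (-τ)) s ∈ closedBall x r := by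
      intro σ hσ; exact hmg (-σ) ⟨by linarith [hσ.2], by linarith [hσ.1]⟩
    have hmh' : ∀ s ∈ Icc (0:ℝ) (-T), (fun τ => h (-τ)) s ∈ closedBall x r := by
      intro σ hσ; exact hmh (-σ) ⟨by linarith [hσ.2], by linarith [hσ.1]⟩
    have := gron_fwd (fun z => -f z) x hL0 hL' _ _ hg' hh' (neg_nonneg.mpr hT.le) hmg' hmh'
      (-s) ⟨by linarith [hs.2], by linarith [hs.1]⟩
    simp only [neg_neg, neg_zero] at this
    rwa [abs_of_neg hT]

/-- FTC for a solution curve. -/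
lemma ftc_curve {f : E → E} {g : ℝ → E} (hg : ∀ s, HasDerivAt g (f (g s)) s)
    {T : ℝ} (hc : ContinuousOn (fun s => f (g s)) (uIcc (0:ℝ) T)) :
    g T - g 0 = ∫ s in (0:ℝ)..T, f (g s) :=
  (intervalIntegral.integral_eq_sub_of_hasDerivAt (fun s _ => hg s)
    (hc.intervalIntegrable)).symm


/-- Time-shift of a solution curve. -/
lemma shift_curve {f : E → E} {g : ℝ → E} (hg : ∀ s, HasDerivAt g (f (g s)) s) (t₀ : ℝ) :
    ∀ s, HasDerivAt (fun τ => g (τ - t₀)) (f (g (s - t₀))) s := by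
  intro s
  have h1 : HasDerivAt (fun τ : ℝ => τ - t₀) 1 s := (hasDerivAt_id s).sub_const t₀
  have := (hg (s - t₀)).scomp s h1
  simpa [Function.comp_def] using this

lemma abs_le_of_mem_uIcc {s T : ℝ} (hs : s ∈ uIcc (0:ℝ) T) : |s| ≤ |T| := by
  rcases le_or_gt 0 T with hT | hT
  · rw [uIcc_of_le hT] at hs
    rw [abs_of_nonneg hs.1, abs_of_nonneg hT]; exact hs.2
  · rw [uIcc_of_ge hT.le] at hs
    rw [abs_of_nonpos hs.2, abs_of_neg hT]; linarith [hs.1]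

lemma mem_uIcc_shift {a t : ℝ} (h : a ∈ uIcc (0:ℝ) t) : a - t ∈ uIcc (0:ℝ) (-t) := by
  rcases le_or_gt 0 t with ht | ht
  · rw [uIcc_of_le ht] at h; rw [uIcc_of_ge (by linarith : -t ≤ 0)]
    exact ⟨by linarith [h.1, h.2], by linarith [h.1, h.2]⟩
  · rw [uIcc_of_ge ht.le] at h; rw [uIcc_of_le (by linarith : (0:ℝ) ≤ -t)]
    exact ⟨by linarith [h.1, h.2], by linarith [h.1, h.2]⟩

/-- Drift estimate: the difference of two solution curves moves slowly. -/
lemma drift (f : E → E) (x : E) {L r : ℝ} (hL0 : 0 ≤ L)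
    (hL : ∀ y ∈ closedBall x r, ∀ z ∈ closedBall x r, ‖f y - f z‖ ≤ L * ‖y - z‖)
    (hfc : ContinuousOn f (closedBall x r))
    (g h : ℝ → E) (hg : ∀ s, HasDerivAt g (f (g s)) s) (hh : ∀ s, HasDerivAt h (f (h s)) s)
    (T : ℝ)
    (hmg : ∀ s ∈ uIcc (0:ℝ) T, g s ∈ closedBall x r)
    (hmh : ∀ s ∈ uIcc (0:ℝ) T, h s ∈ closedBall x r) :
    ∀ s ∈ uIcc (0:ℝ) T, ‖g s - h s - (g 0 - h 0)‖
      ≤ L * (‖g 0 - h 0‖ * Real.exp (L * |T|)) * |s| := by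
  intro s hs
  have hsub : uIcc (0:ℝ) s ⊆ uIcc (0:ℝ) T := uIcc_subset_uIcc left_mem_uIcc hs
  have hgc : Continuous g := Differentiable.continuous fun τ => (hg τ).differentiableAt
  have hhc : Continuous h := Differentiable.continuous fun τ => (hh τ).differentiableAt
  have hic : ContinuousOn (fun τ => f (g τ) - f (h τ)) (uIcc (0:ℝ) s) := by
    apply ContinuousOn.sub
    · exact hfc.comp hgc.continuousOn (fun τ hτ => hmg τ (hsub hτ))
    · exact hfc.comp hhc.continuousOn (fun τ hτ => hmh τ (hsub hτ))
  have hftc : (∫ τ in (0:ℝ)..s, (f (g τ) - f (h τ))) = (g s - h s) - (g 0 - h 0) := by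
    apply intervalIntegral.integral_eq_sub_of_hasDerivAt
    · exact fun τ _ => ((hg τ).sub (hh τ))
    · exact hic.intervalIntegrable
  rw [← hftc]
  have hbd := gron f x hL0 hL g h hg hh T hmg hmh
  have := intervalIntegral.norm_integral_le_of_norm_le_const
    (C := L * (‖g 0 - h 0‖ * Real.exp (L * |T|))) (f := fun τ => f (g τ) - f (h τ))
    (a := 0) (b := s) ?_
  · calc _ ≤ L * (‖g 0 - h 0‖ * Real.exp (L * |T|)) * |s - 0| := this
      _ = _ := by rw [sub_zero]
  · intro τ hτ
    have hτ' : τ ∈ uIcc (0:ℝ) T := hsub (uIoc_subset_uIcc hτ)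
    calc ‖f (g τ) - f (h τ)‖ ≤ L * ‖g τ - h τ‖ := hL _ (hmg τ hτ') _ (hmh τ hτ')
      _ ≤ L * (‖g 0 - h 0‖ * Real.exp (L * |T|)) :=
        mul_le_mul_of_nonneg_left (hbd τ hτ') hL0

/-- Linearization estimate from closeness of the derivative. -/
lemma lin {M : Set E} (hM : IsOpen M) {f : E → E} (hf : ContDiffOn ℝ 1 f M)
    {x : E} {ρ ε₀ : ℝ} (hball : closedBall x ρ ⊆ M)
    (hder : ∀ z ∈ closedBall x ρ, ‖fderiv ℝ f z - fderiv ℝ f x‖ ≤ ε₀) :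
    ∀ y ∈ closedBall x ρ, ∀ z ∈ closedBall x ρ,
      ‖f z - f y - (fderiv ℝ f x) (z - y)‖ ≤ ε₀ * ‖z - y‖ := by
  intro y hy z hz
  have hdiff : ∀ w ∈ closedBall x ρ, HasFDerivWithinAt f (fderiv ℝ f w) (closedBall x ρ) w := by
    intro w hw
    exact ((hf.differentiableOn one_ne_zero).differentiableAt
      (hM.mem_nhds (hball hw))).hasFDerivAt.hasFDerivWithinAt
  exact (convex_closedBall x ρ).norm_image_sub_le_of_norm_hasFDerivWithin_le' hdiff hder hy hz

lemma key (M : Set E) (f₁ f₂ : E → E) (φ₁ φ₂ : ℝ → E → E)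
    (hφ₁M : ∀ y ∈ M, ∀ t : ℝ, φ₁ t y ∈ M) (hφ₁0 : ∀ y ∈ M, φ₁ 0 y = y)
    (hφ₁D : ∀ y ∈ M, ∀ t : ℝ, HasDerivAt (fun s => φ₁ s y) (f₁ (φ₁ t y)) t)
    (hφ₂M : ∀ y ∈ M, ∀ t : ℝ, φ₂ t y ∈ M) (hφ₂0 : ∀ y ∈ M, φ₂ 0 y = y)
    (hφ₂D : ∀ y ∈ M, ∀ t : ℝ, HasDerivAt (fun s => φ₂ s y) (f₂ (φ₂ t y)) t)
    (x : E) (hx : x ∈ M)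
    {K L ρ ε₀ δ t₁ t₂ : ℝ}
    (hK1 : 1 ≤ K) (hL1 : 1 ≤ L)
    (hMρ : closedBall x ρ ⊆ M)
    (hK : ∀ z ∈ closedBall x ρ, ‖f₁ z‖ ≤ K ∧ ‖f₂ z‖ ≤ K)
    (hLip : ∀ y ∈ closedBall x ρ, ∀ z ∈ closedBall x ρ,
      ‖f₁ y - f₁ z‖ ≤ L * ‖y - z‖ ∧ ‖f₂ y - f₂ z‖ ≤ L * ‖y - z‖)
    (hfc₁ : ContinuousOn f₁ (closedBall x ρ)) (hfc₂ : ContinuousOn f₂ (closedBall x ρ))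
    (hlin₁ : ∀ y ∈ closedBall x ρ, ∀ z ∈ closedBall x ρ,
      ‖f₁ z - f₁ y - (fderiv ℝ f₁ x) (z - y)‖ ≤ ε₀ * ‖z - y‖)
    (hlin₂ : ∀ y ∈ closedBall x ρ, ∀ z ∈ closedBall x ρ,
      ‖f₂ z - f₂ y - (fderiv ℝ f₂ x) (z - y)‖ ≤ ε₀ * ‖z - y‖)
    (hDn₁ : ‖fderiv ℝ f₁ x‖ ≤ L) (hDn₂ : ‖fderiv ℝ f₂ x‖ ≤ L)
    (hε₀ : 0 ≤ ε₀)
    (hδ0 : 0 ≤ δ) (hδ1 : δ ≤ 1) (hδρ : 4 * K * δ ≤ ρ)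
    (hδC : L * Real.exp L * δ ≤ 1/2)
    (ht₁ : |t₁| ≤ δ) (ht₂ : |t₂| ≤ δ) :
    ‖φ₂ (-t₂) (φ₁ (-t₁) (φ₂ t₂ (φ₁ t₁ x))) - x
        - (t₁ * t₂) • ((fderiv ℝ f₂ x) (f₁ x) - (fderiv ℝ f₁ x) (f₂ x))‖
      ≤ 21 * K * L^2 * (L * Real.exp L)^2 * (δ + ε₀) * (|t₁| * |t₂|) := by
  set C1 := L * Real.exp L with hC1def
  have hL0 : (0:ℝ) ≤ L := by linarith
  have hexp1 : (1:ℝ) ≤ Real.exp L := by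
    have := Real.add_one_le_exp L; linarith
  have hC1_1 : 1 ≤ C1 := by nlinarith
  have hexpL : Real.exp L ≤ C1 := by nlinarith
  have hK0 : (0:ℝ) < K := by linarith
  have hC10 : (0:ℝ) ≤ C1 := by linarith
  have hLC1 : L ≤ C1 := by nlinarith
  have hρ0 : (0:ℝ) ≤ ρ := by nlinarith
  have hxρ : x ∈ closedBall x ρ := mem_closedBall_self hρ0
  have ht₁0 : (0:ℝ) ≤ |t₁| := abs_nonneg _
  have ht₂0 : (0:ℝ) ≤ |t₂| := abs_nonneg _
  have hK₁ : ∀ z ∈ closedBall x ρ, ‖f₁ z‖ ≤ K := fun z hz => (hK z hz).1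
  have hK₂ : ∀ z ∈ closedBall x ρ, ‖f₂ z‖ ≤ K := fun z hz => (hK z hz).2
  have hLip₁ : ∀ y ∈ closedBall x ρ, ∀ z ∈ closedBall x ρ, ‖f₁ y - f₁ z‖ ≤ L * ‖y - z‖ :=
    fun y hy z hz => (hLip y hy z hz).1
  have hLip₂ : ∀ y ∈ closedBall x ρ, ∀ z ∈ closedBall x ρ, ‖f₂ y - f₂ z‖ ≤ L * ‖y - z‖ :=
    fun y hy z hz => (hLip y hy z hz).2
  -- the curve p
  set p : ℝ → E := fun a => φ₁ a x with hpdef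
  have hpD : ∀ a, HasDerivAt p (f₁ (p a)) a := fun a => hφ₁D x hx a
  have hp0 : p 0 = x := hφ₁0 x hx
  have hpconf := confine f₁ x hK0 hK₁ p hpD t₁
    (by rw [hp0, sub_self, norm_zero])
    (by rw [zero_add]; nlinarith)
  have hpmem : ∀ a ∈ uIcc (0:ℝ) t₁, p a ∈ closedBall x ρ := fun a ha => (hpconf a ha).2
  have hpx : ∀ a ∈ uIcc (0:ℝ) t₁, ‖p a - x‖ ≤ K * δ := by
    intro a ha
    have h1 := (hpconf a ha).1
    rw [hp0] at h1
    have h2 : K * |a| ≤ K * δ := by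
      have := (abs_le_of_mem_uIcc ha).trans ht₁
      nlinarith
    linarith
  -- y₁
  set y₁ := φ₁ t₁ x with hy₁def
  have hy₁p : p t₁ = y₁ := rfl
  have hy₁M : y₁ ∈ M := hφ₁M x hx t₁
  have hy₁x : ‖y₁ - x‖ ≤ K * |t₁| := by
    have := (hpconf t₁ right_mem_uIcc).1; rwa [hp0] at this
  have hy₁xδ : ‖y₁ - x‖ ≤ K * δ := hpx t₁ right_mem_uIcc
  -- the curve b
  set b : ℝ → E := fun s => φ₂ s y₁ with hbdef
  have hbD : ∀ s, HasDerivAt b (f₂ (b s)) s := fun s => hφ₂D y₁ hy₁M s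
  have hb0 : b 0 = y₁ := hφ₂0 y₁ hy₁M
  have hbconf := confine f₂ x hK0 hK₂ b hbD t₂
    (by rw [hb0])
    (by nlinarith [hy₁xδ])
  have hbmem : ∀ s ∈ uIcc (0:ℝ) t₂, b s ∈ closedBall x ρ := fun s hs => (hbconf s hs).2
  have hbx : ∀ s ∈ uIcc (0:ℝ) t₂, ‖b s - x‖ ≤ 2 * (K * δ) := by
    intro s hs
    have h1 := (hbconf s hs).1
    rw [hb0] at h1
    have h2 : K * |s| ≤ K * δ := by
      have := (abs_le_of_mem_uIcc hs).trans ht₂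
      nlinarith
    calc ‖b s - x‖ ≤ ‖b s - y₁‖ + ‖y₁ - x‖ := norm_sub_le_norm_sub_add_norm_sub _ _ _
      _ ≤ 2 * (K * δ) := by linarith
  -- u
  set u := φ₂ t₂ y₁ with hudef
  have hub : b t₂ = u := rfl
  have huM : u ∈ M := hφ₂M y₁ hy₁M t₂
  have hux : ‖u - x‖ ≤ 2 * (K * δ) := hbx t₂ right_mem_uIcc
  -- the curve gq (flow of f₁ through u) and q
  set gq : ℝ → E := fun τ => φ₁ τ u with hgqdef
  have hgqD : ∀ τ, HasDerivAt gq (f₁ (gq τ)) τ := fun τ => hφ₁D u huM τ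
  have hgq0 : gq 0 = u := hφ₁0 u huM
  have hgqconf := confine f₁ x hK0 hK₁ gq hgqD (-t₁)
    (by rw [hgq0])
    (by rw [abs_neg]; nlinarith [hux])
  set q : ℝ → E := fun a => φ₁ (a - t₁) u with hqdef
  have hqgq : ∀ a, q a = gq (a - t₁) := fun a => rfl
  have hqD : ∀ a, HasDerivAt q (f₁ (q a)) a := shift_curve hgqD t₁
  have hq0 : q 0 = φ₁ (-t₁) u := by simp [hqdef]
  have hqt₁ : q t₁ = u := by
    have : q t₁ = φ₁ 0 u := by simp [hqdef]
    rw [this]; exact hφ₁0 u huM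
  have hqmem : ∀ a ∈ uIcc (0:ℝ) t₁, q a ∈ closedBall x ρ := by
    intro a ha
    exact (hgqconf (a - t₁) (mem_uIcc_shift ha)).2
  have hqx : ∀ a ∈ uIcc (0:ℝ) t₁, ‖q a - x‖ ≤ 3 * (K * δ) := by
    intro a ha
    have h1 := (hgqconf (a - t₁) (mem_uIcc_shift ha)).1
    rw [hgq0] at h1
    have h2 : K * |a - t₁| ≤ K * δ := by
      have h3 : |a - t₁| ≤ |(-t₁)| := abs_le_of_mem_uIcc (mem_uIcc_shift ha)
      rw [abs_neg] at h3
      nlinarith [h3.trans ht₁]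
    calc ‖q a - x‖ ≤ ‖gq (a - t₁) - u‖ + ‖u - x‖ := by
          rw [hqgq]; exact norm_sub_le_norm_sub_add_norm_sub _ _ _
      _ ≤ 3 * (K * δ) := by linarith
  -- w
  set w := φ₁ (-t₁) u with hwdef
  have hwM : w ∈ M := hφ₁M u huM (-t₁)
  have hwq : q 0 = w := hq0
  have hwx : ‖w - x‖ ≤ 3 * (K * δ) := by
    have := hqx 0 left_mem_uIcc; rwa [hwq] at this
  have hwu : ‖w - u‖ ≤ K * |t₁| := by
    have h1 := (hgqconf (-t₁) right_mem_uIcc).1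
    rw [hgq0, abs_neg] at h1
    exact h1
  -- the curve gc (flow of f₂ through w) and c
  set gc : ℝ → E := fun τ => φ₂ τ w with hgcdef
  have hgcD : ∀ τ, HasDerivAt gc (f₂ (gc τ)) τ := fun τ => hφ₂D w hwM τ
  have hgc0 : gc 0 = w := hφ₂0 w hwM
  have hgcconf := confine f₂ x hK0 hK₂ gc hgcD (-t₂)
    (by rw [hgc0])
    (by rw [abs_neg]; nlinarith [hwx])
  set c : ℝ → E := fun s => φ₂ (s - t₂) w with hcdef
  have hcgc : ∀ s, c s = gc (s - t₂) := fun s => rfl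
  have hcD : ∀ s, HasDerivAt c (f₂ (c s)) s := shift_curve hgcD t₂
  have hc0 : c 0 = φ₂ (-t₂) w := by simp [hcdef]
  have hct₂ : c t₂ = w := by
    have : c t₂ = φ₂ 0 w := by simp [hcdef]
    rw [this]; exact hφ₂0 w hwM
  have hcmem : ∀ s ∈ uIcc (0:ℝ) t₂, c s ∈ closedBall x ρ := by
    intro s hs
    exact (hgcconf (s - t₂) (mem_uIcc_shift hs)).2
  -- F
  set F := φ₂ (-t₂) w with hFdef
  have hFc : c 0 = F := hc0
  have hFM : F ∈ M := hφ₂M w hwM (-t₂)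
  -- continuity of curves
  have hpc : Continuous p := Differentiable.continuous fun a => (hpD a).differentiableAt
  have hbc : Continuous b := Differentiable.continuous fun s => (hbD s).differentiableAt
  have hqc : Continuous q := Differentiable.continuous fun a => (hqD a).differentiableAt
  have hcc : Continuous c := Differentiable.continuous fun s => (hcD s).differentiableAt
  -- integrands continuous hence interval integrable
  have hip : ContinuousOn (fun a => f₁ (p a)) (uIcc (0:ℝ) t₁) :=
    hfc₁.comp hpc.continuousOn hpmem
  have hiq : ContinuousOn (fun a => f₁ (q a)) (uIcc (0:ℝ) t₁) :=
    hfc₁.comp hqc.continuousOn hqmem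
  have hib : ContinuousOn (fun s => f₂ (b s)) (uIcc (0:ℝ) t₂) :=
    hfc₂.comp hbc.continuousOn hbmem
  have hic : ContinuousOn (fun s => f₂ (c s)) (uIcc (0:ℝ) t₂) :=
    hfc₂.comp hcc.continuousOn hcmem
  have Hp := ftc_curve hpD hip
  have Hq := ftc_curve hqD hiq
  have Hb := ftc_curve hbD hib
  have Hc := ftc_curve hcD hic
  rw [hp0, hy₁p] at Hp   -- y₁ - x = ∫ f₁ (p a)
  rw [hwq, hqt₁] at Hq   -- u - w = ∫ f₁ (q a)
  rw [hb0, hub] at Hb    -- u - y₁ = ∫ f₂ (b s)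
  rw [hFc, hct₂] at Hc   -- w - F = ∫ f₂ (c s)
  -- master identities
  set B₁ := fderiv ℝ f₁ x with hB₁def
  set B₂ := fderiv ℝ f₂ x with hB₂def
  have hIp : IntervalIntegrable (fun a => f₁ (p a)) MeasureTheory.volume 0 t₁ :=
    hip.intervalIntegrable
  have hIq : IntervalIntegrable (fun a => f₁ (q a)) MeasureTheory.volume 0 t₁ :=
    hiq.intervalIntegrable
  have hIb : IntervalIntegrable (fun s => f₂ (b s)) MeasureTheory.volume 0 t₂ :=
    hib.intervalIntegrable
  have hIc : IntervalIntegrable (fun s => f₂ (c s)) MeasureTheory.volume 0 t₂ :=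
    hic.intervalIntegrable
  have hW : w - x = (∫ a in (0:ℝ)..t₁, (f₁ (p a) - f₁ (q a))) + ∫ s in (0:ℝ)..t₂, f₂ (b s) := by
    rw [intervalIntegral.integral_sub hIp hIq, ← Hp, ← Hq, ← Hb]
    abel
  have hΔ : F - x = (∫ a in (0:ℝ)..t₁, (f₁ (p a) - f₁ (q a)))
      + ∫ s in (0:ℝ)..t₂, (f₂ (b s) - f₂ (c s)) := by
    rw [intervalIntegral.integral_sub hIp hIq, intervalIntegral.integral_sub hIb hIc,
      ← Hp, ← Hq, ← Hb, ← Hc]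
    abel
  -- Gronwall and drift for (q, p) over t₁
  have hqp := gron f₁ x hL0 hLip₁ q p hqD hpD t₁ hqmem hpmem
  have hqpd := drift f₁ x hL0 hLip₁ hfc₁ q p hqD hpD t₁ hqmem hpmem
  rw [hwq, hp0] at hqp hqpd
  -- Gronwall and drift for (b, c) over t₂
  have hbc2 := gron f₂ x hL0 hLip₂ b c hbD hcD t₂ hbmem hcmem
  have hbcd := drift f₂ x hL0 hLip₂ hfc₂ b c hbD hcD t₂ hbmem hcmem
  rw [hb0, hFc] at hbc2 hbcd
  have hexpt₁ : Real.exp (L * |t₁|) ≤ Real.exp L := by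
    apply Real.exp_le_exp.mpr; nlinarith
  have hexpt₂ : Real.exp (L * |t₂|) ≤ Real.exp L := by
    apply Real.exp_le_exp.mpr; nlinarith

  -- shorthand for the two integrals
  set J₁ := ∫ a in (0:ℝ)..t₁, (f₁ (p a) - f₁ (q a)) with hJ₁def
  set J₂ := ∫ s in (0:ℝ)..t₂, (f₂ (b s) - f₂ (c s)) with hJ₂def
  set Jb := ∫ s in (0:ℝ)..t₂, f₂ (b s) with hJbdef
  have hC1t₁ : C1 * |t₁| ≤ 1/2 := by
    have : C1 * |t₁| ≤ C1 * δ := by gcongr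
    linarith
  have hC1t₂ : C1 * |t₂| ≤ 1/2 := by
    have : C1 * |t₂| ≤ C1 * δ := by gcongr
    linarith
  -- norm bound on J₁
  have hJ₁b : ‖J₁‖ ≤ C1 * ‖w - x‖ * |t₁| := by
    have hbd := intervalIntegral.norm_integral_le_of_norm_le_const
      (C := C1 * ‖w - x‖) (f := fun a => f₁ (p a) - f₁ (q a)) (a := 0) (b := t₁) ?_
    · calc ‖J₁‖ ≤ C1 * ‖w - x‖ * |t₁ - 0| := hbd
        _ = C1 * ‖w - x‖ * |t₁| := by rw [sub_zero]
    · intro a ha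
      have ha' : a ∈ uIcc (0:ℝ) t₁ := uIoc_subset_uIcc ha
      calc ‖f₁ (p a) - f₁ (q a)‖ ≤ L * ‖p a - q a‖ :=
            hLip₁ _ (hpmem a ha') _ (hqmem a ha')
        _ = L * ‖q a - p a‖ := by rw [norm_sub_rev]
        _ ≤ L * (‖w - x‖ * Real.exp (L * |t₁|)) := by
            gcongr
            exact hqp a ha'
        _ ≤ L * (‖w - x‖ * Real.exp L) :=
            mul_le_mul_of_nonneg_left
              (mul_le_mul_of_nonneg_left hexpt₁ (norm_nonneg _)) hL0
        _ = C1 * ‖w - x‖ := by rw [hC1def]; ring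
  -- norm bound on Jb
  have hJbb : ‖Jb‖ ≤ K * |t₂| := by
    have hbd := intervalIntegral.norm_integral_le_of_norm_le_const
      (C := K) (f := fun s => f₂ (b s)) (a := 0) (b := t₂) ?_
    · calc ‖Jb‖ ≤ K * |t₂ - 0| := hbd
        _ = K * |t₂| := by rw [sub_zero]
    · intro s hs
      exact hK₂ _ (hbmem s (uIoc_subset_uIcc hs))
  -- first crude bound : ‖w - x‖
  have hWb : ‖w - x‖ ≤ 2 * (K * |t₂|) := by
    have htri : ‖w - x‖ ≤ ‖J₁‖ + ‖Jb‖ := by rw [hW]; exact norm_add_le _ _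
    have h1 : C1 * ‖w - x‖ * |t₁| ≤ (1/2) * ‖w - x‖ := by
      have h2 : C1 * |t₁| * ‖w - x‖ ≤ (1/2) * ‖w - x‖ :=
        mul_le_mul_of_nonneg_right hC1t₁ (norm_nonneg _)
      linarith only [h2, mul_comm (C1 * ‖w - x‖) |t₁|,
        (by ring : C1 * ‖w - x‖ * |t₁| = C1 * |t₁| * ‖w - x‖)]
    linarith only [htri, hJ₁b, h1, hJbb]
  -- gap for the pair (b, c)
  have hgap0 : ‖y₁ - F‖ ≤ ‖y₁ - x‖ + ‖F - x‖ := by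
    calc ‖y₁ - F‖ ≤ ‖y₁ - x‖ + ‖x - F‖ := norm_sub_le_norm_sub_add_norm_sub _ _ _
      _ = ‖y₁ - x‖ + ‖F - x‖ := by rw [norm_sub_rev x F]
  -- norm bound on J₂ in terms of the gap
  have hJ₂b : ‖J₂‖ ≤ C1 * ‖y₁ - F‖ * |t₂| := by
    have hbd := intervalIntegral.norm_integral_le_of_norm_le_const
      (C := C1 * ‖y₁ - F‖) (f := fun s => f₂ (b s) - f₂ (c s)) (a := 0) (b := t₂) ?_
    · calc ‖J₂‖ ≤ C1 * ‖y₁ - F‖ * |t₂ - 0| := hbd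
        _ = C1 * ‖y₁ - F‖ * |t₂| := by rw [sub_zero]
    · intro s hs
      have hs' : s ∈ uIcc (0:ℝ) t₂ := uIoc_subset_uIcc hs
      calc ‖f₂ (b s) - f₂ (c s)‖ ≤ L * ‖b s - c s‖ :=
            hLip₂ _ (hbmem s hs') _ (hcmem s hs')
        _ ≤ L * (‖y₁ - F‖ * Real.exp (L * |t₂|)) := by
            gcongr
            exact hbc2 s hs'
        _ ≤ L * (‖y₁ - F‖ * Real.exp L) :=
            mul_le_mul_of_nonneg_left
              (mul_le_mul_of_nonneg_left hexpt₂ (norm_nonneg _)) hL0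
        _ = C1 * ‖y₁ - F‖ := by rw [hC1def]; ring
  -- crude bound on ‖F - x‖
  have hFx : ‖F - x‖ ≤ 6 * K * C1 * (|t₁| * |t₂|) := by
    have htri : ‖F - x‖ ≤ ‖J₁‖ + ‖J₂‖ := by rw [hΔ]; exact norm_add_le _ _
    have h1 : ‖J₁‖ ≤ 2 * K * C1 * (|t₁| * |t₂|) := by
      calc ‖J₁‖ ≤ C1 * ‖w - x‖ * |t₁| := hJ₁b
        _ ≤ C1 * (2 * (K * |t₂|)) * |t₁| := by gcongr
        _ = 2 * K * C1 * (|t₁| * |t₂|) := by ring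
    have h2 : ‖J₂‖ ≤ C1 * (‖y₁ - x‖ + ‖F - x‖) * |t₂| := by
      calc ‖J₂‖ ≤ C1 * ‖y₁ - F‖ * |t₂| := hJ₂b
        _ ≤ C1 * (‖y₁ - x‖ + ‖F - x‖) * |t₂| := by gcongr
    have h3 : C1 * (‖y₁ - x‖ + ‖F - x‖) * |t₂|
        ≤ K * C1 * (|t₁| * |t₂|) + (1/2) * ‖F - x‖ := by
      have h4 : C1 * ‖y₁ - x‖ * |t₂| ≤ K * C1 * (|t₁| * |t₂|) := by
        calc C1 * ‖y₁ - x‖ * |t₂| ≤ C1 * (K * |t₁|) * |t₂| := by gcongr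
          _ = K * C1 * (|t₁| * |t₂|) := by ring
      have h5 : C1 * ‖F - x‖ * |t₂| ≤ (1/2) * ‖F - x‖ := by
        have h6 : C1 * |t₂| * ‖F - x‖ ≤ (1/2) * ‖F - x‖ :=
          mul_le_mul_of_nonneg_right hC1t₂ (norm_nonneg _)
        linarith only [h6,
          (by ring : C1 * ‖F - x‖ * |t₂| = C1 * |t₂| * ‖F - x‖)]
      have hd : C1 * (‖y₁ - x‖ + ‖F - x‖) * |t₂|
          = C1 * ‖y₁ - x‖ * |t₂| + C1 * ‖F - x‖ * |t₂| := by ring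
      linarith only [h4, h5, hd]
    linarith only [htri, h1, h2, h3]
  -- linearization of the inner-most flow map
  have hy₁lin : ‖y₁ - x - t₁ • f₁ x‖ ≤ L * (K * δ) * |t₁| := by
    have hid : y₁ - x - t₁ • f₁ x = ∫ a in (0:ℝ)..t₁, (f₁ (p a) - f₁ x) := by
      rw [intervalIntegral.integral_sub hIp intervalIntegrable_const,
        intervalIntegral.integral_const, ← Hp, sub_zero]
    rw [hid]
    have hbd := intervalIntegral.norm_integral_le_of_norm_le_const
      (C := L * (K * δ)) (f := fun a => f₁ (p a) - f₁ x) (a := 0) (b := t₁) ?_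
    · calc _ ≤ L * (K * δ) * |t₁ - 0| := hbd
        _ = L * (K * δ) * |t₁| := by rw [sub_zero]
    · intro a ha
      have ha' : a ∈ uIcc (0:ℝ) t₁ := uIoc_subset_uIcc ha
      calc ‖f₁ (p a) - f₁ x‖ ≤ L * ‖p a - x‖ := hLip₁ _ (hpmem a ha') _ hxρ
        _ ≤ L * (K * δ) := by gcongr; exact hpx a ha'
  -- refined bound on w - x
  have hWlin : ‖w - x - t₂ • f₂ x‖ ≤ 4 * K * C1 * δ * |t₂| := by
    have hid : w - x - t₂ • f₂ x = J₁ + ∫ s in (0:ℝ)..t₂, (f₂ (b s) - f₂ x) := by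
      rw [intervalIntegral.integral_sub hIb intervalIntegrable_const,
        intervalIntegral.integral_const, sub_zero, hW]
      abel
    rw [hid]
    have h2 : ‖∫ s in (0:ℝ)..t₂, (f₂ (b s) - f₂ x)‖ ≤ L * (2 * (K * δ)) * |t₂| := by
      have hbd := intervalIntegral.norm_integral_le_of_norm_le_const
        (C := L * (2 * (K * δ))) (f := fun s => f₂ (b s) - f₂ x) (a := 0) (b := t₂) ?_
      · calc _ ≤ L * (2 * (K * δ)) * |t₂ - 0| := hbd
          _ = L * (2 * (K * δ)) * |t₂| := by rw [sub_zero]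
      · intro s hs
        have hs' : s ∈ uIcc (0:ℝ) t₂ := uIoc_subset_uIcc hs
        calc ‖f₂ (b s) - f₂ x‖ ≤ L * ‖b s - x‖ := hLip₂ _ (hbmem s hs') _ hxρ
          _ ≤ L * (2 * (K * δ)) := by gcongr; exact hbx s hs'
    have h1 : ‖J₁‖ ≤ 2 * K * C1 * δ * |t₂| := by
      calc ‖J₁‖ ≤ C1 * ‖w - x‖ * |t₁| := hJ₁b
        _ ≤ C1 * (2 * (K * |t₂|)) * δ := by gcongr
        _ = 2 * K * C1 * δ * |t₂| := by ring
    calc ‖J₁ + _‖ ≤ ‖J₁‖ + ‖∫ s in (0:ℝ)..t₂, (f₂ (b s) - f₂ x)‖ := norm_add_le _ _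
      _ ≤ 2 * K * C1 * δ * |t₂| + L * (2 * (K * δ)) * |t₂| := add_le_add h1 h2
      _ ≤ 4 * K * C1 * δ * |t₂| := by
          have haux : (0:ℝ) ≤ K * δ * |t₂| := by positivity
          nlinarith only [hLC1, haux]
  -- pointwise estimate for the first integral
  have hkey2 : ∀ a ∈ Set.uIoc (0:ℝ) t₁, ‖f₁ (p a) - f₁ (q a) + t₂ • B₁ (f₂ x)‖
      ≤ (2 * K * C1 * ε₀ + 6 * K * L^2 * C1 * δ) * |t₂| := by
    intro a ha
    have ha' : a ∈ uIcc (0:ℝ) t₁ := uIoc_subset_uIcc ha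
    have hmp := hpmem a ha'
    have hmq := hqmem a ha'
    have e1 : ‖f₁ (q a) - f₁ (p a) - B₁ (q a - p a)‖ ≤ ε₀ * ‖q a - p a‖ :=
      hlin₁ _ hmp _ hmq
    have e1' : ‖q a - p a‖ ≤ 2 * K * C1 * |t₂| := by
      calc ‖q a - p a‖ ≤ ‖w - x‖ * Real.exp (L * |t₁|) := hqp a ha'
        _ ≤ (2 * (K * |t₂|)) * C1 :=
            mul_le_mul hWb (hexpt₁.trans hexpL) (Real.exp_pos _).le (by positivity)
        _ = 2 * K * C1 * |t₂| := by ring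
    have e2 : ‖q a - p a - (w - x)‖ ≤ 2 * K * C1 * δ * |t₂| := by
      calc ‖q a - p a - (w - x)‖ ≤ L * (‖w - x‖ * Real.exp (L * |t₁|)) * |a| := hqpd a ha'
        _ ≤ L * ((2 * (K * |t₂|)) * Real.exp L) * δ := by
            apply mul_le_mul _ ((abs_le_of_mem_uIcc ha').trans ht₁) (abs_nonneg _) (by positivity)
            exact mul_le_mul_of_nonneg_left
              (mul_le_mul hWb hexpt₁ (Real.exp_pos _).le (by positivity)) hL0
        _ = 2 * K * (L * Real.exp L) * δ * |t₂| := by ring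
        _ = 2 * K * C1 * δ * |t₂| := by rw [hC1def]
    have heq : f₁ (p a) - f₁ (q a) + t₂ • B₁ (f₂ x)
        = -(f₁ (q a) - f₁ (p a) - B₁ (q a - p a)) - B₁ (q a - p a - (w - x))
          - B₁ (w - x - t₂ • f₂ x) := by
      simp only [map_sub, map_smul]
      abel
    rw [heq]
    have n1 : ‖-(f₁ (q a) - f₁ (p a) - B₁ (q a - p a))‖ ≤ ε₀ * (2 * K * C1 * |t₂|) := by
      rw [norm_neg]
      calc ‖f₁ (q a) - f₁ (p a) - B₁ (q a - p a)‖ ≤ ε₀ * ‖q a - p a‖ := e1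
        _ ≤ ε₀ * (2 * K * C1 * |t₂|) := by gcongr
    have n2 : ‖B₁ (q a - p a - (w - x))‖ ≤ L * (2 * K * C1 * δ * |t₂|) := by
      calc ‖B₁ (q a - p a - (w - x))‖ ≤ ‖B₁‖ * ‖q a - p a - (w - x)‖ :=
            B₁.le_opNorm _
        _ ≤ L * (2 * K * C1 * δ * |t₂|) := by
            apply mul_le_mul hDn₁ e2 (norm_nonneg _) hL0
    have n3 : ‖B₁ (w - x - t₂ • f₂ x)‖ ≤ L * (4 * K * C1 * δ * |t₂|) := by
      calc ‖B₁ (w - x - t₂ • f₂ x)‖ ≤ ‖B₁‖ * ‖w - x - t₂ • f₂ x‖ := B₁.le_opNorm _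
        _ ≤ L * (4 * K * C1 * δ * |t₂|) := by
            apply mul_le_mul hDn₁ hWlin (norm_nonneg _) hL0
    calc ‖_ - _ - _‖ ≤ ‖_ - _‖ + ‖B₁ (w - x - t₂ • f₂ x)‖ := norm_sub_le _ _
      _ ≤ (‖-(f₁ (q a) - f₁ (p a) - B₁ (q a - p a))‖ + ‖B₁ (q a - p a - (w - x))‖)
          + ‖B₁ (w - x - t₂ • f₂ x)‖ := by
          gcongr
          exact norm_sub_le _ _
      _ ≤ (ε₀ * (2 * K * C1 * |t₂|) + L * (2 * K * C1 * δ * |t₂|))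
          + L * (4 * K * C1 * δ * |t₂|) := by
          gcongr
      _ ≤ (2 * K * C1 * ε₀ + 6 * K * L^2 * C1 * δ) * |t₂| := by
          have hLL : L ≤ L^2 := by nlinarith only [hL1, hL0]
          have haux : (0:ℝ) ≤ K * C1 * δ * |t₂| := by positivity
          nlinarith only [hLL, haux]
  -- the first integral estimate
  have hI₂ : ‖J₁ + (t₁ * t₂) • B₁ (f₂ x)‖
      ≤ (2 * K * C1 * ε₀ + 6 * K * L^2 * C1 * δ) * |t₂| * |t₁| := by
    have hid : J₁ + (t₁ * t₂) • B₁ (f₂ x)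
        = ∫ a in (0:ℝ)..t₁, (f₁ (p a) - f₁ (q a) + t₂ • B₁ (f₂ x)) := by
      rw [intervalIntegral.integral_add (hIp.sub hIq) intervalIntegrable_const,
        intervalIntegral.integral_const, sub_zero, smul_smul]
    rw [hid]
    have hbd := intervalIntegral.norm_integral_le_of_norm_le_const hkey2
    calc _ ≤ (2 * K * C1 * ε₀ + 6 * K * L^2 * C1 * δ) * |t₂| * |t₁ - 0| := hbd
      _ = _ := by rw [sub_zero]
  -- gap bound
  have hgapF : ‖y₁ - F‖ ≤ 7 * K * C1 * |t₁| := by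
    have h1 : ‖F - x‖ ≤ 6 * K * C1 * |t₁| := by
      calc ‖F - x‖ ≤ 6 * K * C1 * (|t₁| * |t₂|) := hFx
        _ ≤ 6 * K * C1 * (|t₁| * 1) := by
            gcongr
            linarith only [ht₂, hδ1]
        _ = 6 * K * C1 * |t₁| := by ring
    have h2 : ‖y₁ - x‖ ≤ K * C1 * |t₁| := by
      calc ‖y₁ - x‖ ≤ K * |t₁| := hy₁x
        _ ≤ K * C1 * |t₁| := by
            have haux : (0:ℝ) ≤ K * |t₁| := by positivity
            nlinarith only [hC1_1, haux]
    linarith only [hgap0, h1, h2]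
  -- pointwise estimate for the second integral
  have hkey1 : ∀ s ∈ Set.uIoc (0:ℝ) t₂, ‖f₂ (b s) - f₂ (c s) - t₁ • B₂ (f₁ x)‖
      ≤ (7 * K * C1^2 * ε₀ + 14 * K * L * C1^2 * δ) * |t₁| := by
    intro s hs
    have hs' : s ∈ uIcc (0:ℝ) t₂ := uIoc_subset_uIcc hs
    have hmb := hbmem s hs'
    have hmc := hcmem s hs'
    have e1 : ‖f₂ (b s) - f₂ (c s) - B₂ (b s - c s)‖ ≤ ε₀ * ‖b s - c s‖ :=
      hlin₂ _ hmc _ hmb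
    have e1' : ‖b s - c s‖ ≤ 7 * K * C1^2 * |t₁| := by
      calc ‖b s - c s‖ ≤ ‖y₁ - F‖ * Real.exp (L * |t₂|) := hbc2 s hs'
        _ ≤ (7 * K * C1 * |t₁|) * C1 :=
            mul_le_mul hgapF (hexpt₂.trans hexpL) (Real.exp_pos _).le (by positivity)
        _ = 7 * K * C1^2 * |t₁| := by ring
    have e2 : ‖b s - c s - (y₁ - F)‖ ≤ 7 * K * C1^2 * δ * |t₁| := by
      calc ‖b s - c s - (y₁ - F)‖ ≤ L * (‖y₁ - F‖ * Real.exp (L * |t₂|)) * |s| := hbcd s hs'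
        _ ≤ L * ((7 * K * C1 * |t₁|) * Real.exp L) * δ := by
            apply mul_le_mul _ ((abs_le_of_mem_uIcc hs').trans ht₂) (abs_nonneg _) (by positivity)
            exact mul_le_mul_of_nonneg_left
              (mul_le_mul hgapF hexpt₂ (Real.exp_pos _).le (by positivity)) hL0
        _ = 7 * K * C1 * (L * Real.exp L) * δ * |t₁| := by ring
        _ = 7 * K * C1^2 * δ * |t₁| := by rw [hC1def]; ring
    have heq : f₂ (b s) - f₂ (c s) - t₁ • B₂ (f₁ x)
        = (f₂ (b s) - f₂ (c s) - B₂ (b s - c s)) + B₂ (b s - c s - (y₁ - F))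
          + B₂ (y₁ - x - t₁ • f₁ x) - B₂ (F - x) := by
      simp only [map_sub, map_smul]
      abel
    rw [heq]
    have n1 : ‖f₂ (b s) - f₂ (c s) - B₂ (b s - c s)‖ ≤ ε₀ * (7 * K * C1^2 * |t₁|) := by
      calc _ ≤ ε₀ * ‖b s - c s‖ := e1
        _ ≤ ε₀ * (7 * K * C1^2 * |t₁|) := by gcongr
    have n2 : ‖B₂ (b s - c s - (y₁ - F))‖ ≤ L * (7 * K * C1^2 * δ * |t₁|) := by
      calc _ ≤ ‖B₂‖ * ‖b s - c s - (y₁ - F)‖ := B₂.le_opNorm _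
        _ ≤ L * (7 * K * C1^2 * δ * |t₁|) := mul_le_mul hDn₂ e2 (norm_nonneg _) hL0
    have n3 : ‖B₂ (y₁ - x - t₁ • f₁ x)‖ ≤ L * (L * (K * δ) * |t₁|) := by
      calc _ ≤ ‖B₂‖ * ‖y₁ - x - t₁ • f₁ x‖ := B₂.le_opNorm _
        _ ≤ L * (L * (K * δ) * |t₁|) := mul_le_mul hDn₂ hy₁lin (norm_nonneg _) hL0
    have n4 : ‖B₂ (F - x)‖ ≤ L * (6 * K * C1 * δ * |t₁|) := by
      calc _ ≤ ‖B₂‖ * ‖F - x‖ := B₂.le_opNorm _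
        _ ≤ L * (6 * K * C1 * (|t₁| * |t₂|)) := mul_le_mul hDn₂ hFx (norm_nonneg _) hL0
        _ ≤ L * (6 * K * C1 * (|t₁| * δ)) := by gcongr
        _ = L * (6 * K * C1 * δ * |t₁|) := by ring
    calc ‖_ + _ + _ - _‖ ≤ ‖_ + _ + _‖ + ‖B₂ (F - x)‖ := norm_sub_le _ _
      _ ≤ (‖_ + _‖ + ‖B₂ (y₁ - x - t₁ • f₁ x)‖) + ‖B₂ (F - x)‖ := by
          gcongr
          exact norm_add_le _ _
      _ ≤ ((‖f₂ (b s) - f₂ (c s) - B₂ (b s - c s)‖ + ‖B₂ (b s - c s - (y₁ - F))‖)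
          + ‖B₂ (y₁ - x - t₁ • f₁ x)‖) + ‖B₂ (F - x)‖ := by
          gcongr
          exact norm_add_le _ _
      _ ≤ ((ε₀ * (7 * K * C1^2 * |t₁|) + L * (7 * K * C1^2 * δ * |t₁|))
          + L * (L * (K * δ) * |t₁|)) + L * (6 * K * C1 * δ * |t₁|) := by
          gcongr
      _ ≤ (7 * K * C1^2 * ε₀ + 14 * K * L * C1^2 * δ) * |t₁| := by
          have h1 : (0:ℝ) ≤ K * L * δ * |t₁| := by positivity
          have h2 : (0:ℝ) ≤ K * L * C1 * δ * |t₁| := by positivity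
          nlinarith only [hLC1, hC1_1, h1, h2, hL0, hK0.le, hδ0, ht₁0]
  -- the second integral estimate
  have hI₁ : ‖J₂ - (t₁ * t₂) • B₂ (f₁ x)‖
      ≤ (7 * K * C1^2 * ε₀ + 14 * K * L * C1^2 * δ) * |t₁| * |t₂| := by
    have hid : J₂ - (t₁ * t₂) • B₂ (f₁ x)
        = ∫ s in (0:ℝ)..t₂, (f₂ (b s) - f₂ (c s) - t₁ • B₂ (f₁ x)) := by
      rw [intervalIntegral.integral_sub (hIb.sub hIc) intervalIntegrable_const,
        intervalIntegral.integral_const, sub_zero, smul_smul, mul_comm t₂ t₁]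
    rw [hid]
    have hbd := intervalIntegral.norm_integral_le_of_norm_le_const hkey1
    calc _ ≤ (7 * K * C1^2 * ε₀ + 14 * K * L * C1^2 * δ) * |t₁| * |t₂ - 0| := hbd
      _ = _ := by rw [sub_zero]
  -- final assembly
  have hfinal : F - x - (t₁ * t₂) • (B₂ (f₁ x) - B₁ (f₂ x))
      = (J₁ + (t₁ * t₂) • B₁ (f₂ x)) + (J₂ - (t₁ * t₂) • B₂ (f₁ x)) := by
    rw [hΔ, smul_sub]
    abel
  have hgoal : ‖F - x - (t₁ * t₂) • (B₂ (f₁ x) - B₁ (f₂ x))‖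
      ≤ 21 * K * L^2 * C1^2 * (δ + ε₀) * (|t₁| * |t₂|) := by
    rw [hfinal]
    have hT0 : (0:ℝ) ≤ |t₁| * |t₂| := mul_nonneg ht₁0 ht₂0
    have hco : (2 * K * C1 * ε₀ + 6 * K * L^2 * C1 * δ)
        + (7 * K * C1^2 * ε₀ + 14 * K * L * C1^2 * δ)
        ≤ 21 * K * L^2 * C1^2 * (δ + ε₀) := by
      have hL2 : (1:ℝ) ≤ L^2 := by nlinarith only [hL1, hL0]
      have hCC : C1 ≤ C1^2 := by nlinarith only [hC1_1, hC10]
      have hCL : C1 ≤ L^2 * C1^2 := by nlinarith only [hCC, hL2, sq_nonneg C1]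
      have hCL2 : C1^2 ≤ L^2 * C1^2 := by nlinarith only [hL2, sq_nonneg C1]
      have h1 : 2 * K * C1 * ε₀ ≤ 2 * K * (L^2 * C1^2) * ε₀ := by
        have h0 : (0:ℝ) ≤ 2 * K * ε₀ := by positivity
        nlinarith only [hCL, h0]
      have h2 : 7 * K * C1^2 * ε₀ ≤ 7 * K * (L^2 * C1^2) * ε₀ := by
        have h0 : (0:ℝ) ≤ 7 * K * ε₀ := by positivity
        nlinarith only [hCL2, h0]
      have h3 : 6 * K * L^2 * C1 * δ ≤ 6 * K * (L^2 * C1^2) * δ := by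
        have h0 : (0:ℝ) ≤ 6 * K * L^2 * δ * C1 := by positivity
        nlinarith only [hC1_1, h0]
      have h4 : 14 * K * L * C1^2 * δ ≤ 14 * K * (L^2 * C1^2) * δ := by
        have h0 : (0:ℝ) ≤ 14 * K * C1^2 * δ * L := by positivity
        nlinarith only [hL1, h0]
      have hx1 : (0:ℝ) ≤ K * (L^2 * C1^2) * ε₀ := by positivity
      have hx2 : (0:ℝ) ≤ K * (L^2 * C1^2) * δ := by positivity
      nlinarith only [h1, h2, h3, h4, hx1, hx2]
    calc ‖(J₁ + (t₁ * t₂) • B₁ (f₂ x)) + (J₂ - (t₁ * t₂) • B₂ (f₁ x))‖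
        ≤ ‖J₁ + (t₁ * t₂) • B₁ (f₂ x)‖ + ‖J₂ - (t₁ * t₂) • B₂ (f₁ x)‖ := norm_add_le _ _
      _ ≤ (2 * K * C1 * ε₀ + 6 * K * L^2 * C1 * δ) * |t₂| * |t₁|
          + (7 * K * C1^2 * ε₀ + 14 * K * L * C1^2 * δ) * |t₁| * |t₂| :=
          add_le_add hI₂ hI₁
      _ = ((2 * K * C1 * ε₀ + 6 * K * L^2 * C1 * δ)
          + (7 * K * C1^2 * ε₀ + 14 * K * L * C1^2 * δ)) * (|t₁| * |t₂|) := by ring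
      _ ≤ 21 * K * L^2 * C1^2 * (δ + ε₀) * (|t₁| * |t₂|) :=
          mul_le_mul_of_nonneg_right hco hT0
  exact hgoal


end Flows

theorem stmt0 {n : ℕ} (M : Set (EuclideanSpace ℝ (Fin n))) (hM : IsOpen M)
    (f₁ f₂ : EuclideanSpace ℝ (Fin n) → EuclideanSpace ℝ (Fin n))
    (hf₁ : ContDiffOn ℝ 1 f₁ M) (hf₂ : ContDiffOn ℝ 1 f₂ M)
    (φ₁ φ₂ : ℝ → EuclideanSpace ℝ (Fin n) → EuclideanSpace ℝ (Fin n))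
    (hφ₁ : IsFlowOn M f₁ φ₁) (hφ₂ : IsFlowOn M f₂ φ₂)
    (x : EuclideanSpace ℝ (Fin n)) (hx : x ∈ M) :
    (fun p : ℝ × ℝ =>
        φ₂ (-p.2) (φ₁ (-p.1) (φ₂ p.2 (φ₁ p.1 x))) - x
          - (p.1 * p.2) • lieBr f₁ f₂ x)
      =o[𝓝 (0 : ℝ × ℝ)] (fun p : ℝ × ℝ => p.1 * p.2) := by
  have hφ₁M : ∀ y ∈ M, ∀ t : ℝ, φ₁ t y ∈ M := fun y hy t => ((hφ₁ y hy).2 t).1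
  have hφ₁0 : ∀ y ∈ M, φ₁ 0 y = y := fun y hy => (hφ₁ y hy).1
  have hφ₁D : ∀ y ∈ M, ∀ t : ℝ, HasDerivAt (fun s => φ₁ s y) (f₁ (φ₁ t y)) t :=
    fun y hy t => ((hφ₁ y hy).2 t).2
  have hφ₂M : ∀ y ∈ M, ∀ t : ℝ, φ₂ t y ∈ M := fun y hy t => ((hφ₂ y hy).2 t).1
  have hφ₂0 : ∀ y ∈ M, φ₂ 0 y = y := fun y hy => (hφ₂ y hy).1
  have hφ₂D : ∀ y ∈ M, ∀ t : ℝ, HasDerivAt (fun s => φ₂ s y) (f₂ (φ₂ t y)) t :=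
    fun y hy t => ((hφ₂ y hy).2 t).2
  -- choose a closed ball inside M
  obtain ⟨r0, hr0, hball0⟩ := Metric.isOpen_iff.1 hM x hx
  set r := r0 / 2 with hrdef
  have hr : 0 < r := by simp only [hrdef]; linarith
  have hrM : closedBall x r ⊆ M := by
    intro z hz
    apply hball0
    rw [mem_ball]
    have := mem_closedBall.1 hz
    simp only [hrdef] at this ⊢
    linarith
  have hcomp : IsCompact (closedBall x r) := isCompact_closedBall x r
  -- bound on the vector fields
  have hc₁ : ContinuousOn f₁ M := hf₁.continuousOn
  have hc₂ : ContinuousOn f₂ M := hf₂.continuousOn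
  obtain ⟨K₁, hK₁⟩ := hcomp.exists_bound_of_continuousOn (hc₁.mono hrM)
  obtain ⟨K₂, hK₂⟩ := hcomp.exists_bound_of_continuousOn (hc₂.mono hrM)
  set K := max 1 (max K₁ K₂) with hKdef
  have hK1 : 1 ≤ K := le_max_left _ _
  have hK0 : (0:ℝ) < K := by linarith
  have hKb : ∀ z ∈ closedBall x r, ‖f₁ z‖ ≤ K ∧ ‖f₂ z‖ ≤ K := by
    intro z hz
    constructor
    · exact (hK₁ z hz).trans ((le_max_left _ _).trans (le_max_right _ _))
    · exact (hK₂ z hz).trans ((le_max_right _ _).trans (le_max_right _ _))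
  -- continuity of the derivatives on M
  have hfd₁ : ContinuousOn (fun y => fderiv ℝ f₁ y) M := by
    have h := hf₁.continuousOn_fderivWithin hM.uniqueDiffOn le_rfl
    exact h.congr fun y hy => (fderivWithin_of_isOpen hM hy).symm
  have hfd₂ : ContinuousOn (fun y => fderiv ℝ f₂ y) M := by
    have h := hf₂.continuousOn_fderivWithin hM.uniqueDiffOn le_rfl
    exact h.congr fun y hy => (fderivWithin_of_isOpen hM hy).symm
  obtain ⟨L₁, hL₁⟩ := hcomp.exists_bound_of_continuousOn (hfd₁.mono hrM)
  obtain ⟨L₂, hL₂⟩ := hcomp.exists_bound_of_continuousOn (hfd₂.mono hrM)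
  set L := max 1 (max L₁ L₂) with hLdef
  have hL1 : 1 ≤ L := le_max_left _ _
  have hL0 : (0:ℝ) < L := by linarith
  have hLb₁ : ∀ z ∈ closedBall x r, ‖fderiv ℝ f₁ z‖ ≤ L := fun z hz =>
    (hL₁ z hz).trans ((le_max_left _ _).trans (le_max_right _ _))
  have hLb₂ : ∀ z ∈ closedBall x r, ‖fderiv ℝ f₂ z‖ ≤ L := fun z hz =>
    (hL₂ z hz).trans ((le_max_right _ _).trans (le_max_right _ _))
  -- Lipschitz estimates on the closed ball
  have hdiff₁ : ∀ w ∈ closedBall x r, HasFDerivWithinAt f₁ (fderiv ℝ f₁ w) (closedBall x r) w :=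
    fun w hw => ((hf₁.differentiableOn one_ne_zero).differentiableAt
      (hM.mem_nhds (hrM hw))).hasFDerivAt.hasFDerivWithinAt
  have hdiff₂ : ∀ w ∈ closedBall x r, HasFDerivWithinAt f₂ (fderiv ℝ f₂ w) (closedBall x r) w :=
    fun w hw => ((hf₂.differentiableOn one_ne_zero).differentiableAt
      (hM.mem_nhds (hrM hw))).hasFDerivAt.hasFDerivWithinAt
  have hLip : ∀ y ∈ closedBall x r, ∀ z ∈ closedBall x r,
      ‖f₁ y - f₁ z‖ ≤ L * ‖y - z‖ ∧ ‖f₂ y - f₂ z‖ ≤ L * ‖y - z‖ := by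
    intro y hy z hz
    constructor
    · exact (convex_closedBall x r).norm_image_sub_le_of_norm_hasFDerivWithin_le
        hdiff₁ hLb₁ hz hy
    · exact (convex_closedBall x r).norm_image_sub_le_of_norm_hasFDerivWithin_le
        hdiff₂ hLb₂ hz hy
  have hxr : x ∈ closedBall x r := mem_closedBall_self hr.le
  have hDn₁ : ‖fderiv ℝ f₁ x‖ ≤ L := hLb₁ x hxr
  have hDn₂ : ‖fderiv ℝ f₂ x‖ ≤ L := hLb₂ x hxr
  rw [isLittleO_iff]
  intro ε hε
  set C1 := L * Real.exp L with hC1def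
  have hC1pos : 0 < C1 := by positivity
  set Cst := 21 * K * L^2 * C1^2 with hCstdef
  have hCst : 0 < Cst := by positivity
  set ε₀ := ε / (4 * Cst) with hε₀def
  have hε₀pos : 0 < ε₀ := by positivity
  -- choose ρ so the derivatives are ε₀-close to their value at x
  have hca₁ : ContinuousAt (fun y => fderiv ℝ f₁ y) x := hfd₁.continuousAt (hM.mem_nhds hx)
  have hca₂ : ContinuousAt (fun y => fderiv ℝ f₂ y) x := hfd₂.continuousAt (hM.mem_nhds hx)
  obtain ⟨ρ₁, hρ₁pos, hρ₁⟩ := Metric.continuousAt_iff.1 hca₁ ε₀ hε₀pos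
  obtain ⟨ρ₂, hρ₂pos, hρ₂⟩ := Metric.continuousAt_iff.1 hca₂ ε₀ hε₀pos
  set ρ := min r (min (ρ₁/2) (ρ₂/2)) with hρdef
  have hρpos : 0 < ρ := lt_min hr (lt_min (by linarith) (by linarith))
  have hρr : ρ ≤ r := min_le_left _ _
  have hρM : closedBall x ρ ⊆ M := (closedBall_subset_closedBall hρr).trans hrM
  have hρball : closedBall x ρ ⊆ closedBall x r := closedBall_subset_closedBall hρr
  have hder₁ : ∀ z ∈ closedBall x ρ, ‖fderiv ℝ f₁ z - fderiv ℝ f₁ x‖ ≤ ε₀ := by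
    intro z hz
    have h1 : dist z x ≤ ρ := mem_closedBall.1 hz
    have h2 : ρ ≤ ρ₁/2 := le_trans (min_le_right _ _) (min_le_left _ _)
    have h3 : dist z x < ρ₁ := by linarith
    have := hρ₁ h3
    rw [dist_eq_norm] at this
    exact this.le
  have hder₂ : ∀ z ∈ closedBall x ρ, ‖fderiv ℝ f₂ z - fderiv ℝ f₂ x‖ ≤ ε₀ := by
    intro z hz
    have h1 : dist z x ≤ ρ := mem_closedBall.1 hz
    have h2 : ρ ≤ ρ₂/2 := le_trans (min_le_right _ _) (min_le_right _ _)
    have h3 : dist z x < ρ₂ := by linarith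
    have := hρ₂ h3
    rw [dist_eq_norm] at this
    exact this.le
  have hlin₁ := lin hM hf₁ hρM hder₁
  have hlin₂ := lin hM hf₂ hρM hder₂
  -- choose δ
  set δ := min 1 (min (ρ/(4*K)) (min (1/(2*C1)) (ε/(4*Cst)))) with hδdef
  have hδpos : 0 < δ := by
    apply lt_min one_pos
    apply lt_min (by positivity)
    exact lt_min (by positivity) (by positivity)
  have hδ1 : δ ≤ 1 := min_le_left _ _
  have hδρ : 4 * K * δ ≤ ρ := by
    have h1 : δ ≤ ρ/(4*K) := le_trans (min_le_right _ _) (min_le_left _ _)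
    rw [le_div_iff₀ (by positivity)] at h1
    linarith
  have hδC : C1 * δ ≤ 1/2 := by
    have h1 : δ ≤ 1/(2*C1) := le_trans (min_le_right _ _)
      (le_trans (min_le_right _ _) (min_le_left _ _))
    rw [le_div_iff₀ (by positivity)] at h1
    linarith
  have hδε : δ ≤ ε/(4*Cst) := le_trans (min_le_right _ _)
    (le_trans (min_le_right _ _) (min_le_right _ _))
  rw [Metric.eventually_nhds_iff]
  refine ⟨δ, hδpos, ?_⟩
  rintro ⟨t₁, t₂⟩ hdist
  have habs : |t₁| ≤ δ ∧ |t₂| ≤ δ := by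
    rw [Prod.dist_eq] at hdist
    simp only [Prod.fst_zero, Prod.snd_zero, Real.dist_eq, sub_zero] at hdist
    constructor
    · exact le_of_lt (lt_of_le_of_lt (le_max_left _ _) hdist)
    · exact le_of_lt (lt_of_le_of_lt (le_max_right _ _) hdist)
  have hkey := key M f₁ f₂ φ₁ φ₂ hφ₁M hφ₁0 hφ₁D hφ₂M hφ₂0 hφ₂D x hx hK1 hL1 hρM
    (fun z hz => hKb z (hρball hz))
    (fun y hy z hz => hLip y (hρball hy) z (hρball hz))
    ((hc₁.mono hrM).mono hρball) ((hc₂.mono hrM).mono hρball)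
    hlin₁ hlin₂ hDn₁ hDn₂ hε₀pos.le hδpos.le hδ1 hδρ hδC habs.1 habs.2
  simp only [lieBr]
  calc ‖φ₂ (-t₂) (φ₁ (-t₁) (φ₂ t₂ (φ₁ t₁ x))) - x
      - (t₁ * t₂) • ((fderiv ℝ f₂ x) (f₁ x) - (fderiv ℝ f₁ x) (f₂ x))‖
      ≤ 21 * K * L^2 * C1^2 * (δ + ε₀) * (|t₁| * |t₂|) := hkey
    _ ≤ ε * ‖t₁ * t₂‖ := by
        have h1 : 21 * K * L^2 * C1^2 * (δ + ε₀) ≤ ε/2 := by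
          have h2 : Cst * (δ + ε₀) ≤ Cst * (ε/(4*Cst) + ε/(4*Cst)) := by
            apply mul_le_mul_of_nonneg_left _ hCst.le
            have : ε₀ = ε/(4*Cst) := hε₀def
            linarith [hδε]
          have h3 : Cst * (ε/(4*Cst) + ε/(4*Cst)) = ε/2 := by
            field_simp
            ring
          calc 21 * K * L^2 * C1^2 * (δ + ε₀) = Cst * (δ + ε₀) := by rw [hCstdef]
            _ ≤ ε/2 := by rw [← h3] at *; linarith [h2]
        have hT : |t₁| * |t₂| = ‖t₁ * t₂‖ := by
          rw [Real.norm_eq_abs, abs_mul]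
        rw [← hT]
        have hT0 : (0:ℝ) ≤ |t₁| * |t₂| := by positivity
        have := mul_le_mul_of_nonneg_right h1 hT0
        nlinarith only [this, hT0, hε.le]
end

section
/- Let f₁, f₂ be C² vector fields on an open set M ⊆ ℝⁿ. Then the identity [f₁,f₂]^{(s₂,s₁)}(x) = [f₁,f₂](x) holds for all x ∈ M and all sufficiently small (s₂,s₁) if and only if [f₁,[f₁,f₂]](x) = 0 and [f₂,[f₁,f₂]](x) = 0 for all x ∈ M. -/
open Asymptotics Filter Topology intervalIntegral

/-- `(Ad_Φ h)(x) = DΦ⁻¹|_{Φ(x)}(h(Φ(x)))`, with `Φinv` the inverse of `Φ`. -/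
noncomputable def AdC {n : ℕ}
    (Φ Φinv h : EuclideanSpace ℝ (Fin n) → EuclideanSpace ℝ (Fin n)) :
    EuclideanSpace ℝ (Fin n) → EuclideanSpace ℝ (Fin n) :=
  fun x => fderiv ℝ Φinv (Φ x) (h (Φ x))

open Set Metric Real

structure IsPicardLindelofOld {E : Type*} [NormedAddCommGroup E] (v : ℝ → E → E)
    (tMin t₀ tMax : ℝ) (x₀ : E) (L : NNReal) (R C : ℝ) : Prop where
  ht₀ : t₀ ∈ Icc tMin tMax
  hR : 0 ≤ R
  lipschitz : ∀ t ∈ Icc tMin tMax, LipschitzOnWith L (v t) (closedBall x₀ R)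
  cont : ∀ x ∈ closedBall x₀ R, ContinuousOn (fun t : ℝ => v t x) (Icc tMin tMax)
  norm_le : ∀ t ∈ Icc tMin tMax, ∀ x ∈ closedBall x₀ R, ‖v t x‖ ≤ C
  C_mul_le_R : (C : ℝ) * max (tMax - t₀) (t₀ - tMin) ≤ R

theorem pl_mem {E : Type*} [NormedAddCommGroup E] [NormedSpace ℝ E] [CompleteSpace E]
    {v : ℝ → E → E} {tMin t₀ tMax : ℝ} (x₀ : E) {C R : ℝ} {L : NNReal}
    (hpl : IsPicardLindelofOld v tMin t₀ tMax x₀ L R C) :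
    ∃ f : ℝ → E, f t₀ = x₀ ∧ ∀ t ∈ Icc tMin tMax,
      f t ∈ closedBall x₀ R ∧ HasDerivWithinAt f (v t (f t)) (Icc tMin tMax) t := by
  have hC : 0 ≤ C := (norm_nonneg _).trans (hpl.norm_le t₀ hpl.ht₀ x₀ (mem_closedBall_self hpl.hR))
  have hRc : ((R.toNNReal : NNReal) : ℝ) = R := Real.coe_toNNReal _ hpl.hR
  have hCc : ((C.toNNReal : NNReal) : ℝ) = C := Real.coe_toNNReal _ hC
  lift t₀ to Icc tMin tMax using hpl.ht₀
  have hpl' : IsPicardLindelof v t₀ x₀ R.toNNReal 0 C.toNNReal L := by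
    refine ⟨?_, ?_, ?_, ?_⟩
    · rw [hRc]; exact hpl.lipschitz
    · rw [hRc]; exact hpl.cont
    · rw [hRc, hCc]; exact hpl.norm_le
    · rw [hRc, hCc, NNReal.coe_zero, sub_zero]; exact hpl.C_mul_le_R
  obtain ⟨α, hα⟩ := ODE.FunSpace.exists_isFixedPt_next hpl' (mem_closedBall_self le_rfl)
  refine ⟨α.compProj, by rw [ODE.FunSpace.compProj_val, ← hα, ODE.FunSpace.next_apply₀],
    fun t ht => ⟨?_, ?_⟩⟩
  · have := α.compProj_mem_closedBall hpl'.mul_max_le (t := t)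
    rwa [hRc] at this
  apply ODE.hasDerivWithinAt_picard_Icc t₀.2 hpl'.continuousOn_uncurry
    α.continuous_compProj.continuousOn (fun _ ht' => α.compProj_mem_closedBall hpl'.mul_max_le)
    x₀ ht |>.congr_of_mem _ ht
  intro t' ht'
  nth_rw 1 [← hα]
  rw [ODE.FunSpace.compProj_of_mem ht', ODE.FunSpace.next_apply]

theorem ode_uniq {E : Type*} [NormedAddCommGroup E] [NormedSpace ℝ E]
    {M : Set E} (hM : IsOpen M) {g : E → E} (hg : ContDiffOn ℝ 1 g M) {δ : ℝ} {u w : ℝ → E}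
    (hu : ∀ t ∈ Ioo (-δ) δ, u t ∈ M ∧ HasDerivAt u (g (u t)) t)
    (hw : ∀ t ∈ Ioo (-δ) δ, w t ∈ M ∧ HasDerivAt w (g (w t)) t)
    (hδ : 0 < δ) (h0 : u 0 = w 0) : ∀ t ∈ Ioo (-δ) δ, u t = w t := by
  set S : Set ℝ := {t | t ∈ Ioo (-δ) δ ∧ u t = w t} with hS
  have hSopen : IsOpen S := by
    rw [isOpen_iff_mem_nhds]
    rintro t₁ ⟨ht₁, heq⟩
    have hmem : u t₁ ∈ M := (hu t₁ ht₁).1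
    obtain ⟨K, s, hs, hlip⟩ := (hg.contDiffAt (hM.mem_nhds hmem)).exists_lipschitzOnWith
    have hIoo : Ioo (-δ) δ ∈ 𝓝 t₁ := isOpen_Ioo.mem_nhds ht₁
    have hueq : u =ᶠ[𝓝 t₁] w := by
      refine ODE_solution_unique_of_eventually (v := fun _ => g) (s := fun _ => s)
        (Filter.Eventually.of_forall fun _ => hlip) ?_ ?_ heq
      · have hcu : ContinuousAt u t₁ := (hu t₁ ht₁).2.continuousAt
        filter_upwards [hIoo, hcu.preimage_mem_nhds hs] with t ht hts
        exact ⟨(hu t ht).2, hts⟩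
      · have hcw : ContinuousAt w t₁ := (hw t₁ ht₁).2.continuousAt
        filter_upwards [hIoo, hcw.preimage_mem_nhds (heq ▸ hs)] with t ht hts
        exact ⟨(hw t ht).2, hts⟩
    filter_upwards [hIoo, hueq] with t ht h2
    exact ⟨ht, h2⟩
  have hmain : Ioo (-δ) δ ⊆ S := by
    refine isPreconnected_Ioo.subset_of_closure_inter_subset hSopen
      ⟨0, ⟨by simpa using hδ, hδ⟩, ⟨⟨by simpa using hδ, hδ⟩, h0⟩⟩ ?_
    rintro t ⟨htc, ht⟩
    refine ⟨ht, ?_⟩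
    have hq : ContinuousWithinAt (fun τ => u τ - w τ) S t :=
      (((hu t ht).2.continuousAt.sub (hw t ht).2.continuousAt)).continuousWithinAt
    have h0' : u t - w t ∈ closure ((fun τ => u τ - w τ) '' S) :=
      hq.mem_closure_image htc
    have himg : (fun τ => u τ - w τ) '' S ⊆ {0} := by
      rintro - ⟨τ, hτ, rfl⟩; simp [hτ.2]
    have := closure_mono himg h0'
    rw [closure_singleton, mem_singleton_iff, sub_eq_zero] at this
    exact this
  exact fun t ht => (hmain ht).2

theorem gron_s3 {E : Type*} [NormedAddCommGroup E] [NormedSpace ℝ E]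
    {g : E → E} {K : Set E} {Lnn : NNReal} {L₂ : ℝ}
    (hLipK : LipschitzOnWith Lnn g K) (hL : 1 ≤ (Lnn : ℝ)) (hL₂ : 0 ≤ L₂)
    (hT : ∀ a ∈ K, ∀ b ∈ K, ‖g b - g a - fderiv ℝ g a (b - a)‖ ≤ L₂ * ‖b - a‖ ^ 2)
    {u p : ℝ → E} {U : ℝ → E →L[ℝ] E} {v : E} {s₁ : ℝ} (hs₁ : 0 ≤ s₁)
    (hu' : ∀ t ∈ Icc 0 s₁, HasDerivAt u (g (u t)) t)
    (hum : ∀ t ∈ Icc 0 s₁, u t ∈ K)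
    (hp' : ∀ t ∈ Icc 0 s₁, HasDerivAt p (g (p t)) t)
    (hpm : ∀ t ∈ Icc 0 s₁, p t ∈ K)
    (hU' : ∀ t ∈ Icc 0 s₁, HasDerivAt U ((fderiv ℝ g (p t)).comp (U t)) t)
    (hUb : ∀ t ∈ Icc 0 s₁, ‖U t‖ ≤ 2)
    (hβm : ∀ t ∈ Icc 0 s₁, p t + U t v ∈ K)
    (h0 : u 0 = p 0 + U 0 v) :
    ‖u s₁ - (p s₁ + U s₁ v)‖ ≤ 4 * L₂ * Real.exp (Lnn * s₁) / Lnn * ‖v‖ ^ 2 := by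
  set β : ℝ → E := fun t => p t + U t v with hβ
  have hβ' : ∀ t ∈ Icc 0 s₁,
      HasDerivAt β (g (p t) + (fderiv ℝ g (p t)).comp (U t) v) t := by
    intro t ht
    have h1 : HasDerivAt (fun t => U t v) ((fderiv ℝ g (p t)).comp (U t) v) t := by
      have := (hU' t ht).clm_apply (hasDerivAt_const t v)
      simpa using this
    exact (hp' t ht).add h1
  have key := dist_le_of_approx_trajectories_ODE_of_mem
    (v := fun _ => g) (s := fun _ => K) (K := Lnn)
    (f := u) (g := β) (f' := fun t => g (u t))
    (g' := fun t => g (p t) + (fderiv ℝ g (p t)).comp (U t) v)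
    (εf := 0) (εg := 4 * L₂ * ‖v‖ ^ 2) (δ := 0) (a := 0) (b := s₁)
    (fun _ _ => hLipK)
    (fun t ht => ((hu' t ht).continuousAt).continuousWithinAt)
    (fun t ht => (hu' t (Ico_subset_Icc_self ht)).hasDerivWithinAt)
    (fun t ht => by simp)
    (fun t ht => hum t (Ico_subset_Icc_self ht))
    (fun t ht => ((hβ' t ht).continuousAt).continuousWithinAt)
    (fun t ht => (hβ' t (Ico_subset_Icc_self ht)).hasDerivWithinAt)
    (fun t ht => by
      have ht' := Ico_subset_Icc_self ht
      have ha := hpm t ht'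
      have hb := hβm t ht'
      have hUv : ‖U t v‖ ≤ 2 * ‖v‖ := by
        calc ‖U t v‖ ≤ ‖U t‖ * ‖v‖ := (U t).le_opNorm v
        _ ≤ 2 * ‖v‖ := by have := hUb t ht'; nlinarith [norm_nonneg v]
      have htay := hT (p t) ha (p t + U t v) hb
      rw [dist_eq_norm]
      have heq : g (p t) + (fderiv ℝ g (p t)).comp (U t) v - g (p t + U t v)
          = -(g (p t + U t v) - g (p t) - fderiv ℝ g (p t) (p t + U t v - p t)) := by
        simp only [add_sub_cancel_left]
        abel_nf
        rw [ContinuousLinearMap.comp_apply]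
        abel
      rw [heq, norm_neg]
      calc ‖g (p t + U t v) - g (p t) - fderiv ℝ g (p t) (p t + U t v - p t)‖
          ≤ L₂ * ‖p t + U t v - p t‖ ^ 2 := htay
        _ = L₂ * ‖U t v‖ ^ 2 := by rw [add_sub_cancel_left]
        _ ≤ L₂ * (2 * ‖v‖) ^ 2 := by
            have h4 : ‖U t v‖ ^ 2 ≤ (2 * ‖v‖) ^ 2 :=
              pow_le_pow_left₀ (norm_nonneg _) hUv 2
            exact mul_le_mul_of_nonneg_left h4 hL₂
        _ = 4 * L₂ * ‖v‖ ^ 2 := by ring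
      )
    (fun t ht => hβm t (Ico_subset_Icc_self ht))
    (by simp [h0, hβ])
  have h2 := key s₁ ⟨hs₁, le_rfl⟩
  rw [dist_eq_norm] at h2
  have hLpos : (0:ℝ) < Lnn := lt_of_lt_of_le one_pos hL
  have hgb : gronwallBound 0 (Lnn:ℝ) (0 + 4 * L₂ * ‖v‖ ^ 2) (s₁ - 0)
      = 4 * L₂ * ‖v‖ ^ 2 / Lnn * (Real.exp (Lnn * s₁) - 1) := by
    rw [gronwallBound_of_K_ne_0 (ne_of_gt hLpos)]
    simp
  rw [hgb] at h2
  refine h2.trans ?_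
  have hre : 4 * L₂ * Real.exp (Lnn * s₁) / Lnn * ‖v‖ ^ 2
      = 4 * L₂ * ‖v‖ ^ 2 / Lnn * Real.exp (Lnn * s₁) := by ring
  rw [hre]
  refine mul_le_mul_of_nonneg_left ?_ (by positivity)
  linarith [Real.exp_pos ((Lnn:ℝ) * s₁)]

theorem flow_rev {n : ℕ} {M : Set (EuclideanSpace ℝ (Fin n))}
    {f : EuclideanSpace ℝ (Fin n) → EuclideanSpace ℝ (Fin n)} {φ}
    (hφ : IsFlowOn M f φ) : IsFlowOn M (fun z => -f z) (fun t z => φ (-t) z) := by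
  intro x hx
  obtain ⟨h0, h⟩ := hφ x hx
  refine ⟨by simpa using h0, fun t => ⟨(h (-t)).1, ?_⟩⟩
  have hd := (h (-t)).2
  have := hd.scomp t (hasDerivAt_neg t)
  simpa [Function.comp_def] using this

theorem flow_inv {n : ℕ} {M : Set (EuclideanSpace ℝ (Fin n))} (hM : IsOpen M)
    {f : EuclideanSpace ℝ (Fin n) → EuclideanSpace ℝ (Fin n)} {φ}
    (hf : ContDiffOn ℝ 1 f M) (hφ : IsFlowOn M f φ) {z} (hz : z ∈ M) (t : ℝ) :
    φ (-t) (φ t z) = z := by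
  obtain ⟨hz0, hz'⟩ := hφ z hz
  have hmem : φ t z ∈ M := (hz' t).1
  have hrev := flow_rev hφ
  have huniq := ode_uniq hM hf.neg
    (u := fun τ => φ (-τ) (φ t z)) (w := fun τ => φ (t - τ) z) (δ := |t| + 1)
    (fun τ _ => ((hrev (φ t z) hmem).2 τ))
    (fun τ _ => by
      refine ⟨(hz' (t - τ)).1, ?_⟩
      have hd := (hz' (t - τ)).2
      have hin : HasDerivAt (fun τ : ℝ => t - τ) (-1) τ := by
        simpa using ((hasDerivAt_id τ).const_sub t)
      have := hd.scomp τ hin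
      simpa [Function.comp_def] using this)
    (by positivity)
    (by
      have := (hφ (φ t z) hmem).1
      simpa using this)
  have ht : t ∈ Ioo (-(|t| + 1)) (|t| + 1) := by
    constructor <;> cases abs_cases t <;> linarith [abs_nonneg t]
  have := huniq t ht
  simpa [hz0] using this

set_option maxHeartbeats 2000000 in
theorem loc {n : ℕ} {M : Set (EuclideanSpace ℝ (Fin n))} (hM : IsOpen M)
    {f : EuclideanSpace ℝ (Fin n) → EuclideanSpace ℝ (Fin n)} {φ}
    (hf : ContDiffOn ℝ 2 f M) (hφ : IsFlowOn M f φ) {x} (hx : x ∈ M) :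
    ∃ δ > (0:ℝ), ∃ ρ > (0:ℝ), ∃ Cs > (0:ℝ), closedBall x ρ ⊆ M ∧
      (∀ y ∈ closedBall x ρ, ∀ s : ℝ, |s| < δ → dist (φ s y) y ≤ Cs * |s|) ∧
      (∀ y ∈ closedBall x ρ,
        ∃ U : ℝ → EuclideanSpace ℝ (Fin n) →L[ℝ] EuclideanSpace ℝ (Fin n),
          U 0 = ContinuousLinearMap.id ℝ _ ∧
          ∀ s : ℝ, |s| < δ →
            HasFDerivAt (φ s) (U s) y ∧
            HasDerivAt U ((fderiv ℝ f (φ s y)).comp (U s)) s) := by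
  classical
  set A : EuclideanSpace ℝ (Fin n) → EuclideanSpace ℝ (Fin n) →L[ℝ] EuclideanSpace ℝ (Fin n) :=
    fun z => fderiv ℝ f z with hA
  -- a closed ball inside M
  obtain ⟨R₀, hR₀, hball⟩ := Metric.mem_nhds_iff.mp (hM.mem_nhds hx)
  set R := R₀ / 2 with hRdef
  have hRpos : 0 < R := by positivity
  have hKM : closedBall x R ⊆ M := by
    refine Subset.trans ?_ hball
    intro z hz
    have : dist z x ≤ R := mem_closedBall.1 hz
    have : dist z x < R₀ := by rw [hRdef] at this; linarith
    exact mem_ball.2 this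
  set K := closedBall x R with hK
  have hKc : IsCompact K := isCompact_closedBall x R
  have hKconv : Convex ℝ K := convex_closedBall x R
  have hfdiffAt : ∀ z ∈ M, HasFDerivAt f (A z) z := fun z hz =>
    ((hf.differentiableOn (by norm_num)).differentiableAt (hM.mem_nhds hz)).hasFDerivAt
  have hfc : ContinuousOn f M := hf.continuousOn
  have hAc : ContinuousOn A M := hf.continuousOn_fderiv_of_isOpen hM (by norm_num)
  -- bounds on K
  obtain ⟨C₀, hC₀⟩ := hKc.exists_bound_of_continuousOn (hfc.mono hKM)
  set C := max C₀ 1 with hCdef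
  have hC1 : (1:ℝ) ≤ C := le_max_right _ _
  have hCpos : (0:ℝ) < C := lt_of_lt_of_le one_pos hC1
  have hCb : ∀ z ∈ K, ‖f z‖ ≤ C := fun z hz => (hC₀ z hz).trans (le_max_left _ _)
  obtain ⟨L₀, hL₀⟩ := hKc.exists_bound_of_continuousOn (hAc.mono hKM)
  set L := max L₀ 1 with hLdef
  have hL1 : (1:ℝ) ≤ L := le_max_right _ _
  have hLpos : (0:ℝ) < L := lt_of_lt_of_le one_pos hL1
  have hLb : ∀ z ∈ K, ‖A z‖ ≤ L := fun z hz => (hL₀ z hz).trans (le_max_left _ _)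
  -- second derivative bounds
  have hA1 : ContDiffOn ℝ 1 A M := hf.fderiv_of_isOpen hM (by norm_num)
  have hA'c : ContinuousOn (fderiv ℝ A) M := hA1.continuousOn_fderiv_of_isOpen hM le_rfl
  have hAdiffAt : ∀ z ∈ M, HasFDerivAt A (fderiv ℝ A z) z := fun z hz =>
    ((hA1.differentiableOn (by norm_num)).differentiableAt (hM.mem_nhds hz)).hasFDerivAt
  obtain ⟨L₂₀, hL₂₀⟩ := hKc.exists_bound_of_continuousOn (f := fderiv ℝ A) (hA'c.mono hKM)
  set L₂ := max L₂₀ 1 with hL₂def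
  have hL₂1 : (1:ℝ) ≤ L₂ := le_max_right _ _
  have hL₂pos : (0:ℝ) < L₂ := lt_of_lt_of_le one_pos hL₂1
  have hL₂b : ∀ z ∈ K, ‖fderiv ℝ A z‖ ≤ L₂ := fun z hz => (hL₂₀ z hz).trans (le_max_left _ _)
  -- A is L₂-Lipschitz on K
  have hALip : ∀ a ∈ K, ∀ b ∈ K, ‖A b - A a‖ ≤ L₂ * ‖b - a‖ := fun a ha b hb =>
    Convex.norm_image_sub_le_of_norm_hasFDerivWithin_le
      (fun z hz => (hAdiffAt z (hKM hz)).hasFDerivWithinAt)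
      (fun z hz => hL₂b z hz) hKconv ha hb
  -- Taylor estimate
  have hT : ∀ a ∈ K, ∀ b ∈ K, ‖f b - f a - A a (b - a)‖ ≤ L₂ * ‖b - a‖ ^ 2 := by
    intro a ha b hb
    have hseg : segment ℝ a b ⊆ K := hKconv.segment_subset ha hb
    have hsegBall : segment ℝ a b ⊆ closedBall a ‖b - a‖ := by
      apply (convex_closedBall a ‖b - a‖).segment_subset
      · simp
      · simp [mem_closedBall, dist_eq_norm]
    have hder : ∀ z ∈ segment ℝ a b,
        HasFDerivWithinAt (fun z => f z - A a z) (A z - A a) (segment ℝ a b) z := fun z hz =>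
      ((hfdiffAt z (hKM (hseg hz))).sub (A a).hasFDerivAt).hasFDerivWithinAt
    have hbnd : ∀ z ∈ segment ℝ a b, ‖A z - A a‖ ≤ L₂ * ‖b - a‖ := by
      intro z hz
      refine (hALip a ha z (hseg hz)).trans ?_
      have : ‖z - a‖ ≤ ‖b - a‖ := by
        have := hsegBall hz
        rwa [mem_closedBall, dist_eq_norm] at this
      exact mul_le_mul_of_nonneg_left this (le_of_lt hL₂pos)
    have := Convex.norm_image_sub_le_of_norm_hasFDerivWithin_le hder hbnd
      (convex_segment a b) (left_mem_segment ℝ a b) (right_mem_segment ℝ a b)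
    have heq : (f b - A a b) - (f a - A a a) = f b - f a - A a (b - a) := by
      rw [map_sub]; abel
    rw [heq] at this
    refine this.trans ?_
    rw [sq]; ring_nf; exact le_refl _
  -- f is L-Lipschitz on K
  have hfLip : ∀ a ∈ K, ∀ b ∈ K, ‖f b - f a‖ ≤ L * ‖b - a‖ := fun a ha b hb =>
    Convex.norm_image_sub_le_of_norm_hasFDerivWithin_le
      (fun z hz => (hfdiffAt z (hKM hz)).hasFDerivWithinAt)
      (fun z hz => hLb z hz) hKconv ha hb
  have hLnn : ((L.toNNReal : NNReal) : ℝ) = L := Real.coe_toNNReal _ (le_of_lt hLpos)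
  have hLipf : LipschitzOnWith L.toNNReal f K := by
    rw [lipschitzOnWith_iff_dist_le_mul]
    intro a ha b hb
    rw [dist_eq_norm, dist_eq_norm, hLnn]
    exact hfLip b hb a ha
  -- small time: trajectories starting in closedBall x (R/2) stay in closedBall y (R/2)
  set δ₁ := R / (2 * C) with hδ₁def
  have hδ₁pos : 0 < δ₁ := by positivity
  have hMEM : ∀ y ∈ closedBall x (R/2), ∀ t : ℝ, |t| < δ₁ → φ t y ∈ closedBall y (R/2) := by
    intro y hy
    have hyK : y ∈ K := by
      rw [hK, mem_closedBall]
      have := mem_closedBall.1 hy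
      linarith
    have hyM : y ∈ M := hKM hyK
    have hsub : closedBall y (R/2) ⊆ K := by
      intro z hz
      rw [hK, mem_closedBall]
      have h1 := mem_closedBall.1 hz
      have h2 := mem_closedBall.1 hy
      calc dist z x ≤ dist z y + dist y x := dist_triangle z y x
        _ ≤ R/2 + R/2 := add_le_add h1 h2
        _ = R := by ring
    have hpl : IsPicardLindelofOld (fun _ z => f z) (-δ₁) 0 δ₁ y L.toNNReal (R/2) C := by
      refine ⟨?_, by positivity, ?_, ?_, ?_, ?_⟩
      · constructor <;> [linarith; linarith]
      · exact fun t _ => hLipf.mono hsub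
      · exact fun z _ => continuousOn_const
      · exact fun t _ z hz => hCb z (hsub hz)
      · have : max (δ₁ - 0) (0 - -δ₁) = δ₁ := by
          rw [sub_zero, zero_sub, neg_neg, max_self]
        rw [this, hδ₁def]
        have hgoal : C * (R / (2*C)) = R / 2 := by
          field_simp
        exact le_of_eq hgoal
    obtain ⟨α, hα0, hαp⟩ := pl_mem y hpl
    have huniq := ode_uniq hM (hf.of_le one_le_two)
      (u := fun t => φ t y) (w := α) (δ := δ₁)
      (fun t _ => ⟨((hφ y hyM).2 t).1, ((hφ y hyM).2 t).2⟩)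
      (fun t ht => by
        have htIcc : t ∈ Icc (-δ₁) δ₁ := Ioo_subset_Icc_self ht
        refine ⟨hKM (hsub (hαp t htIcc).1), ?_⟩
        exact (hαp t htIcc).2.hasDerivAt (Icc_mem_nhds ht.1 ht.2))
      hδ₁pos
      (by show φ 0 y = α 0; rw [(hφ y hyM).1, hα0])
    intro t ht
    have htIoo : t ∈ Ioo (-δ₁) δ₁ := abs_lt.1 ht
    have heq : φ t y = α t := huniq t htIoo
    rw [heq]
    exact (hαp t (Ioo_subset_Icc_self htIoo)).1
  have hKmem : ∀ y ∈ closedBall x (R/2), ∀ t : ℝ, |t| < δ₁ → φ t y ∈ K := by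
    intro y hy t ht
    have h1 := mem_closedBall.1 (hMEM y hy t ht)
    have h2 := mem_closedBall.1 hy
    rw [hK, mem_closedBall]
    calc dist (φ t y) x ≤ dist (φ t y) y + dist y x := dist_triangle _ _ _
      _ ≤ R/2 + R/2 := add_le_add h1 h2
      _ = R := by ring
  -- speed bound
  have hSPD : ∀ y ∈ closedBall x (R/2), ∀ s : ℝ, |s| < δ₁ → dist (φ s y) y ≤ C * |s| := by
    intro y hy s hs
    have hyM : y ∈ M := hKM (by
      rw [hK, mem_closedBall]; have := mem_closedBall.1 hy; linarith)
    have hJ : Convex ℝ (uIcc (0:ℝ) s) := convex_uIcc _ _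
    have hmemJ : ∀ t ∈ uIcc (0:ℝ) s, |t| < δ₁ := by
      intro t htJ
      have h1 : |t| ≤ |s| := by
        rcases le_or_gt 0 s with h | h
        · rw [uIcc_of_le h] at htJ
          rw [abs_of_nonneg htJ.1, abs_of_nonneg h]; exact htJ.2
        · rw [uIcc_of_ge h.le] at htJ
          rw [abs_of_nonpos htJ.2, abs_of_nonpos h.le]; linarith [htJ.1]
      exact lt_of_le_of_lt h1 hs
    have hmv := Convex.norm_image_sub_le_of_norm_hasDerivWithin_le
      (f := fun t => φ t y) (f' := fun t => f (φ t y)) (C := C)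
      (fun t _ => ((hφ y hyM).2 t).2.hasDerivWithinAt)
      (fun t htJ => hCb _ (hKmem y hy t (hmemJ t htJ)))
      hJ left_mem_uIcc right_mem_uIcc
    rw [dist_eq_norm]
    calc ‖φ s y - y‖ = ‖φ s y - φ 0 y‖ := by rw [(hφ y hyM).1]
      _ ≤ C * ‖s - 0‖ := hmv
      _ = C * |s| := by rw [sub_zero, Real.norm_eq_abs]
  -- construction of the variational solution U
  set δ₂ := min (δ₁/2) (1/(2*L)) with hδ₂def
  have hδ₂pos : 0 < δ₂ := lt_min (by positivity) (by positivity)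
  have hδ₂lt : δ₂ < δ₁ := lt_of_le_of_lt (min_le_left _ _) (by linarith)
  have hδ₂L : 2 * L * δ₂ ≤ 1 := by
    have h1 : δ₂ ≤ 1/(2*L) := min_le_right _ _
    calc 2 * L * δ₂ ≤ 2 * L * (1/(2*L)) := by
          exact mul_le_mul_of_nonneg_left h1 (by positivity)
      _ = 1 := by field_simp
  have hUex : ∀ y ∈ closedBall x (R/2),
      ∃ U : ℝ → EuclideanSpace ℝ (Fin n) →L[ℝ] EuclideanSpace ℝ (Fin n),
        U 0 = ContinuousLinearMap.id ℝ _ ∧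
        ∀ t ∈ Icc (-δ₂) δ₂, ‖U t‖ ≤ 2 ∧
          HasDerivWithinAt U ((A (φ t y)).comp (U t)) (Icc (-δ₂) δ₂) t := by
    intro y hy
    have hyM : y ∈ M := hKM (by
      rw [hK, mem_closedBall]; have := mem_closedBall.1 hy; linarith)
    have hKmemy : ∀ t ∈ Icc (-δ₂) δ₂, φ t y ∈ K := by
      intro t ht
      refine hKmem y hy t ?_
      rw [abs_lt]
      exact ⟨by linarith [ht.1], by linarith [ht.2]⟩
    have hφcont : Continuous (fun t => φ t y) := by
      rw [continuous_iff_continuousAt]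
      exact fun t => ((hφ y hyM).2 t).2.continuousAt
    have hAφ : ContinuousOn (fun t : ℝ => A (φ t y)) (Icc (-δ₂) δ₂) :=
      hAc.comp hφcont.continuousOn (fun t _ => ((hφ y hyM).2 t).1)
    have hnormV : ∀ V : EuclideanSpace ℝ (Fin n) →L[ℝ] EuclideanSpace ℝ (Fin n),
        V ∈ closedBall (ContinuousLinearMap.id ℝ _) 1 → ‖V‖ ≤ 2 := by
      intro V hV
      have h1 : ‖V - ContinuousLinearMap.id ℝ _‖ ≤ 1 := by
        rw [← dist_eq_norm]; exact mem_closedBall.1 hV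
      calc ‖V‖ = ‖V - ContinuousLinearMap.id ℝ _ + ContinuousLinearMap.id ℝ _‖ := by
            rw [sub_add_cancel]
        _ ≤ ‖V - ContinuousLinearMap.id ℝ _‖ + ‖(ContinuousLinearMap.id ℝ
              (EuclideanSpace ℝ (Fin n)))‖ := norm_add_le _ _
        _ ≤ 1 + 1 := add_le_add h1 ContinuousLinearMap.norm_id_le
        _ = 2 := by norm_num
    have hpl : IsPicardLindelofOld (fun t V => (A (φ t y)).comp V) (-δ₂) 0 δ₂
        (ContinuousLinearMap.id ℝ _) L.toNNReal 1 (2*L) := by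
      refine ⟨?_, by norm_num, ?_, ?_, ?_, ?_⟩
      · constructor <;> [linarith; linarith]
      · intro t ht
        rw [lipschitzOnWith_iff_dist_le_mul]
        intro V hV W hW
        rw [dist_eq_norm, dist_eq_norm, hLnn, ← ContinuousLinearMap.comp_sub]
        calc ‖(A (φ t y)).comp (V - W)‖ ≤ ‖A (φ t y)‖ * ‖V - W‖ :=
              ContinuousLinearMap.opNorm_comp_le _ _
          _ ≤ L * ‖V - W‖ := by
              exact mul_le_mul_of_nonneg_right (hLb _ (hKmemy t ht)) (norm_nonneg _)
      · intro V _
        exact (((ContinuousLinearMap.compL ℝ (EuclideanSpace ℝ (Fin n))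
          (EuclideanSpace ℝ (Fin n)) (EuclideanSpace ℝ (Fin n))).flip V).continuous).comp_continuousOn hAφ
      · intro t ht V hV
        calc ‖(A (φ t y)).comp V‖ ≤ ‖A (φ t y)‖ * ‖V‖ := ContinuousLinearMap.opNorm_comp_le _ _
          _ ≤ L * 2 := mul_le_mul (hLb _ (hKmemy t ht)) (hnormV V hV) (norm_nonneg _)
              (le_of_lt hLpos)
          _ = 2 * L := by ring
      · have : max (δ₂ - 0) (0 - -δ₂) = δ₂ := by
          rw [sub_zero, zero_sub, neg_neg, max_self]
        rw [this]
        exact hδ₂L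
    obtain ⟨U, hU0, hUp⟩ := pl_mem _ hpl
    exact ⟨U, hU0, fun t ht => ⟨hnormV _ (hUp t ht).1, (hUp t ht).2⟩⟩
  -- final packaging
  refine ⟨δ₂, hδ₂pos, R/8, by positivity, C, hCpos, ?_, ?_, ?_⟩
  · intro z hz
    refine hKM ?_
    rw [hK, mem_closedBall]
    have := mem_closedBall.1 hz
    linarith
  · intro y hy s hs
    refine hSPD y ?_ s (hs.trans hδ₂lt)
    rw [mem_closedBall]
    have := mem_closedBall.1 hy
    linarith
  · intro y hy
    have hy2 : y ∈ closedBall x (R/2) := by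
      rw [mem_closedBall]; have := mem_closedBall.1 hy; linarith
    have hyM : y ∈ M := hKM (by
      rw [hK, mem_closedBall]; have := mem_closedBall.1 hy; linarith)
    obtain ⟨U, hU0, hUp⟩ := hUex y hy2
    have hUb2 : ∀ t : ℝ, |t| < δ₂ → ‖U t‖ ≤ 2 := fun t ht =>
      (hUp t ⟨by linarith [(abs_lt.1 ht).1], by linarith [(abs_lt.1 ht).2]⟩).1
    have hUd : ∀ t : ℝ, |t| < δ₂ → HasDerivAt U ((A (φ t y)).comp (U t)) t := by
      intro t ht
      have h1 := abs_lt.1 ht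
      exact (hUp t ⟨h1.1.le, h1.2.le⟩).2.hasDerivAt (Icc_mem_nhds h1.1 h1.2)
    refine ⟨U, hU0, fun s hs => ⟨?_, hUd s hs⟩⟩
    -- the hard part : HasFDerivAt (φ s) (U s) y
    have hsabs := abs_lt.1 hs
    have hbd : ∀ v : EuclideanSpace ℝ (Fin n), ‖v‖ ≤ R/8 →
        ‖φ s (y + v) - φ s y - U s v‖ ≤ 4 * L₂ * Real.exp (L * |s|) / L * ‖v‖ ^ 2 := by
      intro v hv
      have hyv2 : y + v ∈ closedBall x (R/2) := by
        rw [mem_closedBall]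
        calc dist (y + v) x ≤ dist (y + v) y + dist y x := dist_triangle _ _ _
          _ ≤ R/8 + R/8 := by
              refine add_le_add ?_ (mem_closedBall.1 hy)
              rw [dist_eq_norm, add_sub_cancel_left]; exact hv
          _ ≤ R/2 := by linarith
      have hyvM : y + v ∈ M := hKM (by
        rw [hK, mem_closedBall]; have := mem_closedBall.1 hyv2; linarith)
      have habs : ∀ t : ℝ, |t| ≤ |s| → |t| < δ₁ := fun t ht =>
        lt_of_le_of_lt ht (hs.trans hδ₂lt)
      have hmemu : ∀ t : ℝ, |t| ≤ |s| → φ t (y + v) ∈ K := fun t ht =>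
        hKmem (y + v) hyv2 t (habs t ht)
      have hmemp : ∀ t : ℝ, |t| ≤ |s| → φ t y ∈ K := fun t ht =>
        hKmem y hy2 t (habs t ht)
      have hmemβ : ∀ t : ℝ, |t| ≤ |s| → φ t y + U t v ∈ K := by
        intro t ht
        have hUtv : ‖U t v‖ ≤ 2 * ‖v‖ := by
          calc ‖U t v‖ ≤ ‖U t‖ * ‖v‖ := (U t).le_opNorm v
            _ ≤ 2 * ‖v‖ := mul_le_mul_of_nonneg_right
                (hUb2 t (lt_of_le_of_lt ht hs)) (norm_nonneg _)
        rw [hK, mem_closedBall]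
        have h1 := mem_closedBall.1 (hMEM y hy2 t (habs t ht))
        have h2 := mem_closedBall.1 hy
        calc dist (φ t y + U t v) x ≤ dist (φ t y + U t v) (φ t y) + dist (φ t y) x :=
              dist_triangle _ _ _
          _ ≤ 2 * ‖v‖ + (dist (φ t y) y + dist y x) := by
              refine add_le_add ?_ (dist_triangle _ _ _)
              rw [dist_eq_norm, add_sub_cancel_left]; exact hUtv
          _ ≤ 2 * (R/8) + (R/2 + R/8) := by
              refine add_le_add (by linarith) (add_le_add h1 h2)
          _ ≤ R := by linarith
      rcases le_or_gt 0 s with hspos | hsneg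
      · -- forward time
        have habs2 : ∀ t, t ∈ Icc 0 s → |t| ≤ |s| := by
          intro t ht
          rw [abs_of_nonneg ht.1, abs_of_nonneg hspos]; exact ht.2
        have hmain := gron_s3 (g := f) (K := K) (Lnn := L.toNNReal) (L₂ := L₂)
          hLipf (by rw [hLnn]; exact hL1) (le_of_lt hL₂pos)
          (fun a ha b hb => hT a ha b hb)
          (u := fun t => φ t (y + v)) (p := fun t => φ t y) (U := U) (v := v) (s₁ := s)
          hspos
          (fun t _ => ((hφ (y+v) hyvM).2 t).2)
          (fun t ht => hmemu t (habs2 t ht))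
          (fun t _ => ((hφ y hyM).2 t).2)
          (fun t ht => hmemp t (habs2 t ht))
          (fun t ht => hUd t (lt_of_le_of_lt (habs2 t ht) hs))
          (fun t ht => hUb2 t (lt_of_le_of_lt (habs2 t ht) hs))
          (fun t ht => hmemβ t (habs2 t ht))
          (by show φ 0 (y + v) = φ 0 y + U 0 v
              rw [(hφ (y+v) hyvM).1, (hφ y hyM).1, hU0]; rfl)
        rw [hLnn] at hmain
        rw [abs_of_nonneg hspos]
        calc ‖φ s (y + v) - φ s y - U s v‖
            = ‖φ s (y + v) - (φ s y + U s v)‖ := by rw [sub_add_eq_sub_sub]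
          _ ≤ 4 * L₂ * Real.exp (L * s) / L * ‖v‖ ^ 2 := hmain
      · -- backward time
        have hLipneg : LipschitzOnWith L.toNNReal (fun z => -f z) K := by
          rw [lipschitzOnWith_iff_dist_le_mul] at hLipf ⊢
          intro a ha b hb
          rw [dist_neg_neg]
          exact hLipf a ha b hb
        have hTneg : ∀ a ∈ K, ∀ b ∈ K,
            ‖(fun z => -f z) b - (fun z => -f z) a
              - fderiv ℝ (fun z => -f z) a (b - a)‖ ≤ L₂ * ‖b - a‖ ^ 2 := by
          intro a ha b hb
          have hfd : fderiv ℝ (fun z => -f z) a = -(A a) := fderiv_neg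
          rw [hfd]
          have heq : (fun z => -f z) b - (fun z => -f z) a - (-(A a)) (b - a)
              = -(f b - f a - A a (b - a)) := by
            simp only [ContinuousLinearMap.neg_apply]
            abel
          rw [heq, norm_neg]
          exact hT a ha b hb
        have habs2 : ∀ t, t ∈ Icc 0 (-s) → |t| ≤ |s| := by
          intro t ht
          rw [abs_of_nonneg ht.1, abs_of_neg hsneg]; exact ht.2
        have hmain := gron_s3 (g := fun z => -f z) (K := K) (Lnn := L.toNNReal) (L₂ := L₂)
          hLipneg (by rw [hLnn]; exact hL1) (le_of_lt hL₂pos) hTneg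
          (u := fun t => φ (-t) (y + v)) (p := fun t => φ (-t) y)
          (U := fun t => U (-t)) (v := v) (s₁ := -s)
          (by linarith)
          (fun t _ => ((flow_rev hφ (y+v) hyvM).2 t).2)
          (fun t ht => hmemu (-t) (by rw [abs_neg]; exact habs2 t ht))
          (fun t _ => ((flow_rev hφ y hyM).2 t).2)
          (fun t ht => hmemp (-t) (by rw [abs_neg]; exact habs2 t ht))
          (fun t ht => by
            have hlt : |(-t)| < δ₂ := by
              rw [abs_neg]; exact lt_of_le_of_lt (habs2 t ht) hs
            have hd := hUd (-t) hlt
            have := hd.scomp t (hasDerivAt_neg t)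
            have hfd : fderiv ℝ (fun z => -f z) (φ (-t) y) = -(A (φ (-t) y)) := fderiv_neg
            simp only [hfd, ContinuousLinearMap.neg_comp, neg_smul, one_smul] at this ⊢
            simpa [Function.comp_def] using this)
          (fun t ht =>
            hUb2 (-t) (by rw [abs_neg]; exact lt_of_le_of_lt (habs2 t ht) hs))
          (fun t ht => hmemβ (-t) (by rw [abs_neg]; exact habs2 t ht))
          (by
            show φ (-0) (y + v) = φ (-0) y + U (-0) v
            rw [neg_zero, (hφ (y+v) hyvM).1, (hφ y hyM).1, hU0]; rfl)
        rw [hLnn] at hmain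
        simp only [neg_neg] at hmain
        rw [abs_of_neg hsneg]
        calc ‖φ s (y + v) - φ s y - U s v‖
            = ‖φ s (y + v) - (φ s y + U s v)‖ := by rw [sub_add_eq_sub_sub]
          _ ≤ 4 * L₂ * Real.exp (L * (-s)) / L * ‖v‖ ^ 2 := hmain
    -- from the quadratic bound to differentiability
    rw [hasFDerivAt_iff_isLittleO_nhds_zero]
    have h1 : (fun v => φ s (y + v) - φ s y - U s v)
        =O[𝓝 0] (fun v : EuclideanSpace ℝ (Fin n) => ‖v‖ * ‖v‖) := by
      rw [Asymptotics.isBigO_iff]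
      refine ⟨4 * L₂ * Real.exp (L * |s|) / L, ?_⟩
      filter_upwards [closedBall_mem_nhds (0 : EuclideanSpace ℝ (Fin n))
        (by positivity : (0:ℝ) < R/8)] with v hv
      have hvn : ‖v‖ ≤ R/8 := by rwa [mem_closedBall, dist_zero_right] at hv
      have := hbd v hvn
      calc ‖φ s (y + v) - φ s y - U s v‖ ≤ 4 * L₂ * Real.exp (L * |s|) / L * ‖v‖ ^ 2 := this
        _ = 4 * L₂ * Real.exp (L * |s|) / L * ‖‖v‖ * ‖v‖‖ := by
            rw [Real.norm_eq_abs, abs_mul, abs_norm, sq]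
    have h2 : (fun v : EuclideanSpace ℝ (Fin n) => ‖v‖ * ‖v‖)
        =o[𝓝 0] (fun v : EuclideanSpace ℝ (Fin n) => v) := by
      rw [Asymptotics.isLittleO_iff]
      intro c hc
      filter_upwards [closedBall_mem_nhds (0 : EuclideanSpace ℝ (Fin n)) hc] with v hv
      have hvn : ‖v‖ ≤ c := by rwa [mem_closedBall, dist_zero_right] at hv
      rw [Real.norm_eq_abs, abs_mul, abs_norm]
      exact mul_le_mul_of_nonneg_right hvn (norm_nonneg _)
    exact h1.trans_isLittleO h2

theorem ring_inverse_of {R : Type*} [Ring R] {a b : R} (h1 : a * b = 1) (h2 : b * a = 1) :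
    Ring.inverse a = b := by
  have : Ring.inverse ((⟨a, b, h1, h2⟩ : Rˣ) : R) = ((⟨a, b, h1, h2⟩ : Rˣ)⁻¹ : Rˣ) :=
    Ring.inverse_unit _
  simpa using this

theorem inv_deriv_aux {R : Type*} [NormedRing R] [NormedAlgebra ℝ R] [CompleteSpace R]
    {U : ℝ → R} {W U' : R} {s : ℝ} (hUd : HasDerivAt U U' s)
    (h1 : U s * W = 1) (h2 : W * U s = 1) :
    HasDerivAt (fun σ => Ring.inverse (U σ)) (-(W * U' * W)) s := by
  have hinv := hasFDerivAt_ringInverse (𝕜 := ℝ) (R := R) ⟨U s, W, h1, h2⟩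
  simp only [Units.inv_mk] at hinv
  have := hinv.comp_hasDerivAt s hUd
  simpa [ContinuousLinearMap.mulLeftRight_apply, Function.comp_def] using this

set_option maxHeartbeats 1000000 in
theorem key_s3 {n : ℕ} {M : Set (EuclideanSpace ℝ (Fin n))} (hM : IsOpen M)
    {f h : EuclideanSpace ℝ (Fin n) → EuclideanSpace ℝ (Fin n)} {φ}
    (hf : ContDiffOn ℝ 2 f M) (hφ : IsFlowOn M f φ)
    (hh : ContDiffOn ℝ 1 h M) {x} (hx : x ∈ M) :
    ∃ δ > (0:ℝ), ∃ ρ > (0:ℝ), closedBall x ρ ⊆ M ∧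
      ∀ y ∈ closedBall x ρ, ∀ s : ℝ, |s| < δ →
        ∃ W : EuclideanSpace ℝ (Fin n) →L[ℝ] EuclideanSpace ℝ (Fin n),
          HasFDerivAt (φ (-s)) W (φ s y) ∧ Function.Injective W ∧
          fderiv ℝ (φ (-s)) (φ s y) = W ∧
          HasDerivAt (fun σ => fderiv ℝ (φ (-σ)) (φ σ y) (h (φ σ y)))
            (W (lieBr f h (φ s y))) s := by
  obtain ⟨δa, hδa, ρa, hρa, Ca, hCa, hρaM, hSPDa, hUa⟩ := loc hM hf hφ hx
  obtain ⟨δb, hδb, ρb, hρb, Cb, hCb, hρbM, hSPDb, hUb⟩ := loc hM hf.neg (flow_rev hφ) hx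
  set δ : ℝ := min δa (min δb (ρb / (2 * Ca))) with hδdef
  have hδpos : 0 < δ := lt_min hδa (lt_min hδb (by positivity))
  have hδa' : δ ≤ δa := min_le_left _ _
  have hδb' : δ ≤ δb := (min_le_right _ _).trans (min_le_left _ _)
  have hδc' : δ ≤ ρb / (2 * Ca) := (min_le_right _ _).trans (min_le_right _ _)
  set ρ : ℝ := min ρa (ρb / 2) with hρdef
  have hρpos : 0 < ρ := lt_min hρa (by positivity)
  refine ⟨δ, hδpos, ρ, hρpos, ?_, ?_⟩
  · intro z hz
    exact hρaM (by
      rw [mem_closedBall] at hz ⊢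
      exact hz.trans (min_le_left _ _))
  intro y hy s hs
  have hya : y ∈ closedBall x ρa := by
    rw [mem_closedBall] at hy ⊢; exact hy.trans (min_le_left _ _)
  have hyM : y ∈ M := hρaM hya
  have htraj : ∀ σ : ℝ, |σ| < δ → φ σ y ∈ closedBall x ρb := by
    intro σ hσ
    have h1 := hSPDa y hya σ (lt_of_lt_of_le hσ hδa')
    rw [mem_closedBall]
    calc dist (φ σ y) x ≤ dist (φ σ y) y + dist y x := dist_triangle _ _ _
      _ ≤ Ca * |σ| + ρ := add_le_add h1 (mem_closedBall.1 hy)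
      _ ≤ Ca * (ρb / (2 * Ca)) + ρb / 2 := by
          refine add_le_add ?_ ((min_le_right _ _))
          exact mul_le_mul_of_nonneg_left (le_of_lt (lt_of_lt_of_le hσ hδc')) (le_of_lt hCa)
      _ = ρb / 2 + ρb / 2 := by
          congr 1
          field_simp
      _ = ρb := by ring
  obtain ⟨U, hU0, hUprop⟩ := hUa y hya
  have hWs : ∀ σ : ℝ, |σ| < δ →
      ∃ W : EuclideanSpace ℝ (Fin n) →L[ℝ] EuclideanSpace ℝ (Fin n),
        HasFDerivAt (φ (-σ)) W (φ σ y) ∧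
        (U σ) * W = 1 ∧ W * (U σ) = 1 := by
    intro σ hσ
    have hz : φ σ y ∈ closedBall x ρb := htraj σ hσ
    have hzM : φ σ y ∈ M := ((hφ y hyM).2 σ).1
    obtain ⟨V, hV0, hVprop⟩ := hUb (φ σ y) hz
    have hW : HasFDerivAt (φ (-σ)) (V σ) (φ σ y) :=
      (hVprop σ (lt_of_lt_of_le hσ hδb')).1
    have hU : HasFDerivAt (φ σ) (U σ) y := (hUprop σ (lt_of_lt_of_le hσ hδa')).1
    refine ⟨V σ, hW, ?_, ?_⟩
    · have hUat : HasFDerivAt (φ σ) (U σ) (φ (-σ) (φ σ y)) := by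
        rw [flow_inv hM (hf.of_le one_le_two) hφ hyM σ]; exact hU
      have hcomp := hUat.comp (φ σ y) hW
      have hev : (fun p => φ σ (φ (-σ) p)) =ᶠ[𝓝 (φ σ y)] id := by
        filter_upwards [hM.mem_nhds hzM] with p hp
        have := flow_inv hM (hf.of_le one_le_two) hφ hp (-σ)
        rw [neg_neg] at this
        exact this
      have hid : HasFDerivAt id ((U σ).comp (V σ)) (φ σ y) :=
        (Filter.EventuallyEq.hasFDerivAt_iff hev).1 hcomp
      rw [ContinuousLinearMap.mul_def, hid.unique (hasFDerivAt_id _)]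
      rfl
    · have hcomp := hW.comp y hU
      have hev : (fun p => φ (-σ) (φ σ p)) =ᶠ[𝓝 y] id := by
        filter_upwards [hM.mem_nhds hyM] with p hp
        exact flow_inv hM (hf.of_le one_le_two) hφ hp σ
      have hid : HasFDerivAt id ((V σ).comp (U σ)) y :=
        (Filter.EventuallyEq.hasFDerivAt_iff hev).1 hcomp
      rw [ContinuousLinearMap.mul_def, hid.unique (hasFDerivAt_id _)]
      rfl
  have hRfacts : ∀ σ : ℝ, |σ| < δ →
      HasFDerivAt (φ (-σ)) (Ring.inverse (U σ)) (φ σ y) ∧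
      fderiv ℝ (φ (-σ)) (φ σ y) = Ring.inverse (U σ) ∧
      (U σ) * (Ring.inverse (U σ)) = 1 ∧ (Ring.inverse (U σ)) * (U σ) = 1 := by
    intro σ hσ
    obtain ⟨W, hW, e1, e2⟩ := hWs σ hσ
    have hval : Ring.inverse (U σ) = W := ring_inverse_of e1 e2
    rw [hval]
    exact ⟨hW, hW.fderiv, e1, e2⟩
  obtain ⟨hWd, hWf, e1, e2⟩ := hRfacts s hs
  set W := Ring.inverse (U s) with hWdef
  set z := φ s y with hzdef
  have hzM : z ∈ M := ((hφ y hyM).2 s).1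
  refine ⟨W, hWd, ?_, hWf, ?_⟩
  · intro a b hab
    have ha := congrFun (congrArg (DFunLike.coe) e1) a
    have hb := congrFun (congrArg (DFunLike.coe) e1) b
    simp only [ContinuousLinearMap.mul_apply, ContinuousLinearMap.one_apply] at ha hb
    rw [← ha, ← hb, hab]
  · have hdU : HasDerivAt U ((fderiv ℝ f z).comp (U s)) s :=
      (hUprop s (lt_of_lt_of_le hs hδa')).2
    have hstep2 := inv_deriv_aux hdU e1 e2
    have hval : -(W * ((fderiv ℝ f z).comp (U s)) * W) = -(W * (fderiv ℝ f z)) := by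
      rw [show (fderiv ℝ f z).comp (U s) = (fderiv ℝ f z) * (U s) from rfl]
      rw [mul_assoc, mul_assoc, e1, mul_one]
    rw [hval] at hstep2
    have hc : HasDerivAt (fun σ => h (φ σ y)) (fderiv ℝ h z (f z)) s := by
      have hhd : HasFDerivAt h (fderiv ℝ h z) z :=
        ((hh.differentiableOn (by norm_num)).differentiableAt (hM.mem_nhds hzM)).hasFDerivAt
      exact hhd.comp_hasDerivAt s ((hφ y hyM).2 s).2
    have hstep4 := hstep2.clm_apply hc
    have hvalue : (-(W * (fderiv ℝ f z))) (h z) + W (fderiv ℝ h z (f z))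
        = W (lieBr f h z) := by
      rw [lieBr]
      simp only [ContinuousLinearMap.neg_apply, ContinuousLinearMap.mul_apply, map_sub]
      abel
    rw [hvalue] at hstep4
    have hev : (fun σ => Ring.inverse (U σ) (h (φ σ y)))
        =ᶠ[𝓝 s] (fun σ => fderiv ℝ (φ (-σ)) (φ σ y) (h (φ σ y))) := by
      have hsIoo : s ∈ Ioo (-δ) δ := abs_lt.1 hs
      filter_upwards [isOpen_Ioo.mem_nhds hsIoo] with σ hσ
      obtain ⟨-, hf2, -, -⟩ := hRfacts σ (abs_lt.2 ⟨hσ.1, hσ.2⟩)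
      rw [hf2]
    exact hstep4.congr_of_eventuallyEq hev.symm

theorem a_const {n : ℕ} {M : Set (EuclideanSpace ℝ (Fin n))} (hM : IsOpen M)
    {f h : EuclideanSpace ℝ (Fin n) → EuclideanSpace ℝ (Fin n)} {φ}
    (hf : ContDiffOn ℝ 2 f M) (hφ : IsFlowOn M f φ)
    (hh : ContDiffOn ℝ 1 h M) (hbr : ∀ z ∈ M, lieBr f h z = 0) {x} (hx : x ∈ M) :
    ∃ δ > (0:ℝ), ∃ ρ > (0:ℝ), closedBall x ρ ⊆ M ∧
      ∀ y ∈ closedBall x ρ, ∀ s : ℝ, |s| < δ →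
        ∃ W : EuclideanSpace ℝ (Fin n) →L[ℝ] EuclideanSpace ℝ (Fin n),
          HasFDerivAt (φ (-s)) W (φ s y) ∧ fderiv ℝ (φ (-s)) (φ s y) = W ∧
          fderiv ℝ (φ (-s)) (φ s y) (h (φ s y)) = h y := by
  obtain ⟨δ, hδ, ρ, hρ, hρM, hkey⟩ := key_s3 hM hf hφ hh hx
  refine ⟨δ, hδ, ρ, hρ, hρM, ?_⟩
  intro y hy s hs
  have hyM : y ∈ M := hρM hy
  set a : ℝ → EuclideanSpace ℝ (Fin n) :=
    fun σ => fderiv ℝ (φ (-σ)) (φ σ y) (h (φ σ y)) with hadef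
  have hd : ∀ σ ∈ Ioo (-δ) δ, HasDerivWithinAt a 0 (Ioo (-δ) δ) σ := by
    intro σ hσ
    obtain ⟨W, hWd, hWinj, hWf, hWder⟩ := hkey y hy σ (abs_lt.2 ⟨hσ.1, hσ.2⟩)
    have hmem : φ σ y ∈ M := ((hφ y hyM).2 σ).1
    rw [hbr _ hmem, map_zero] at hWder
    exact hWder.hasDerivWithinAt
  have h0mem : (0:ℝ) ∈ Ioo (-δ) δ := by constructor <;> simpa using hδ
  have hsmem : s ∈ Ioo (-δ) δ := abs_lt.1 hs
  have hconst := Convex.norm_image_sub_le_of_norm_hasDerivWithin_le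
    (f := a) (f' := fun _ => (0 : EuclideanSpace ℝ (Fin n))) (C := 0)
    hd (fun _ _ => by simp) (convex_Ioo _ _) h0mem hsmem
  rw [zero_mul] at hconst
  have haeq : a s = a 0 := by
    have := le_antisymm hconst (norm_nonneg _)
    rwa [norm_eq_zero, sub_eq_zero] at this
  have ha0 : a 0 = h y := by
    rw [hadef]
    simp only [neg_zero]
    have hev : φ 0 =ᶠ[𝓝 y] id := by
      filter_upwards [hM.mem_nhds hyM] with p hp
      exact (hφ p hp).1
    rw [(hφ y hyM).1, hev.fderiv_eq, fderiv_id]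
    simp
  obtain ⟨W, hWd, hWinj, hWf, hWder⟩ := hkey y hy s hs
  exact ⟨W, hWd, hWf, by rw [show fderiv ℝ (φ (-s)) (φ s y) (h (φ s y)) = a s from rfl,
    haeq, ha0]⟩


theorem stmt3 {n : ℕ} (M : Set (EuclideanSpace ℝ (Fin n))) (hM : IsOpen M)
    (f₁ f₂ : EuclideanSpace ℝ (Fin n) → EuclideanSpace ℝ (Fin n))
    (hf₁ : ContDiffOn ℝ 2 f₁ M) (hf₂ : ContDiffOn ℝ 2 f₂ M)
    (φ₁ φ₂ : ℝ → EuclideanSpace ℝ (Fin n) → EuclideanSpace ℝ (Fin n))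
    (hφ₁ : IsFlowOn M f₁ φ₁) (hφ₂ : IsFlowOn M f₂ φ₂) :
    (∀ x ∈ M, ∃ δ > (0 : ℝ), ∀ s₁ s₂ : ℝ, |s₁| ≤ δ → |s₂| ≤ δ →
        AdC (fun y => φ₁ s₁ (φ₂ s₂ y)) (fun z => φ₂ (-s₂) (φ₁ (-s₁) z))
            (lieBr f₁ f₂) x = lieBr f₁ f₂ x)
      ↔ (∀ x ∈ M, lieBr f₁ (lieBr f₁ f₂) x = 0 ∧ lieBr f₂ (lieBr f₁ f₂) x = 0) := by
  have hh : ContDiffOn ℝ 1 (lieBr f₁ f₂) M := by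
    have h1 : ContDiffOn ℝ 1 (fun z => fderiv ℝ f₂ z (f₁ z)) M :=
      (hf₂.fderiv_of_isOpen hM (by norm_num)).clm_apply (hf₁.of_le one_le_two)
    have h2 : ContDiffOn ℝ 1 (fun z => fderiv ℝ f₁ z (f₂ z)) M :=
      (hf₁.fderiv_of_isOpen hM (by norm_num)).clm_apply (hf₂.of_le one_le_two)
    exact h1.sub h2
  constructor
  · -- forward direction
    intro hyp x hx
    obtain ⟨δ₀, hδ₀, hid⟩ := hyp x hx
    constructor
    · -- [f₁,[f₁,f₂]] = 0
      obtain ⟨δ, hδ, ρ, hρ, hρM, hkey⟩ := key_s3 hM hf₁ hφ₁ hh hx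
      obtain ⟨W, hWd, hWinj, hWf, hWder⟩ :=
        hkey x (mem_closedBall_self (le_of_lt hρ)) 0 (by simpa using hδ)
      have hev : (fun σ => fderiv ℝ (φ₁ (-σ)) (φ₁ σ x) (lieBr f₁ f₂ (φ₁ σ x)))
          =ᶠ[𝓝 (0:ℝ)] (fun _ => lieBr f₁ f₂ x) := by
        filter_upwards [Metric.closedBall_mem_nhds (0:ℝ) hδ₀] with σ hσ
        have hσδ : |σ| ≤ δ₀ := by rwa [mem_closedBall, dist_zero_right, Real.norm_eq_abs] at hσ
        have hAd := hid σ 0 hσδ (by simpa using le_of_lt hδ₀)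
        rw [AdC] at hAd
        have hΦx : φ₁ σ (φ₂ 0 x) = φ₁ σ x := by rw [(hφ₂ x hx).1]
        have hevi : (fun z => φ₂ (-0) (φ₁ (-σ) z)) =ᶠ[𝓝 (φ₁ σ x)] (φ₁ (-σ)) := by
          have hmem : φ₁ σ x ∈ M := ((hφ₁ x hx).2 σ).1
          filter_upwards [hM.mem_nhds hmem] with p hp
          have hp2 : φ₁ (-σ) p ∈ M := ((hφ₁ p hp).2 (-σ)).1
          simp only [neg_zero]
          exact (hφ₂ _ hp2).1
        rw [hΦx] at hAd
        rw [hevi.fderiv_eq] at hAd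
        exact hAd
      have hconst : HasDerivAt (fun _ : ℝ => lieBr f₁ f₂ x)
          (W (lieBr f₁ (lieBr f₁ f₂) (φ₁ 0 x))) 0 :=
        hWder.congr_of_eventuallyEq hev.symm
      have hzero := hconst.unique (hasDerivAt_const 0 _)
      rw [(hφ₁ x hx).1] at hzero
      have : W (lieBr f₁ (lieBr f₁ f₂) x) = W 0 := by rw [hzero, map_zero]
      exact hWinj this
    · -- [f₂,[f₁,f₂]] = 0
      obtain ⟨δ, hδ, ρ, hρ, hρM, hkey⟩ := key_s3 hM hf₂ hφ₂ hh hx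
      obtain ⟨W, hWd, hWinj, hWf, hWder⟩ :=
        hkey x (mem_closedBall_self (le_of_lt hρ)) 0 (by simpa using hδ)
      have hev : (fun σ => fderiv ℝ (φ₂ (-σ)) (φ₂ σ x) (lieBr f₁ f₂ (φ₂ σ x)))
          =ᶠ[𝓝 (0:ℝ)] (fun _ => lieBr f₁ f₂ x) := by
        filter_upwards [Metric.closedBall_mem_nhds (0:ℝ) hδ₀] with σ hσ
        have hσδ : |σ| ≤ δ₀ := by rwa [mem_closedBall, dist_zero_right, Real.norm_eq_abs] at hσ
        have hAd := hid 0 σ (by simpa using le_of_lt hδ₀) hσδ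
        rw [AdC] at hAd
        have hmem2 : φ₂ σ x ∈ M := ((hφ₂ x hx).2 σ).1
        have hΦx : φ₁ 0 (φ₂ σ x) = φ₂ σ x := (hφ₁ _ hmem2).1
        have hevi : (fun z => φ₂ (-σ) (φ₁ (-0) z)) =ᶠ[𝓝 (φ₂ σ x)] (φ₂ (-σ)) := by
          filter_upwards [hM.mem_nhds hmem2] with p hp
          simp only [neg_zero]
          rw [(hφ₁ p hp).1]
        rw [hΦx] at hAd
        rw [hevi.fderiv_eq] at hAd
        exact hAd
      have hconst : HasDerivAt (fun _ : ℝ => lieBr f₁ f₂ x)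
          (W (lieBr f₂ (lieBr f₁ f₂) (φ₂ 0 x))) 0 :=
        hWder.congr_of_eventuallyEq hev.symm
      have hzero := hconst.unique (hasDerivAt_const 0 _)
      rw [(hφ₂ x hx).1] at hzero
      have : W (lieBr f₂ (lieBr f₁ f₂) x) = W 0 := by rw [hzero, map_zero]
      exact hWinj this
  · -- backward direction
    intro hbr x hx
    obtain ⟨δ₁, hδ₁, ρ₁, hρ₁, hρ₁M, hconst₁⟩ :=
      a_const hM hf₁ hφ₁ hh (fun z hz => (hbr z hz).1) hx
    obtain ⟨δ₂, hδ₂, ρ₂, hρ₂, hρ₂M, hconst₂⟩ :=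
      a_const hM hf₂ hφ₂ hh (fun z hz => (hbr z hz).2) hx
    -- continuity of σ ↦ φ₂ σ x at 0 to keep φ₂ s₂ x in the ball around x
    have hcont : ContinuousAt (fun σ => φ₂ σ x) 0 := ((hφ₂ x hx).2 0).2.continuousAt
    obtain ⟨d, hd, hdball⟩ := Metric.continuousAt_iff.1 hcont ρ₁ hρ₁
    set δF : ℝ := min (min δ₁ δ₂) d / 2 with hδFdef
    have hδFpos : 0 < δF := by positivity
    have hδF₁ : δF < δ₁ := by
      have h1 : δF < min (min δ₁ δ₂) d := by
        rw [hδFdef]; exact half_lt_self (by positivity)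
      calc δF < min (min δ₁ δ₂) d := h1
        _ ≤ δ₁ := ((min_le_left _ _).trans (min_le_left _ _))
    have hδF₂ : δF < δ₂ := by
      have h1 : δF < min (min δ₁ δ₂) d := by
        rw [hδFdef]; exact half_lt_self (by positivity)
      calc δF < min (min δ₁ δ₂) d := h1
        _ ≤ δ₂ := ((min_le_left _ _).trans (min_le_right _ _))
    have hδFd : δF < d := by
      have h1 : δF < min (min δ₁ δ₂) d := by
        rw [hδFdef]; exact half_lt_self (by positivity)
      exact lt_of_lt_of_le h1 (min_le_right _ _)
    refine ⟨δF, hδFpos, ?_⟩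
    intro s₁ s₂ hs₁ hs₂
    have hs₁' : |s₁| < δ₁ := lt_of_le_of_lt hs₁ hδF₁
    have hs₂' : |s₂| < δ₂ := lt_of_le_of_lt hs₂ hδF₂
    set x₂ := φ₂ s₂ x with hx₂def
    have hx₂M : x₂ ∈ M := ((hφ₂ x hx).2 s₂).1
    have hx₂ball : x₂ ∈ closedBall x ρ₁ := by
      rw [mem_closedBall]
      have := hdball (show dist s₂ 0 < d by
        rw [Real.dist_eq, sub_zero]; exact lt_of_le_of_lt hs₂ hδFd)
      rw [(hφ₂ x hx).1] at this
      exact le_of_lt this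
    obtain ⟨W₁, hW₁d, hW₁f, hW₁c⟩ := hconst₁ x₂ hx₂ball s₁ hs₁'
    obtain ⟨W₂, hW₂d, hW₂f, hW₂c⟩ := hconst₂ x (mem_closedBall_self (le_of_lt hρ₂)) s₂ hs₂'
    -- chain rule for Φinv at Φ x
    have hΦx : φ₁ s₁ (φ₂ s₂ x) = φ₁ s₁ x₂ := rfl
    have hW₂at : HasFDerivAt (φ₂ (-s₂)) W₂ (φ₁ (-s₁) (φ₁ s₁ x₂)) := by
      rw [flow_inv hM (hf₁.of_le one_le_two) hφ₁ hx₂M s₁]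
      exact hW₂d
    have hchain := hW₂at.comp (φ₁ s₁ x₂) hW₁d
    have hAdval : AdC (fun y => φ₁ s₁ (φ₂ s₂ y)) (fun z => φ₂ (-s₂) (φ₁ (-s₁) z))
        (lieBr f₁ f₂) x = (W₂.comp W₁) (lieBr f₁ f₂ (φ₁ s₁ x₂)) := by
      have hchain' : HasFDerivAt (fun z => φ₂ (-s₂) (φ₁ (-s₁) z)) (W₂.comp W₁)
          (φ₁ s₁ x₂) := hchain
      rw [AdC]
      rw [show φ₂ s₂ x = x₂ from rfl]
      rw [hchain'.fderiv]
    rw [hAdval]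
    rw [ContinuousLinearMap.comp_apply]
    have hstep1 : W₁ (lieBr f₁ f₂ (φ₁ s₁ x₂)) = lieBr f₁ f₂ x₂ := by
      rw [← hW₁f]; exact hW₁c
    rw [hstep1]
    have hstep2 : W₂ (lieBr f₁ f₂ x₂) = lieBr f₁ f₂ x := by
      rw [← hW₂f]; exact hW₂c
    rw [hstep2]
end

section
/- There exist C^∞ vector fields f₁, f₂, f₃ on ℝ² (namely the linear fields with matrices A₁ = [[0,0],[1,0]], A₂ = [[0,1],[0,0]], A₃ = [[1,0],[0,0]]) such that the iterated Lie bracket [[f₁,f₂],f₃] vanishes identically, yet the multiflow Ψ(t₁,t₂,t₃) := Ψ₀(t₁,t₂) e^{t₃f₃} Ψ₀(t₁,t₂)⁻¹ e^{-t₃f₃}, where Ψ₀(t₁,t₂) = e^{t₁f₁}e^{t₂f₂}e^{-t₁f₁}e^{-t₂f₂}, is not the identity map for some (t₁,t₂,t₃). -/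
open NormedSpace

lemma exp_sq_zero (A : Matrix (Fin 2) (Fin 2) ℝ) (h : A * A = 0) :
    exp A = 1 + A := by
  rw [exp_eq_tsum ℝ]
  show (∑' n : ℕ, (n.factorial : ℝ)⁻¹ • A ^ n) = 1 + A
  have hz : ∀ n ∉ Finset.range 2, (n.factorial : ℝ)⁻¹ • A ^ n = 0 := by
    intro n hn
    simp only [Finset.mem_range, not_lt] at hn
    obtain ⟨k, rfl⟩ : ∃ k, n = 2 + k := ⟨n - 2, by omega⟩
    rw [pow_add, pow_two, h, zero_mul, smul_zero]
  rw [tsum_eq_sum hz]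
  simp [Finset.sum_range_succ]

theorem stmt16 :
    ∃ A₁ A₂ A₃ : Matrix (Fin 2) (Fin 2) ℝ,
      A₁ = !![0, 0; 1, 0] ∧ A₂ = !![0, 1; 0, 0] ∧ A₃ = !![1, 0; 0, 0] ∧
      -- the iterated Lie bracket [[f₁,f₂],f₃] vanishes identically:
      (A₁ * A₂ - A₂ * A₁) * A₃ - A₃ * (A₁ * A₂ - A₂ * A₁) = 0 ∧
      -- yet the multiflow Ψ₀ e^{t₃f₃} Ψ₀⁻¹ e^{-t₃f₃} is not the identity map
      -- (flows act on the left: the matrix of Ψ₀ = e^{t₁f₁}e^{t₂f₂}e^{-t₁f₁}e^{-t₂f₂}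
      -- is P₀ = e^{-t₂A₂}e^{-t₁A₁}e^{t₂A₂}e^{t₁A₁}, and its inverse is
      -- P₀' = e^{-t₁A₁}e^{-t₂A₂}e^{t₁A₁}e^{t₂A₂}):
      ∃ (t₁ t₂ t₃ : ℝ) (v : Fin 2 → ℝ),
        (exp ((-t₃) • A₃) *
            (exp ((-t₁) • A₁) * exp ((-t₂) • A₂) * exp (t₁ • A₁) * exp (t₂ • A₂)) *
            exp (t₃ • A₃) *
            (exp ((-t₂) • A₂) * exp ((-t₁) • A₁) * exp (t₂ • A₂) * exp (t₁ • A₁))).mulVec v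
          ≠ v := by
  refine ⟨!![0, 0; 1, 0], !![0, 1; 0, 0], !![1, 0; 0, 0], rfl, rfl, rfl, by ext i j; fin_cases i <;> fin_cases j <;> norm_num [Matrix.mul_fin_two], ?_⟩
  refine ⟨1, 1, 1, ![1, 0], ?_⟩
  have h1 : exp ((1 : ℝ) • !![0, 0; 1, 0]) = !![(1:ℝ), 0; 1, 1] := by
    rw [exp_sq_zero _ (by ext i j; fin_cases i <;> fin_cases j <;> norm_num [Matrix.mul_fin_two])]
    ext i j; fin_cases i <;> fin_cases j <;> norm_num [Matrix.one_fin_two]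
  have h1' : exp ((-1 : ℝ) • !![0, 0; 1, 0]) = !![(1:ℝ), 0; -1, 1] := by
    rw [exp_sq_zero _ (by ext i j; fin_cases i <;> fin_cases j <;> norm_num [Matrix.mul_fin_two])]
    ext i j; fin_cases i <;> fin_cases j <;> norm_num [Matrix.one_fin_two]
  have h2 : exp ((1 : ℝ) • !![0, 1; 0, 0]) = !![(1:ℝ), 1; 0, 1] := by
    rw [exp_sq_zero _ (by ext i j; fin_cases i <;> fin_cases j <;> norm_num [Matrix.mul_fin_two])]
    ext i j; fin_cases i <;> fin_cases j <;> norm_num [Matrix.one_fin_two]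
  have h2' : exp ((-1 : ℝ) • !![0, 1; 0, 0]) = !![(1:ℝ), -1; 0, 1] := by
    rw [exp_sq_zero _ (by ext i j; fin_cases i <;> fin_cases j <;> norm_num [Matrix.mul_fin_two])]
    ext i j; fin_cases i <;> fin_cases j <;> norm_num [Matrix.one_fin_two]
  have hd : ∀ t : ℝ, exp (t • !![(1:ℝ), 0; 0, 0]) = !![Real.exp t, 0; 0, 1] := by
    intro t
    have : t • !![(1:ℝ), 0; 0, 0] = Matrix.diagonal ![t, 0] := by
      ext i j; fin_cases i <;> fin_cases j <;> simp [Matrix.diagonal]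
    rw [this, Matrix.exp_diagonal, Pi.exp_def]
    ext i j
    fin_cases i <;> fin_cases j <;>
      simp [Matrix.diagonal, ← Real.exp_eq_exp_ℝ]
  rw [h1, h1', h2, h2', hd, hd]
  have he : Real.exp (-1) ≠ 1 := by
    intro h
    have := Real.exp_lt_one_iff.mpr (by norm_num : (-1:ℝ) < 0)
    linarith
  intro h
  have h0 := congrFun h 0
  simp [Matrix.mul_fin_two, Matrix.mulVec, dotProduct, Fin.sum_univ_two] at h0
end

section
/- Let f₁, f₂, f₃ be smooth vector fields on an open set M ⊆ ℝⁿ and suppose [f₁,[f₁,f₂]] ≡ 0 and [f₂,[f₁,f₂]] ≡ 0 on M. Then for all sufficiently small (t₁,s₃,s₁,s₂), the degree-3 integrating bracket satisfies [[f₁,f₂],f₃]^{(t₁,s₃,s₁,s₂)} = Ad_{exp(s₃f₃)∘Ψ(t₁,s₂)}[[f₁,f₂],f₃], where Ψ(t₁,s₂) = exp(t₁f₁)exp(s₂f₂)exp(-t₁f₁)exp(-s₂f₂). -/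
open Set Metric Real Filter Topology
open scoped NNReal

variable {E : Type*} [NormedAddCommGroup E] [NormedSpace ℝ E]

/-- An integral curve of `f` staying in `M`. -/
def IsCurve (M : Set E) (f : E → E) (α : ℝ → E) : Prop :=
  ∀ t, α t ∈ M ∧ HasDerivAt α (f (α t)) t

lemma curve_uniq {M : Set E} (hM : IsOpen M) {f : E → E} (hf : ContDiffOn ℝ 1 f M)
    {α β : ℝ → E} (hα : IsCurve M f α) (hβ : IsCurve M f β) {t₀ : ℝ}
    (h0 : α t₀ = β t₀) : α = β := by
  have hαc : Continuous α := continuous_iff_continuousAt.2 fun t => (hα t).2.continuousAt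
  have hβc : Continuous β := continuous_iff_continuousAt.2 fun t => (hβ t).2.continuousAt
  have hSclosed : IsClosed {t | α t = β t} := isClosed_eq hαc hβc
  have hSopen : IsOpen {t | α t = β t} := by
    rw [isOpen_iff_mem_nhds]
    intro t' ht'
    have heq : α t' = β t' := ht'
    have hpM : α t' ∈ M := (hα t').1
    obtain ⟨K, s, hs, hlip⟩ :=
      (hf.contDiffAt (hM.mem_nhds hpM)).exists_lipschitzOnWith
    have hαs : ∀ᶠ t in 𝓝 t', HasDerivAt α (f (α t)) t ∧ α t ∈ s := by
      filter_upwards [(hα t').2.continuousAt.preimage_mem_nhds hs] with t ht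
      exact ⟨(hα t).2, ht⟩
    have hs' : s ∈ 𝓝 (β t') := heq ▸ hs
    have hβs : ∀ᶠ t in 𝓝 t', HasDerivAt β (f (β t)) t ∧ β t ∈ s := by
      filter_upwards [(hβ t').2.continuousAt.preimage_mem_nhds hs'] with t ht
      exact ⟨(hβ t).2, ht⟩
    exact ODE_solution_unique_of_eventually (v := fun _ => f) (s := fun _ => s)
      (Filter.Eventually.of_forall fun _ => hlip) hαs hβs heq
  have : {t | α t = β t} = univ := IsClopen.eq_univ ⟨hSclosed, hSopen⟩ ⟨t₀, h0⟩
  funext t; exact (Set.eq_univ_iff_forall.mp this) t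

/-- abstract version of IsFlowOn -/
def FlowOn (M : Set E) (f : E → E) (φ : ℝ → E → E) : Prop :=
  ∀ x ∈ M, φ 0 x = x ∧ ∀ t : ℝ, φ t x ∈ M ∧ HasDerivAt (fun s => φ s x) (f (φ t x)) t

namespace FlowOn
variable {M : Set E} {f : E → E} {φ : ℝ → E → E}

lemma mem (hφ : FlowOn M f φ) {x : E} (hx : x ∈ M) (t : ℝ) : φ t x ∈ M :=
  ((hφ x hx).2 t).1

lemma curve (hφ : FlowOn M f φ) {x : E} (hx : x ∈ M) :
    IsCurve M f (fun t => φ t x) :=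
  fun t => (hφ x hx).2 t

lemma shift_curve (hφ : FlowOn M f φ) {x : E} (hx : x ∈ M) (b : ℝ) :
    IsCurve M f (fun t => φ (t + b) x) := by
  intro t
  refine ⟨hφ.mem hx _, ?_⟩
  have h1 := ((hφ x hx).2 (t + b)).2
  have h2 : HasDerivAt (fun s : ℝ => s + b) 1 t := (hasDerivAt_id t).add_const b
  simpa [Function.comp_def] using h1.scomp t h2

lemma add (hM : IsOpen M) (hf : ContDiffOn ℝ 1 f M) (hφ : FlowOn M f φ)
    {x : E} (hx : x ∈ M) (a b : ℝ) : φ (a + b) x = φ a (φ b x) := by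
  have h := curve_uniq hM hf (hφ.shift_curve hx b) (hφ.curve (hφ.mem hx b)) (t₀ := 0)
    (by simpa using (hφ _ (hφ.mem hx b)).1.symm)
  exact congrFun h a

lemma inv (hM : IsOpen M) (hf : ContDiffOn ℝ 1 f M) (hφ : FlowOn M f φ)
    {x : E} (hx : x ∈ M) (s : ℝ) : φ (-s) (φ s x) = x := by
  have := hφ.add hM hf hx (-s) s
  simpa [(hφ x hx).1] using this.symm

/-- time-reversed flow -/
lemma neg (hφ : FlowOn M f φ) : FlowOn M (-f) (fun t x => φ (-t) x) := by
  intro x hx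
  refine ⟨by simpa using (hφ x hx).1, fun t => ⟨hφ.mem hx _, ?_⟩⟩
  have h1 := ((hφ x hx).2 (-t)).2
  have h2 : HasDerivAt (fun s : ℝ => -s) (-1) t := (hasDerivAt_id t).neg
  have := h1.scomp t h2
  simpa [Function.comp_def] using this

end FlowOn

lemma gronwallBound_le_simple (K : NNReal) (ε t : ℝ) (ht : 0 ≤ t) (hε : 0 ≤ ε) :
    gronwallBound 0 K ε t ≤ ε * t * Real.exp (K * t) := by
  unfold gronwallBound
  split_ifs with hK
  · simp [hK]
  · have hK0 : (0:ℝ) < K := lt_of_le_of_ne K.coe_nonneg (Ne.symm hK)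
    have key : Real.exp ((K:ℝ)*t) - 1 ≤ ((K:ℝ)*t) * Real.exp ((K:ℝ)*t) := by
      have h := mul_le_mul_of_nonneg_left
        (Real.add_one_le_exp (-((K:ℝ)*t))) (Real.exp_pos ((K:ℝ)*t)).le
      rw [← Real.exp_add] at h
      simp only [add_neg_cancel, Real.exp_zero] at h
      nlinarith
    have h2 := mul_le_mul_of_nonneg_left key (div_nonneg hε hK0.le)
    rw [zero_mul, zero_add]
    calc ε / K * (Real.exp ((K:ℝ)*t) - 1) ≤ ε/(K:ℝ) * (((K:ℝ)*t)*Real.exp ((K:ℝ)*t)) := h2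
      _ = ε * t * Real.exp ((K:ℝ)*t) := by field_simp

variable [CompleteSpace E]

set_option maxHeartbeats 1000000 in
lemma loc_onesided {M : Set E} (hM : IsOpen M) {f g : E → E}
    (hf : ContDiffOn ℝ 2 f M) {φ : ℝ → E → E} (hφ : FlowOn M f φ)
    (hgd : ∀ x ∈ M, DifferentiableAt ℝ g x)
    (hcomm : ∀ x ∈ M, fderiv ℝ g x (f x) = fderiv ℝ f x (g x))
    {q : E} (hq : q ∈ M) :
    ∃ r > (0:ℝ), ∃ T > (0:ℝ), ball q r ⊆ M ∧ ∀ w ∈ ball q r, ∀ t ∈ Icc (0:ℝ) T,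
      ∃ L : E →L[ℝ] E, HasFDerivAt (φ t) L w ∧ L (g w) = g (φ t w) := by
  -- Lipschitz constants for `f` and `fderiv f` near `q`
  obtain ⟨K, s₀, hs₀, hlipf0⟩ :=
    ((hf.contDiffAt (hM.mem_nhds hq)).of_le one_le_two).exists_lipschitzOnWith
  have hDf : ContDiffOn ℝ 1 (fderiv ℝ f) M := hf.fderiv_of_isOpen hM le_rfl
  obtain ⟨K₂, s₂, hs₂, hlipDf0⟩ :=
    (hDf.contDiffAt (hM.mem_nhds hq)).exists_lipschitzOnWith
  -- radius ρ
  obtain ⟨ε, hε, hball⟩ := Metric.mem_nhds_iff.mp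
    (Filter.inter_mem (Filter.inter_mem (hM.mem_nhds hq) hs₀) hs₂)
  set ρ : ℝ := ε / 4 with hρdef
  have hρ : 0 < ρ := by positivity
  have hB3 : closedBall q (3 * ρ) ⊆ M ∩ s₀ ∩ s₂ := by
    refine subset_trans ?_ hball
    intro y hy
    have : dist y q ≤ 3 * ρ := mem_closedBall.mp hy
    exact mem_ball.mpr (lt_of_le_of_lt this (by rw [hρdef]; linarith))
  have hB3M : closedBall q (3 * ρ) ⊆ M := fun y hy => ((hB3 hy).1).1
  have hlipf : LipschitzOnWith K f (closedBall q (3 * ρ)) :=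
    hlipf0.mono fun y hy => (hB3 hy).1.2
  have hlipDf : LipschitzOnWith K₂ (fderiv ℝ f) (closedBall q (3 * ρ)) :=
    hlipDf0.mono fun y hy => (hB3 hy).2
  -- bounds
  set Cb : ℝ := ‖f q‖ + K * (3 * ρ) with hCbdef
  have hCb0 : 0 ≤ Cb := by positivity
  have hfb : ∀ x ∈ closedBall q (3 * ρ), ‖f x‖ ≤ Cb := by
    intro x hx
    calc ‖f x‖ ≤ ‖f x - f q‖ + ‖f q‖ := by
          simpa using norm_add_le (f x - f q) (f q)
      _ ≤ K * dist x q + ‖f q‖ := by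
          have := hlipf.dist_le_mul x hx q (mem_closedBall_self (by positivity))
          rw [dist_eq_norm] at this; linarith
      _ ≤ Cb := by
          have : dist x q ≤ 3 * ρ := mem_closedBall.mp hx
          have hK : (0:ℝ) ≤ K := K.coe_nonneg
          rw [hCbdef]; nlinarith
  set Kd : ℝ := ‖fderiv ℝ f q‖ + K₂ * (3 * ρ) with hKddef
  have hKd0 : 0 ≤ Kd := by positivity
  have hKdb : ∀ x ∈ closedBall q (3 * ρ), ‖fderiv ℝ f x‖ ≤ Kd := by
    intro x hx
    calc ‖fderiv ℝ f x‖ ≤ ‖fderiv ℝ f x - fderiv ℝ f q‖ + ‖fderiv ℝ f q‖ := by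
          simpa using norm_add_le (fderiv ℝ f x - fderiv ℝ f q) (fderiv ℝ f q)
      _ ≤ K₂ * dist x q + ‖fderiv ℝ f q‖ := by
          have := hlipDf.dist_le_mul x hx q (mem_closedBall_self (by positivity))
          rw [dist_eq_norm] at this; linarith
      _ ≤ Kd := by
          have : dist x q ≤ 3 * ρ := mem_closedBall.mp hx
          have hK : (0:ℝ) ≤ K₂ := K₂.coe_nonneg
          rw [hKddef]; nlinarith
  -- Taylor estimate
  have htay : ∀ a ∈ closedBall q (2*ρ), ∀ b ∈ closedBall q (2*ρ),
      ‖f b - f a - fderiv ℝ f a (b - a)‖ ≤ K₂ * ‖b - a‖ ^ 2 := by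
    intro a ha b hb
    have hsub3 : closedBall q (2*ρ) ⊆ closedBall q (3*ρ) :=
      closedBall_subset_closedBall (by linarith)
    have hseg : segment ℝ a b ⊆ closedBall q (2*ρ) :=
      (convex_closedBall q (2*ρ)).segment_subset ha hb
    have hdf : ∀ u ∈ segment ℝ a b, HasFDerivWithinAt (fun u => f u - fderiv ℝ f a u)
        (fderiv ℝ f u - fderiv ℝ f a) (segment ℝ a b) u := by
      intro u hu
      have huM : u ∈ M := hB3M (hsub3 (hseg hu))
      have h1 : HasFDerivAt f (fderiv ℝ f u) u :=
        ((hf.differentiableOn two_ne_zero).differentiableAt (hM.mem_nhds huM)).hasFDerivAt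
      exact (h1.sub ((fderiv ℝ f a).hasFDerivAt)).hasFDerivWithinAt
    have hbd : ∀ u ∈ segment ℝ a b, ‖fderiv ℝ f u - fderiv ℝ f a‖ ≤ K₂ * ‖b - a‖ := by
      intro u hu
      have h1 : dist (fderiv ℝ f u) (fderiv ℝ f a) ≤ K₂ * dist u a :=
        hlipDf.dist_le_mul u (hsub3 (hseg hu)) a (hsub3 ha)
      have h2 : dist u a ≤ ‖b - a‖ := by
        obtain ⟨σ, τ, hσ, hτ, hsum, rfl⟩ := hu
        have hστ : σ = 1 - τ := by linarith
        have he : σ • a + τ • b - a = τ • (b - a) := by rw [hστ]; module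
        rw [dist_eq_norm, he, norm_smul]
        have hτ1 : τ ≤ 1 := by linarith
        have : ‖τ‖ ≤ 1 := by rw [Real.norm_eq_abs, abs_of_nonneg hτ]; exact hτ1
        nlinarith [norm_nonneg (b - a)]
      rw [dist_eq_norm] at h1
      calc ‖fderiv ℝ f u - fderiv ℝ f a‖ ≤ K₂ * dist u a := h1
        _ ≤ K₂ * ‖b - a‖ := mul_le_mul_of_nonneg_left h2 K₂.coe_nonneg
    have hmain := (convex_segment a b).norm_image_sub_le_of_norm_hasFDerivWithin_le hdf hbd
        (left_mem_segment ℝ a b) (right_mem_segment ℝ a b)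
    calc ‖f b - f a - fderiv ℝ f a (b - a)‖
        = ‖(f b - fderiv ℝ f a b) - (f a - fderiv ℝ f a a)‖ := by
          rw [map_sub]; congr 1; abel
      _ ≤ K₂ * ‖b - a‖ * ‖b - a‖ := hmain
      _ = K₂ * ‖b - a‖ ^ 2 := by ring
  -- time bound
  set T : ℝ := min (ρ / (2 * (Cb + 1))) (1 / (2 * (Kd + 1))) with hTdef
  have hT : 0 < T := by
    apply lt_min <;> positivity
  have hCbT : Cb * T ≤ ρ / 2 := by
    have h1 : T ≤ ρ / (2 * (Cb + 1)) := min_le_left _ _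
    have : Cb * T ≤ Cb * (ρ / (2 * (Cb + 1))) := by
      apply mul_le_mul_of_nonneg_left h1 hCb0
    calc Cb * T ≤ Cb * (ρ / (2 * (Cb + 1))) := this
      _ ≤ ρ / 2 := by
        rw [mul_div_assoc', div_le_div_iff₀ (by positivity) (by norm_num)]
        nlinarith
  have hKdT : Kd * T ≤ 1 / 2 := by
    have h1 : T ≤ 1 / (2 * (Kd + 1)) := min_le_right _ _
    have : Kd * T ≤ Kd * (1 / (2 * (Kd + 1))) := by
      apply mul_le_mul_of_nonneg_left h1 hKd0
    calc Kd * T ≤ Kd * (1 / (2 * (Kd + 1))) := this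
      _ ≤ 1 / 2 := by
        rw [mul_div_assoc', div_le_div_iff₀ (by positivity) (by norm_num)]
        nlinarith
  -- confinement
  have hsubρ3 : closedBall q ρ ⊆ closedBall q (3*ρ) :=
    closedBall_subset_closedBall (by linarith)
  have hsub23 : closedBall q (2*ρ) ⊆ closedBall q (3*ρ) :=
    closedBall_subset_closedBall (by linarith)
  have hconf : ∀ w ∈ closedBall q ρ, ∀ t ∈ Icc (0:ℝ) T, ‖φ t w - w‖ ≤ Cb * t := by
    intro w hw
    have hwM : w ∈ M := hB3M (hsubρ3 hw)
    have hcWc : Continuous (fun τ => φ τ w) :=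
      continuous_iff_continuousAt.2 fun τ => ((hφ w hwM).2 τ).2.continuousAt
    have hw0 : φ 0 w = w := (hφ w hwM).1
    set S : Set ℝ := {t | ∀ τ ∈ Icc (0:ℝ) t, φ τ w ∈ closedBall q (2*ρ)} with hSdef
    -- Claim A: in-S points satisfy the required bound
    have claimA : ∀ t, 0 ≤ t → t ∈ S → ‖φ t w - w‖ ≤ Cb * t := by
      intro t ht0 htS
      have hder : ∀ τ ∈ Icc (0:ℝ) t,
          HasDerivWithinAt (fun τ => φ τ w) (f (φ τ w)) (Icc (0:ℝ) t) τ :=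
        fun τ _ => ((hφ w hwM).2 τ).2.hasDerivWithinAt
      have hbound : ∀ τ ∈ Ico (0:ℝ) t, ‖f (φ τ w)‖ ≤ Cb := fun τ hτ =>
        hfb _ (hsub23 (htS τ (Ico_subset_Icc_self hτ)))
      have := norm_image_sub_le_of_norm_deriv_le_segment' hder hbound t
        ⟨ht0, le_rfl⟩
      simpa [hw0] using this
    -- S contains Icc 0 T by continuous induction
    have hST : Icc (0:ℝ) T ⊆ S := by
      apply IsClosed.Icc_subset_of_forall_exists_gt
      · -- closedness of S ∩ Icc 0 T
        rw [← isSeqClosed_iff_isClosed]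
        intro u t hu hlim
        have htI : t ∈ Icc (0:ℝ) T :=
          isClosed_Icc.isSeqClosed (fun n => (hu n).2) hlim
        refine ⟨?_, htI⟩
        intro τ hτ
        rcases eq_or_lt_of_le hτ.2 with heq | hlt
        · subst heq
          have hmem : ∀ n, φ (u n) w ∈ closedBall q (2*ρ) := fun n =>
            (hu n).1 (u n) ⟨(hu n).2.1, le_rfl⟩
          exact (Metric.isClosed_closedBall).isSeqClosed hmem
            ((hcWc.tendsto τ).comp hlim)
        · have : ∀ᶠ n in atTop, dist (u n) t < t - τ :=
            (tendsto_iff_dist_tendsto_zero.mp hlim).eventually_lt_const (by linarith)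
          obtain ⟨n, hn⟩ := this.exists
          have : τ ≤ u n := by
            have := abs_sub_lt_iff.mp (by simpa [Real.dist_eq] using hn)
            linarith [this.2]
          exact (hu n).1 τ ⟨hτ.1, this⟩
      · -- 0 ∈ S
        intro τ hτ
        have : τ = 0 := le_antisymm hτ.2 hτ.1
        subst this
        rw [hw0]
        exact closedBall_subset_closedBall (by linarith) hw
      · -- can always go a bit further
        rintro t ⟨htS, ht0, htT⟩ y hy
        have hnear : φ t w ∈ closedBall q (3/2 * ρ) := by
          have h1 : ‖φ t w - w‖ ≤ Cb * t := claimA t ht0 htS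
          have h2 : Cb * t ≤ ρ/2 :=
            le_trans (mul_le_mul_of_nonneg_left (le_of_lt htT) hCb0) hCbT
          rw [mem_closedBall]
          calc dist (φ t w) q ≤ dist (φ t w) w + dist w q := dist_triangle _ _ _
            _ ≤ Cb * t + ρ := add_le_add (by rw [dist_eq_norm]; exact h1)
                (mem_closedBall.mp hw)
            _ ≤ 3/2 * ρ := by linarith
        have hcont : ∀ᶠ τ in 𝓝 t, φ τ w ∈ ball q (2*ρ) := by
          apply (hcWc.continuousAt (x := t)).preimage_mem_nhds
          exact isOpen_ball.mem_nhds
            (mem_ball.mpr (lt_of_le_of_lt (mem_closedBall.mp hnear) (by linarith)))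
        obtain ⟨δ, hδ0, hδ⟩ := Metric.eventually_nhds_iff.mp hcont
        refine ⟨min y (t + δ/2), ?_, lt_min hy (by linarith), min_le_left _ _⟩
        intro τ hτ
        rcases le_or_gt τ t with h | h
        · exact htS τ ⟨hτ.1, h⟩
        · apply ball_subset_closedBall
          apply hδ
          have : τ ≤ t + δ/2 := le_trans hτ.2 (min_le_right _ _)
          rw [Real.dist_eq, abs_of_pos (by linarith)]
          linarith
    intro t ht
    exact claimA t ht.1 (hST ht)
  have hconf2 : ∀ w ∈ closedBall q ρ, ∀ t ∈ Icc (0:ℝ) T,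
      φ t w ∈ closedBall q (3/2 * ρ) := by
    intro w hw t ht
    have h1 := hconf w hw t ht
    have h2 : Cb * t ≤ ρ / 2 := le_trans
      (mul_le_mul_of_nonneg_left ht.2 hCb0) hCbT
    have hwq : dist w q ≤ ρ := mem_closedBall.mp hw
    rw [mem_closedBall]
    calc dist (φ t w) q ≤ dist (φ t w) w + dist w q := dist_triangle _ _ _
      _ ≤ Cb * t + ρ := by rw [dist_eq_norm]; exact add_le_add h1 hwq
      _ ≤ 3/2 * ρ := by linarith
  -- main conclusion
  refine ⟨ρ/2, by positivity, T, hT, ?_, ?_⟩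
  · intro y hy
    exact hB3M (hsubρ3 (ball_subset_closedBall (ball_subset_ball (by linarith) hy)))
  intro w hw t ht
  have hwρ : w ∈ closedBall q ρ :=
    ball_subset_closedBall (ball_subset_ball (by linarith) hw)
  have hwM : w ∈ M := hB3M (hsubρ3 hwρ)
  have hcWc : Continuous (fun τ => φ τ w) :=
    continuous_iff_continuousAt.2 fun τ => ((hφ w hwM).2 τ).2.continuousAt
  -- the variational equation and its solution W
  set A : ℝ → (E →L[ℝ] E) := fun τ => fderiv ℝ f (φ τ w) with hAdef
  have hAb : ∀ τ ∈ Icc (0:ℝ) T, ‖A τ‖ ≤ Kd := fun τ hτ =>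
    hKdb _ (hsub23 (closedBall_subset_closedBall (by linarith) (hconf2 w hwρ τ hτ)))
  have hAcont : ContinuousOn A (Icc (0:ℝ) T) :=
    hDf.continuousOn.comp hcWc.continuousOn (fun τ _ => hφ.mem hwM τ)
  have hpl : IsPicardLindelof (fun τ (P : E →L[ℝ] E) => (A τ).comp P)
      (tmin := 0) (tmax := T) ⟨0, ⟨le_rfl, hT.le⟩⟩ (ContinuousLinearMap.id ℝ E) 1 0
      (2*(Kd+1)).toNNReal Kd.toNNReal := by
    constructor
    · intro τ hτ
      apply LipschitzWith.lipschitzOnWith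
      apply LipschitzWith.of_dist_le_mul
      intro P Q
      rw [dist_eq_norm, dist_eq_norm, ← ContinuousLinearMap.comp_sub]
      calc ‖(A τ).comp (P - Q)‖ ≤ ‖A τ‖ * ‖P - Q‖ :=
            ContinuousLinearMap.opNorm_comp_le _ _
        _ ≤ Kd.toNNReal * ‖P - Q‖ := by
            have : ((Kd.toNNReal : ℝ≥0) : ℝ) = Kd := Real.coe_toNNReal _ hKd0
            rw [this]
            exact mul_le_mul_of_nonneg_right (hAb τ hτ) (norm_nonneg _)
    · intro P _
      exact ((ContinuousLinearMap.compL ℝ E E E).flip P).continuous.comp_continuousOn hAcont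
    · intro τ hτ P hP
      have hPn : ‖P‖ ≤ 2 := by
        calc ‖P‖ ≤ ‖P - ContinuousLinearMap.id ℝ E‖ + ‖ContinuousLinearMap.id ℝ E‖ := by
              simpa using norm_add_le (P - ContinuousLinearMap.id ℝ E) (ContinuousLinearMap.id ℝ E)
          _ ≤ 1 + 1 := add_le_add (by simpa [dist_eq_norm] using mem_closedBall.mp hP)
              ContinuousLinearMap.norm_id_le
          _ = 2 := by norm_num
      rw [Real.coe_toNNReal _ (by positivity)]
      calc ‖(A τ).comp P‖ ≤ ‖A τ‖ * ‖P‖ := ContinuousLinearMap.opNorm_comp_le _ _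
        _ ≤ Kd * 2 := mul_le_mul (hAb τ hτ) hPn (norm_nonneg _) hKd0
        _ ≤ 2*(Kd+1) := by linarith
    · have hmax : max (T - 0) (0 - 0) = T := by
        rw [sub_zero, sub_zero]; exact max_eq_left hT.le
      show ((2*(Kd+1)).toNNReal : ℝ) * max (T - 0) (0 - 0) ≤ ((1:ℝ≥0):ℝ) - ((0:ℝ≥0):ℝ)
      rw [Real.coe_toNNReal _ (by positivity), NNReal.coe_one, NNReal.coe_zero, sub_zero (1:ℝ)]
      rw [hmax]
      have h1 : T ≤ 1 / (2 * (Kd + 1)) := min_le_right _ _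
      calc 2*(Kd+1) * T ≤ 2*(Kd+1) * (1/(2*(Kd+1))) :=
            mul_le_mul_of_nonneg_left h1 (by positivity)
        _ = 1 := by field_simp
  obtain ⟨W, hW0, hWd⟩ := hpl.exists_eq_forall_mem_Icc_hasDerivWithinAt₀
  replace hW0 : W 0 = ContinuousLinearMap.id ℝ E := hW0
  -- norm bound on W via Gronwall
  have hWb : ∀ τ ∈ Icc (0:ℝ) T, ‖W τ‖ ≤ 3 := by
    have hcont : ContinuousOn W (Icc (0:ℝ) T) :=
      fun τ hτ => (hWd τ hτ).continuousWithinAt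
    have hder : ∀ τ ∈ Ico (0:ℝ) T, HasDerivWithinAt W ((A τ).comp (W τ)) (Ici τ) τ :=
      fun τ hτ => (hWd τ (Ico_subset_Icc_self hτ)).mono_of_mem_nhdsWithin
        (Icc_mem_nhdsGE_of_mem hτ)
    have hbound : ∀ τ ∈ Ico (0:ℝ) T, ‖(A τ).comp (W τ)‖ ≤ Kd * ‖W τ‖ + 0 := by
      intro τ hτ
      rw [add_zero]
      calc ‖(A τ).comp (W τ)‖ ≤ ‖A τ‖ * ‖W τ‖ := ContinuousLinearMap.opNorm_comp_le _ _
        _ ≤ Kd * ‖W τ‖ := mul_le_mul_of_nonneg_right (hAb τ (Ico_subset_Icc_self hτ))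
            (norm_nonneg _)
    have hstart : ‖W 0‖ ≤ 1 := by rw [hW0]; exact ContinuousLinearMap.norm_id_le
    have := norm_le_gronwallBound_of_norm_deriv_right_le (K := Kd) (ε := 0) (δ := 1)
      hcont hder hstart hbound
    intro τ hτ
    have h2 := this τ hτ
    rw [sub_zero, gronwallBound_ε0, one_mul] at h2
    have h3 : Real.exp (Kd * τ) ≤ Real.exp 1 := by
      apply Real.exp_le_exp.mpr
      calc Kd * τ ≤ Kd * T := mul_le_mul_of_nonneg_left hτ.2 hKd0
        _ ≤ 1/2 := hKdT
        _ ≤ 1 := by norm_num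
    have h4 : Real.exp 1 ≤ 3 := by
      have := Real.exp_one_lt_d9
      linarith
    linarith
  -- invariance: W τ (g w) = g (φ τ w)
  have hinv : ∀ τ ∈ Icc (0:ℝ) T, W τ (g w) = g (φ τ w) := by
    set v' : ℝ → E → E := fun τ y => if τ ∈ Icc (0:ℝ) T then A τ y else 0 with hv'def
    have hv' : ∀ τ, LipschitzWith Kd.toNNReal (v' τ) := by
      intro τ
      by_cases hτ : τ ∈ Icc (0:ℝ) T
      · simp only [hv'def, if_pos hτ]
        apply LipschitzWith.of_dist_le_mul
        intro y₁ y₂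
        rw [dist_eq_norm, dist_eq_norm, ← map_sub]
        calc ‖A τ (y₁ - y₂)‖ ≤ ‖A τ‖ * ‖y₁ - y₂‖ := (A τ).le_opNorm _
          _ ≤ Kd.toNNReal * ‖y₁ - y₂‖ := by
              rw [Real.coe_toNNReal _ hKd0]
              exact mul_le_mul_of_nonneg_right (hAb τ hτ) (norm_nonneg _)
      · simp only [hv'def, if_neg hτ]
        exact (LipschitzWith.const (0:E)).weaken zero_le
    have hcg : ∀ τ, HasDerivAt (fun σ => g (φ σ w)) (A τ (g (φ τ w))) τ := by
      intro τ
      have h1 : HasDerivAt (fun σ => g (φ σ w))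
          (fderiv ℝ g (φ τ w) (f (φ τ w))) τ :=
        (hgd _ (hφ.mem hwM τ)).hasFDerivAt.comp_hasDerivAt τ ((hφ w hwM).2 τ).2
      rwa [hcomm _ (hφ.mem hwM τ)] at h1
    have heq := ODE_solution_unique (v := v') hv'
      (f := fun σ => g (φ σ w)) (g := fun σ => W σ (g w)) (a := 0) (b := T)
      (fun τ _ => (hcg τ).continuousAt.continuousWithinAt)
      (fun τ hτ => by
        simp only [hv'def]
        rw [if_pos (Ico_subset_Icc_self hτ)]
        exact (hcg τ).hasDerivWithinAt)
      (fun τ hτ => ((ContinuousLinearMap.apply ℝ E (g w)).continuous.continuousAt).comp_continuousWithinAt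
        (hWd τ hτ).continuousWithinAt)
      (fun τ hτ => by
        have hWτ : HasDerivWithinAt W ((A τ).comp (W τ)) (Ici τ) τ :=
          (hWd τ (Ico_subset_Icc_self hτ)).mono_of_mem_nhdsWithin
            (Icc_mem_nhdsGE_of_mem hτ)
        have h5 := ((ContinuousLinearMap.apply ℝ E (g w)).hasFDerivAt).comp_hasDerivWithinAt τ hWτ
        simp only [hv'def]
        rw [if_pos (Ico_subset_Icc_self hτ)]
        exact h5)
      (by show g (φ 0 w) = W 0 (g w)
          rw [(hφ w hwM).1, hW0]; rfl)
    intro τ hτ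
    exact (heq hτ).symm
  -- Fréchet differentiability of φ t at w, with derivative W t
  refine ⟨W t, ?_, hinv t ht⟩
  set CC : ℝ := 9 * K₂ * T * Real.exp (K * T) with hCCdef
  have hCC0 : 0 ≤ CC := by positivity
  have key : ∀ h : E, ‖h‖ ≤ ρ/6 →
      ‖φ t (w + h) - φ t w - W t h‖ ≤ CC * ‖h‖^2 := by
    intro h hh
    have hwh : w + h ∈ closedBall q ρ := by
      rw [mem_closedBall]
      calc dist (w + h) q ≤ dist (w + h) w + dist w q := dist_triangle _ _ _
        _ ≤ ρ/6 + ρ/2 := by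
            refine add_le_add ?_ (le_of_lt (mem_ball.mp hw))
            rw [dist_eq_norm, add_sub_cancel_left]
            exact hh
        _ ≤ ρ := by linarith
    have hwhM : w + h ∈ M := hB3M (hsubρ3 hwh)
    have hsubt : Icc (0:ℝ) t ⊆ Icc (0:ℝ) T := Icc_subset_Icc le_rfl ht.2
    have hu2 : ∀ τ ∈ Ico (0:ℝ) t, φ τ (w + h) ∈ closedBall q (2*ρ) := fun τ hτ =>
      closedBall_subset_closedBall (by linarith)
        (hconf2 _ hwh τ (hsubt (Ico_subset_Icc_self hτ)))
    have hγ2 : ∀ τ ∈ Icc (0:ℝ) t, φ τ w + W τ h ∈ closedBall q (2*ρ) := by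
      intro τ hτ
      rw [mem_closedBall]
      calc dist (φ τ w + W τ h) q ≤ dist (φ τ w + W τ h) (φ τ w) + dist (φ τ w) q :=
            dist_triangle _ _ _
        _ ≤ 3 * ‖h‖ + 3/2 * ρ := by
            refine add_le_add ?_ (mem_closedBall.mp (hconf2 w hwρ τ (hsubt hτ)))
            rw [dist_eq_norm, add_sub_cancel_left]
            calc ‖W τ h‖ ≤ ‖W τ‖ * ‖h‖ := (W τ).le_opNorm h
              _ ≤ 3 * ‖h‖ := mul_le_mul_of_nonneg_right (hWb τ (hsubt hτ)) (norm_nonneg _)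
        _ ≤ 2 * ρ := by nlinarith
    have hud : ∀ τ ∈ Ico (0:ℝ) t,
        HasDerivWithinAt (fun σ => φ σ (w + h)) (f (φ τ (w + h))) (Ici τ) τ :=
      fun τ _ => ((hφ (w + h) hwhM).2 τ).2.hasDerivWithinAt
    have hγd : ∀ τ ∈ Ico (0:ℝ) t,
        HasDerivWithinAt (fun σ => φ σ w + W σ h)
          (f (φ τ w) + ((A τ).comp (W τ)) h) (Ici τ) τ := by
      intro τ hτ
      have hτT : τ ∈ Ico (0:ℝ) T := ⟨hτ.1, lt_of_lt_of_le hτ.2 ht.2⟩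
      have h1 : HasDerivWithinAt (fun σ => φ σ w) (f (φ τ w)) (Ici τ) τ :=
        ((hφ w hwM).2 τ).2.hasDerivWithinAt
      have hWτ : HasDerivWithinAt W ((A τ).comp (W τ)) (Ici τ) τ :=
        (hWd τ (Ico_subset_Icc_self hτT)).mono_of_mem_nhdsWithin
          (Icc_mem_nhdsGE_of_mem hτT)
      have h2 := ((ContinuousLinearMap.apply ℝ E h).hasFDerivAt).comp_hasDerivWithinAt τ hWτ
      exact h1.add h2
    have hγbound : ∀ τ ∈ Ico (0:ℝ) t,
        dist (f (φ τ w) + ((A τ).comp (W τ)) h) (f (φ τ w + W τ h)) ≤ 9 * K₂ * ‖h‖^2 := by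
      intro τ hτ
      have hτT : τ ∈ Icc (0:ℝ) T := hsubt (Ico_subset_Icc_self hτ)
      have ha2 : φ τ w ∈ closedBall q (2*ρ) :=
        closedBall_subset_closedBall (by linarith) (hconf2 w hwρ τ hτT)
      have hb2 : φ τ w + W τ h ∈ closedBall q (2*ρ) := hγ2 τ (Ico_subset_Icc_self hτ)
      have := htay _ ha2 _ hb2
      rw [dist_eq_norm]
      have heq2 : f (φ τ w) + ((A τ).comp (W τ)) h - f (φ τ w + W τ h)
          = -(f (φ τ w + W τ h) - f (φ τ w) - fderiv ℝ f (φ τ w) ((φ τ w + W τ h) - φ τ w)) := by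
        simp only [hAdef, add_sub_cancel_left, ContinuousLinearMap.comp_apply]
        abel
      rw [heq2, norm_neg]
      calc ‖f (φ τ w + W τ h) - f (φ τ w) - fderiv ℝ f (φ τ w) (φ τ w + W τ h - φ τ w)‖
          ≤ K₂ * ‖φ τ w + W τ h - φ τ w‖^2 := this
        _ ≤ 9 * K₂ * ‖h‖^2 := by
            rw [add_sub_cancel_left]
            have hWn : ‖W τ h‖ ≤ 3 * ‖h‖ := by
              calc ‖W τ h‖ ≤ ‖W τ‖ * ‖h‖ := (W τ).le_opNorm h
                _ ≤ 3 * ‖h‖ := mul_le_mul_of_nonneg_right (hWb τ hτT) (norm_nonneg _)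
            have hK₂0 : (0:ℝ) ≤ K₂ := K₂.coe_nonneg
            have h6 : ‖W τ h‖^2 ≤ (3*‖h‖)^2 := pow_le_pow_left₀ (norm_nonneg _) hWn 2
            calc (K₂:ℝ) * ‖W τ h‖^2 ≤ K₂ * ((3*‖h‖)^2) := mul_le_mul_of_nonneg_left h6 hK₂0
              _ = 9 * K₂ * ‖h‖^2 := by ring
    have hstart : dist (φ 0 (w + h)) (φ 0 w + W 0 h) ≤ 0 := by
      rw [(hφ (w + h) hwhM).1, (hφ w hwM).1, hW0]
      simp
    have hmain := dist_le_of_approx_trajectories_ODE_of_mem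
      (v := fun _ => f) (s := fun _ => closedBall q (2*ρ)) (K := K)
      (εf := 0) (εg := 9 * K₂ * ‖h‖^2)
      (fun _ _ => hlipf.mono hsub23)
      (fun τ hτ => (((hφ (w + h) hwhM).2 τ).2.continuousAt).continuousWithinAt)
      hud
      (fun τ hτ => by rw [dist_self])
      hu2
      (fun τ hτ => ((((hφ w hwM).2 τ).2.continuousAt).continuousWithinAt).add
        (((ContinuousLinearMap.apply ℝ E h).continuous.continuousAt).comp_continuousWithinAt
          ((hWd τ (hsubt hτ)).continuousWithinAt.mono (Icc_subset_Icc le_rfl ht.2))))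
      hγd
      hγbound
      (fun τ hτ => hγ2 τ (Ico_subset_Icc_self hτ))
      hstart
      t ⟨ht.1, le_rfl⟩
    rw [zero_add, sub_zero] at hmain
    have hgb : gronwallBound 0 K (9 * K₂ * ‖h‖^2) t
        ≤ (9 * K₂ * ‖h‖^2) * t * Real.exp (K * t) :=
      gronwallBound_le_simple K _ t ht.1 (by positivity)
    have hle : (9 * K₂ * ‖h‖^2) * t * Real.exp (K * t) ≤ CC * ‖h‖^2 := by
      rw [hCCdef]
      have he : Real.exp ((K:ℝ) * t) ≤ Real.exp ((K:ℝ) * T) :=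
        Real.exp_le_exp.mpr (mul_le_mul_of_nonneg_left ht.2 K.coe_nonneg)
      have hK₂0 : (0:ℝ) ≤ K₂ := K₂.coe_nonneg
      have hT' : t ≤ T := ht.2
      have h9 : (0:ℝ) ≤ 9 * K₂ * ‖h‖^2 := by positivity
      calc 9 * (K₂:ℝ) * ‖h‖^2 * t * Real.exp ((K:ℝ)*t)
          = (9 * (K₂:ℝ) * ‖h‖^2) * (t * Real.exp ((K:ℝ)*t)) := by ring
        _ ≤ (9 * (K₂:ℝ) * ‖h‖^2) * (T * Real.exp ((K:ℝ)*T)) :=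
            mul_le_mul_of_nonneg_left
              (mul_le_mul hT' he (Real.exp_pos _).le (le_trans ht.1 hT')) h9
        _ = 9 * (K₂:ℝ) * T * Real.exp ((K:ℝ)*T) * ‖h‖^2 := by ring
    have : dist (φ t (w + h)) (φ t w + W t h) ≤ CC * ‖h‖^2 :=
      le_trans hmain (le_trans hgb hle)
    rw [dist_eq_norm] at this
    calc ‖φ t (w + h) - φ t w - W t h‖ = ‖φ t (w + h) - (φ t w + W t h)‖ := by
          rw [sub_sub]
      _ ≤ CC * ‖h‖^2 := this
  rw [hasFDerivAt_iff_isLittleO_nhds_zero, Asymptotics.isLittleO_iff]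
  intro c hc
  have hδ : (0:ℝ) < min (ρ/6) (c/(CC+1)) := lt_min (by positivity) (by positivity)
  filter_upwards [Metric.ball_mem_nhds (0:E) hδ] with h hh
  have hn : ‖h‖ < min (ρ/6) (c/(CC+1)) := by
    rw [mem_ball, dist_zero_right] at hh
    exact hh
  have h1 : ‖h‖ ≤ ρ/6 := le_of_lt (lt_of_lt_of_le hn (min_le_left _ _))
  have h2 : ‖h‖ ≤ c/(CC+1) := le_of_lt (lt_of_lt_of_le hn (min_le_right _ _))
  calc ‖φ t (w + h) - φ t w - W t h‖ ≤ CC * ‖h‖^2 := key h h1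
    _ ≤ c * ‖h‖ := by
        have : CC * ‖h‖ ≤ c := by
          calc CC * ‖h‖ ≤ CC * (c/(CC+1)) := mul_le_mul_of_nonneg_left h2 hCC0
            _ ≤ c := by
                rw [mul_div_assoc', div_le_iff₀ (by positivity)]
                nlinarith
        nlinarith [norm_nonneg h]

lemma loc_twosided {M : Set E} (hM : IsOpen M) {f g : E → E}
    (hf : ContDiffOn ℝ 2 f M) {φ : ℝ → E → E} (hφ : FlowOn M f φ)
    (hgd : ∀ x ∈ M, DifferentiableAt ℝ g x)
    (hcomm : ∀ x ∈ M, fderiv ℝ g x (f x) = fderiv ℝ f x (g x))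
    {q : E} (hq : q ∈ M) :
    ∃ r > (0:ℝ), ∃ T > (0:ℝ), ball q r ⊆ M ∧ ∀ w ∈ ball q r, ∀ τ : ℝ, |τ| ≤ T →
      ∃ L : E →L[ℝ] E, HasFDerivAt (φ τ) L w ∧ L (g w) = g (φ τ w) := by
  obtain ⟨r₁, hr₁, T₁, hT₁, hrM₁, hloc₁⟩ := loc_onesided hM hf hφ hgd hcomm hq
  have hcomm' : ∀ x ∈ M, fderiv ℝ g x ((-f) x) = fderiv ℝ (-f) x (g x) := by
    intro x hx
    have h1 : fderiv ℝ g x ((-f) x) = -(fderiv ℝ g x (f x)) := by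
      rw [show (-f) x = -(f x) from rfl, map_neg]
    have h2 : fderiv ℝ (-f) x = -(fderiv ℝ f x) := fderiv_neg
    rw [h1, h2, hcomm x hx]
    rfl
  obtain ⟨r₂, hr₂, T₂, hT₂, hrM₂, hloc₂⟩ :=
    loc_onesided hM (hf.neg) (hφ.neg) hgd hcomm' hq
  refine ⟨min r₁ r₂, lt_min hr₁ hr₂, min T₁ T₂, lt_min hT₁ hT₂,
    (ball_subset_ball (min_le_left _ _)).trans hrM₁, ?_⟩
  intro w hw τ hτ
  rcases le_or_gt 0 τ with h0 | h0
  · have := hloc₁ w (ball_subset_ball (min_le_left _ _) hw) τ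
      ⟨h0, le_trans (le_trans (le_abs_self τ) hτ) (min_le_left _ _)⟩
    exact this
  · have h1 : -τ ∈ Icc (0:ℝ) T₂ :=
      ⟨by linarith, le_trans (le_trans (neg_le_abs τ) hτ) (min_le_right _ _)⟩
    obtain ⟨L, hL, hLv⟩ := hloc₂ w (ball_subset_ball (min_le_right _ _) hw) (-τ) h1
    refine ⟨L, ?_, ?_⟩
    · simpa [neg_neg] using hL
    · simpa [neg_neg] using hLv

lemma glob_inv {M : Set E} (hM : IsOpen M) {f g : E → E}
    (hf : ContDiffOn ℝ 2 f M) {φ : ℝ → E → E} (hφ : FlowOn M f φ)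
    (hgd : ∀ x ∈ M, DifferentiableAt ℝ g x)
    (hcomm : ∀ x ∈ M, fderiv ℝ g x (f x) = fderiv ℝ f x (g x))
    {z : E} (hz : z ∈ M) (s : ℝ) :
    ∃ L : E →L[ℝ] E, HasFDerivAt (φ s) L z ∧ L (g z) = g (φ s z) := by
  have hf1 : ContDiffOn ℝ 1 f M := hf.of_le one_le_two
  set S : Set ℝ := {s : ℝ | ∃ L : E →L[ℝ] E, HasFDerivAt (φ s) L z ∧ L (g z) = g (φ s z)}
    with hSdef
  -- step lemma
  have hstep : ∀ s₀ ∈ S, ∀ τ : ℝ,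
      (∃ L' : E →L[ℝ] E, HasFDerivAt (φ τ) L' (φ s₀ z) ∧
        L' (g (φ s₀ z)) = g (φ τ (φ s₀ z))) → (s₀ + τ) ∈ S := by
    rintro s₀ ⟨L₀, hL₀, hL₀v⟩ τ ⟨L', hL', hL'v⟩
    have hco : HasFDerivAt (φ τ ∘ φ s₀) (L'.comp L₀) z := hL'.comp z hL₀
    have hev : φ (s₀ + τ) =ᶠ[𝓝 z] φ τ ∘ φ s₀ := by
      filter_upwards [hM.mem_nhds hz] with y hy
      rw [add_comm]
      exact hφ.add hM hf1 hy τ s₀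
    refine ⟨L'.comp L₀, hco.congr_of_eventuallyEq hev, ?_⟩
    rw [ContinuousLinearMap.comp_apply, hL₀v, hL'v, add_comm]
    rw [hφ.add hM hf1 hz τ s₀]
  have hccur : Continuous (fun σ => φ σ z) :=
    continuous_iff_continuousAt.2 fun τ => ((hφ z hz).2 τ).2.continuousAt
  have hSopen : IsOpen S := by
    rw [isOpen_iff_mem_nhds]
    intro s₀ hs₀
    obtain ⟨r, hr, T, hT, hrM, hloc⟩ :=
      loc_twosided hM hf hφ hgd hcomm (hφ.mem hz s₀)
    have : Ioo (s₀ - T) (s₀ + T) ⊆ S := by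
      intro s hs
      have h1 : |s - s₀| ≤ T := by
        rw [abs_le]; constructor <;> [linarith [hs.1]; linarith [hs.2]]
      have h2 := hloc (φ s₀ z) (mem_ball_self hr) (s - s₀) h1
      have := hstep s₀ hs₀ (s - s₀) h2
      simpa using this
    exact mem_of_superset (Ioo_mem_nhds (by linarith) (by linarith)) this
  have hSclosed : IsClosed S := by
    rw [← isSeqClosed_iff_isClosed]
    intro u s₀ hu hlim
    obtain ⟨r, hr, T, hT, hrM, hloc⟩ :=
      loc_twosided hM hf hφ hgd hcomm (hφ.mem hz s₀)
    have hcont : ∀ᶠ σ in 𝓝 s₀, φ σ z ∈ ball (φ s₀ z) r :=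
      (hccur.continuousAt).preimage_mem_nhds (isOpen_ball.mem_nhds (mem_ball_self hr))
    obtain ⟨δ, hδ0, hδ⟩ := Metric.eventually_nhds_iff.mp hcont
    have : ∀ᶠ n in atTop, dist (u n) s₀ < min δ T :=
      (tendsto_iff_dist_tendsto_zero.mp hlim).eventually_lt_const (lt_min hδ0 hT)
    obtain ⟨n, hn⟩ := this.exists
    have hw : φ (u n) z ∈ ball (φ s₀ z) r := by
      apply hδ
      rw [Real.dist_eq]
      calc |u n - s₀| = dist (u n) s₀ := by rw [Real.dist_eq]
        _ < δ := lt_of_lt_of_le hn (min_le_left _ _)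
    have hτ : |s₀ - u n| ≤ T := by
      rw [abs_sub_comm]
      exact le_of_lt (lt_of_lt_of_le (by rw [← Real.dist_eq]; exact hn) (min_le_right _ _))
    have h2 := hloc (φ (u n) z) hw (s₀ - u n) hτ
    have := hstep (u n) (hu n) (s₀ - u n) h2
    simpa using this
  have h0 : (0:ℝ) ∈ S := by
    refine ⟨ContinuousLinearMap.id ℝ E, ?_, ?_⟩
    · apply HasFDerivAt.congr_of_eventuallyEq (hasFDerivAt_id z)
      filter_upwards [hM.mem_nhds hz] with y hy
      exact (hφ y hy).1
    · rw [(hφ z hz).1]; rfl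
  have : S = univ := IsClopen.eq_univ ⟨hSclosed, hSopen⟩ ⟨0, h0⟩
  exact (Set.eq_univ_iff_forall.mp this) s



/-- `Ψ(t₁,s₂) = e^{t₁f₁}e^{s₂f₂}e^{-t₁f₁}e^{-s₂f₂}` (left-acting). -/
def Psi2 {n : ℕ} (φ₁ φ₂ : ℝ → EuclideanSpace ℝ (Fin n) → EuclideanSpace ℝ (Fin n))
    (t₁ t₂ : ℝ) (x : EuclideanSpace ℝ (Fin n)) : EuclideanSpace ℝ (Fin n) :=
  φ₂ (-t₂) (φ₁ (-t₁) (φ₂ t₂ (φ₁ t₁ x)))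

/-- The inverse diffeomorphism `Ψ(t₁,t₂)⁻¹`. -/
def Psi2Inv {n : ℕ} (φ₁ φ₂ : ℝ → EuclideanSpace ℝ (Fin n) → EuclideanSpace ℝ (Fin n))
    (t₁ t₂ : ℝ) (x : EuclideanSpace ℝ (Fin n)) : EuclideanSpace ℝ (Fin n) :=
  φ₁ (-t₁) (φ₂ (-t₂) (φ₁ t₁ (φ₂ t₂ x)))

theorem stmt18 {n : ℕ} (M : Set (EuclideanSpace ℝ (Fin n))) (hM : IsOpen M)
    (f₁ f₂ f₃ : EuclideanSpace ℝ (Fin n) → EuclideanSpace ℝ (Fin n))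
    (hf₁ : ContDiffOn ℝ 3 f₁ M) (hf₂ : ContDiffOn ℝ 3 f₂ M)
    (hf₃ : ContDiffOn ℝ 1 f₃ M)
    (φ₁ φ₂ φ₃ : ℝ → EuclideanSpace ℝ (Fin n) → EuclideanSpace ℝ (Fin n))
    (hφ₁ : IsFlowOn M f₁ φ₁) (hφ₂ : IsFlowOn M f₂ φ₂) (hφ₃ : IsFlowOn M f₃ φ₃)
    -- the nilpotency hypotheses `[f₁,[f₁,f₂]] ≡ 0` and `[f₂,[f₁,f₂]] ≡ 0` on `M`
    (hnil₁ : ∀ x ∈ M, lieBr f₁ (lieBr f₁ f₂) x = 0)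
    (hnil₂ : ∀ x ∈ M, lieBr f₂ (lieBr f₁ f₂) x = 0) :
    ∀ x ∈ M, ∃ δ > (0 : ℝ), ∀ t₁ s₃ s₁ s₂ : ℝ,
      |t₁| < δ → |s₃| < δ → |s₁| < δ → |s₂| < δ →
      -- the degree-3 integrating bracket `[[f₁,f₂],f₃]^{(t₁,s₃,s₁,s₂)}`
      AdC (fun y => Psi2 φ₁ φ₂ t₁ s₂ (φ₃ s₃ y))
          (fun z => φ₃ (-s₃) (Psi2Inv φ₁ φ₂ t₁ s₂ z))
          (lieBr
            (AdC (fun y => φ₁ s₁ (φ₂ s₂ y)) (fun z => φ₂ (-s₂) (φ₁ (-s₁) z))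
              (lieBr f₁ f₂))
            f₃) x
        = AdC (fun y => Psi2 φ₁ φ₂ t₁ s₂ (φ₃ s₃ y))
            (fun z => φ₃ (-s₃) (Psi2Inv φ₁ φ₂ t₁ s₂ z))
            (lieBr (lieBr f₁ f₂) f₃) x := by
  have hφ₁' : FlowOn M f₁ φ₁ := hφ₁
  have hφ₂' : FlowOn M f₂ φ₂ := hφ₂
  have hφ₃' : FlowOn M f₃ φ₃ := hφ₃
  have hf₁2 : ContDiffOn ℝ 2 f₁ M := hf₁.of_le (by norm_num)
  have hf₂2 : ContDiffOn ℝ 2 f₂ M := hf₂.of_le (by norm_num)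
  set g : EuclideanSpace ℝ (Fin n) → EuclideanSpace ℝ (Fin n) := lieBr f₁ f₂ with hgdef
  -- regularity of g
  have hgC1 : ContDiffOn ℝ 1 g M := by
    have h2 : ContDiffOn ℝ 2 (fderiv ℝ f₂) M := hf₂.fderiv_of_isOpen hM (by norm_num)
    have h1 : ContDiffOn ℝ 2 (fderiv ℝ f₁) M := hf₁.fderiv_of_isOpen hM (by norm_num)
    have : ContDiffOn ℝ 2 g M := by
      rw [hgdef]
      unfold lieBr
      exact (h2.clm_apply (hf₁.of_le (by norm_num))).sub
        (h1.clm_apply (hf₂.of_le (by norm_num)))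
    exact this.of_le one_le_two
  have hgd : ∀ x ∈ M, DifferentiableAt ℝ g x := fun x hx =>
    (hgC1.differentiableOn one_ne_zero).differentiableAt (hM.mem_nhds hx)
  have hcomm₁ : ∀ x ∈ M, fderiv ℝ g x (f₁ x) = fderiv ℝ f₁ x (g x) := by
    intro x hx
    have := hnil₁ x hx
    unfold lieBr at this
    exact sub_eq_zero.mp this
  have hcomm₂ : ∀ x ∈ M, fderiv ℝ g x (f₂ x) = fderiv ℝ f₂ x (g x) := by
    intro x hx
    have := hnil₂ x hx
    unfold lieBr at this
    exact sub_eq_zero.mp this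
  intro x hx
  refine ⟨1, one_pos, ?_⟩
  intro t₁ s₃ s₁ s₂ _ _ _ _
  -- the key invariance: Ad of g equals g on M
  have KEY : ∀ z ∈ M,
      AdC (fun y => φ₁ s₁ (φ₂ s₂ y)) (fun u => φ₂ (-s₂) (φ₁ (-s₁) u)) g z = g z := by
    intro z hz
    have hz₂ : φ₂ s₂ z ∈ M := hφ₂'.mem hz s₂
    have hz₁ : φ₁ s₁ (φ₂ s₂ z) ∈ M := hφ₁'.mem hz₂ s₁
    obtain ⟨L₂, hL₂, hL₂v⟩ := glob_inv hM hf₂2 hφ₂' hgd hcomm₂ hz s₂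
    obtain ⟨L₁, hL₁, hL₁v⟩ := glob_inv hM hf₁2 hφ₁' hgd hcomm₁ hz₂ s₁
    obtain ⟨L₁', hL₁', hL₁'v⟩ := glob_inv hM hf₁2 hφ₁' hgd hcomm₁ hz₁ (-s₁)
    obtain ⟨L₂', hL₂', hL₂'v⟩ := glob_inv hM hf₂2 hφ₂' hgd hcomm₂ hz₂ (-s₂)
    have hback : φ₁ (-s₁) (φ₁ s₁ (φ₂ s₂ z)) = φ₂ s₂ z :=
      hφ₁'.inv hM (hf₁.of_le (by norm_num)) hz₂ s₁
    have hinv₁ : L₁'.comp L₁ = ContinuousLinearMap.id ℝ _ := by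
      have hco : HasFDerivAt (φ₁ (-s₁) ∘ φ₁ s₁) (L₁'.comp L₁) (φ₂ s₂ z) :=
        hL₁'.comp _ hL₁
      have hev : id =ᶠ[𝓝 (φ₂ s₂ z)] φ₁ (-s₁) ∘ φ₁ s₁ := by
        filter_upwards [hM.mem_nhds hz₂] with y hy
        exact (hφ₁'.inv hM (hf₁.of_le (by norm_num)) hy s₁).symm
      exact (hco.congr_of_eventuallyEq hev).unique (hasFDerivAt_id _)
    have hinv₂ : L₂'.comp L₂ = ContinuousLinearMap.id ℝ _ := by
      have hco : HasFDerivAt (φ₂ (-s₂) ∘ φ₂ s₂) (L₂'.comp L₂) z := hL₂'.comp _ hL₂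
      have hev : id =ᶠ[𝓝 z] φ₂ (-s₂) ∘ φ₂ s₂ := by
        filter_upwards [hM.mem_nhds hz] with y hy
        exact (hφ₂'.inv hM (hf₂.of_le (by norm_num)) hy s₂).symm
      exact (hco.congr_of_eventuallyEq hev).unique (hasFDerivAt_id _)
    have hAinv : HasFDerivAt (fun u => φ₂ (-s₂) (φ₁ (-s₁) u)) (L₂'.comp L₁')
        (φ₁ s₁ (φ₂ s₂ z)) := by
      have h2 : HasFDerivAt (φ₂ (-s₂)) L₂' (φ₁ (-s₁) (φ₁ s₁ (φ₂ s₂ z))) := by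
        rw [hback]; exact hL₂'
      exact h2.comp _ hL₁'
    show fderiv ℝ (fun u => φ₂ (-s₂) (φ₁ (-s₁) u)) (φ₁ s₁ (φ₂ s₂ z))
        (g (φ₁ s₁ (φ₂ s₂ z))) = g z
    rw [hAinv.fderiv]
    have hv1 : g (φ₁ s₁ (φ₂ s₂ z)) = L₁ (g (φ₂ s₂ z)) := hL₁v.symm
    have hv2 : g (φ₂ s₂ z) = L₂ (g z) := hL₂v.symm
    rw [hv1, hv2, ContinuousLinearMap.comp_apply]
    have e1 : L₁' (L₁ (L₂ (g z))) = (L₁'.comp L₁) (L₂ (g z)) := rfl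
    rw [e1, hinv₁, ContinuousLinearMap.id_apply]
    have e2 : L₂' (L₂ (g z)) = (L₂'.comp L₂) (g z) := rfl
    rw [e2, hinv₂, ContinuousLinearMap.id_apply]
  -- membership of the base point
  have hy : Psi2 φ₁ φ₂ t₁ s₂ (φ₃ s₃ x) ∈ M := by
    unfold Psi2
    exact hφ₂'.mem (hφ₁'.mem (hφ₂'.mem (hφ₁'.mem (hφ₃'.mem hx s₃) t₁) s₂) (-t₁)) (-s₂)
  -- the two arguments of the outer Ad agree at the base point
  have hEq : lieBr (AdC (fun y => φ₁ s₁ (φ₂ s₂ y)) (fun z => φ₂ (-s₂) (φ₁ (-s₁) z)) g) f₃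
        (Psi2 φ₁ φ₂ t₁ s₂ (φ₃ s₃ x))
      = lieBr g f₃ (Psi2 φ₁ φ₂ t₁ s₂ (φ₃ s₃ x)) := by
    set y := Psi2 φ₁ φ₂ t₁ s₂ (φ₃ s₃ x) with hydef
    have hgg : (AdC (fun y => φ₁ s₁ (φ₂ s₂ y)) (fun z => φ₂ (-s₂) (φ₁ (-s₁) z)) g)
        =ᶠ[𝓝 y] g := by
      filter_upwards [hM.mem_nhds hy] with z hz
      exact KEY z hz
    unfold lieBr
    rw [hgg.fderiv_eq, KEY y hy]
  show fderiv ℝ (fun z => φ₃ (-s₃) (Psi2Inv φ₁ φ₂ t₁ s₂ z)) (Psi2 φ₁ φ₂ t₁ s₂ (φ₃ s₃ x))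
      (lieBr (AdC (fun y => φ₁ s₁ (φ₂ s₂ y)) (fun z => φ₂ (-s₂) (φ₁ (-s₁) z)) g) f₃
        (Psi2 φ₁ φ₂ t₁ s₂ (φ₃ s₃ x)))
    = fderiv ℝ (fun z => φ₃ (-s₃) (Psi2Inv φ₁ φ₂ t₁ s₂ z)) (Psi2 φ₁ φ₂ t₁ s₂ (φ₃ s₃ x))
      (lieBr g f₃ (Psi2 φ₁ φ₂ t₁ s₂ (φ₃ s₃ x)))
  rw [hEq]
end
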